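/- arXiv:2410.16604 — 7 statements merged into one kernel-verified Lean document; each statement's English description precedes it below -/
import Mathlib

section
/- Let G be a connected simple graph on n ≥ 2 vertices and let 0 < p < 2 be a real number. Then the p-energy of G satisfies E_p(G) ≥ 2(n−1)^{p/2}, i.e. E_p(G) ≥ E_p(S_n) where S_n is the star graph on n vertices. -/
open Finset MeasureTheory

/-- The eigenvalues of the (real) adjacency matrix of a simple graph on `Fin n`. -/
noncomputable def adjEigenvalues {n : ℕ} (G : SimpleGraph (Fin n)) [DecidableRel G.Adj] :
    Fin n → ℝ :=
  Matrix.IsHermitian.eigenvalues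
    ((Matrix.conjTranspose_eq_transpose_of_trivial (G.adjMatrix ℝ)).trans G.isSymm_adjMatrix)

/-- The `p`-energy of a graph: the sum of the `p`-th powers of the absolute values of the
adjacency eigenvalues. -/
noncomputable def pEnergy {n : ℕ} (G : SimpleGraph (Fin n)) [DecidableRel G.Adj] (p : ℝ) : ℝ :=
  ∑ i, |adjEigenvalues G i| ^ p

/-- The star graph on `Fin n`: vertex `0` is adjacent to all other vertices. -/
def starGraph (n : ℕ) : SimpleGraph (Fin n) where
  Adj u v := ((u : ℕ) = 0 ∨ (v : ℕ) = 0) ∧ u ≠ v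
  symm := ⟨fun _ _ h => ⟨h.1.symm, h.2.symm⟩⟩
  loopless := ⟨fun _ h => h.2 rfl⟩

instance (n : ℕ) : DecidableRel (starGraph n).Adj :=
  fun u v => inferInstanceAs (Decidable (((u : ℕ) = 0 ∨ (v : ℕ) = 0) ∧ u ≠ v))


section PEnergyAux

private lemma rpow_add_le_aux {a b q : ℝ} (ha : 0 ≤ a) (hb : 0 ≤ b) (hq0 : 0 ≤ q) (hq1 : q ≤ 1) :
    (a + b) ^ q ≤ a ^ q + b ^ q := by
  lift a to NNReal using ha
  lift b to NNReal using hb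
  have := NNReal.rpow_add_le_add_rpow a b hq0 hq1
  exact_mod_cast this

private lemma sum_rpow_le_aux {ι : Type*} (s : Finset ι) (f : ι → ℝ) (hf : ∀ i ∈ s, 0 ≤ f i)
    {q : ℝ} (hq0 : 0 < q) (hq1 : q ≤ 1) :
    (∑ i ∈ s, f i) ^ q ≤ ∑ i ∈ s, (f i) ^ q := by
  classical
  induction s using Finset.cons_induction with
  | empty => simp [Real.zero_rpow hq0.ne']
  | cons a s ha ih =>
    rw [Finset.sum_cons, Finset.sum_cons]
    have hfa := hf a (Finset.mem_cons_self a s)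
    have hfs : ∀ i ∈ s, 0 ≤ f i := fun i hi => hf i (Finset.mem_cons.mpr (Or.inr hi))
    calc (f a + ∑ i ∈ s, f i) ^ q
        ≤ f a ^ q + (∑ i ∈ s, f i) ^ q :=
          rpow_add_le_aux hfa (Finset.sum_nonneg hfs) hq0.le hq1
      _ ≤ f a ^ q + ∑ i ∈ s, f i ^ q := by
          have := ih hfs
          linarith

variable {n : ℕ} (G : SimpleGraph (Fin n)) [DecidableRel G.Adj]

private lemma adjHerm : (G.adjMatrix ℝ).IsHermitian :=
  (Matrix.conjTranspose_eq_transpose_of_trivial (G.adjMatrix ℝ)).trans G.isSymm_adjMatrix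

private lemma adjEigenvalues_eq : adjEigenvalues G = (adjHerm G).eigenvalues := rfl

private lemma sum_sq_eigen : ∑ i, (adjEigenvalues G i)^2 = ∑ v, (G.degree v : ℝ) := by
  have hA := adjHerm G
  set A := G.adjMatrix ℝ with hAdef
  set U : Matrix (Fin n) (Fin n) ℝ := (hA.eigenvectorUnitary : Matrix (Fin n) (Fin n) ℝ) with hU
  set D : Matrix (Fin n) (Fin n) ℝ := Matrix.diagonal (RCLike.ofReal ∘ hA.eigenvalues) with hD
  have hsU : (star U) * U = 1 := by
    have := (Unitary.mem_iff.mp hA.eigenvectorUnitary.2).1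
    exact this
  have h1 : A * A = U * (D * D) * star U := by
    conv_lhs => rw [hA.spectral_theorem, Unitary.conjStarAlgAut_apply, ← hU, ← hD]
    have key : star U * (U * (D * star U)) = D * star U := by
      rw [← mul_assoc, hsU, one_mul]
    simp only [mul_assoc, key]
  have h2 : Matrix.trace (A * A) = Matrix.trace (D * D) := by
    rw [h1, Matrix.trace_mul_comm, ← mul_assoc, hsU, one_mul]
  have h3 : Matrix.trace (D * D) = ∑ i, (adjEigenvalues G i)^2 := by
    rw [hD, Matrix.diagonal_mul_diagonal, Matrix.trace_diagonal]
    simp [adjEigenvalues_eq, sq]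
  have h4 : Matrix.trace (A * A) = ∑ v, (G.degree v : ℝ) := by
    rw [Matrix.trace]
    refine Finset.sum_congr rfl fun i _ => ?_
    exact G.adjMatrix_mul_self_apply_self (α := ℝ) i
  rw [← h3, ← h2, h4]

private lemma sq_hasEigenvalue (i : Fin n) :
    Module.End.HasEigenvalue (Matrix.toLin' (G.adjMatrix ℝ * G.adjMatrix ℝ))
      ((adjEigenvalues G i)^2) := by
  have hA := adjHerm G
  have hv := hA.mulVec_eigenvectorBasis i
  have hnz : ⇑(hA.eigenvectorBasis i) ≠ (0 : Fin n → ℝ) := by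
    intro h
    apply hA.eigenvectorBasis.orthonormal.ne_zero i
    ext j
    exact congrFun h j
  refine Module.End.hasEigenvalue_of_hasEigenvector (x := ⇑(hA.eigenvectorBasis i)) ⟨?_, hnz⟩
  rw [Module.End.mem_eigenspace_iff, Matrix.toLin'_apply, ← Matrix.mulVec_mulVec, hv,
    Matrix.mulVec_smul, hv, smul_smul, ← sq]
  rfl

private lemma row_sum_deg (u : Fin n) : ∑ j, G.adjMatrix ℝ u j = (G.degree u : ℝ) := by
  simp [SimpleGraph.adjMatrix_apply, Finset.sum_boole, SimpleGraph.degree,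
    SimpleGraph.neighborFinset_eq_filter]

private lemma eig_sq_le (hdeg : ∀ v : Fin n, 1 ≤ G.degree v) (i : Fin n) :
    (adjEigenvalues G i)^2 ≤ (∑ v, (G.degree v : ℝ)) - ((n:ℝ) - 1) := by
  obtain ⟨k, hk⟩ := eigenvalue_mem_ball (sq_hasEigenvalue G i)
  set B := G.adjMatrix ℝ * G.adjMatrix ℝ with hB
  have hAnn : ∀ a b, 0 ≤ G.adjMatrix ℝ a b := by
    intro a b
    rw [SimpleGraph.adjMatrix_apply]
    split <;> norm_num
  have hBnn : ∀ a b, 0 ≤ B a b := by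
    intro a b
    rw [hB, Matrix.mul_apply]
    exact Finset.sum_nonneg fun l _ => mul_nonneg (hAnn a l) (hAnn l b)
  rw [Metric.mem_closedBall, Real.dist_eq] at hk
  have h1 : (adjEigenvalues G i)^2 ≤ ∑ j, B k j := by
    have h2 : (adjEigenvalues G i)^2 ≤ B k k + ∑ j ∈ Finset.univ.erase k, ‖B k j‖ := by
      have := abs_le.mp hk
      linarith [this.2]
    calc (adjEigenvalues G i)^2 ≤ B k k + ∑ j ∈ Finset.univ.erase k, ‖B k j‖ := h2
      _ = B k k + ∑ j ∈ Finset.univ.erase k, B k j := by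
          congr 1
          exact Finset.sum_congr rfl fun j _ => by
            rw [Real.norm_eq_abs, abs_of_nonneg (hBnn k j)]
      _ = ∑ j, B k j := Finset.add_sum_erase _ _ (Finset.mem_univ k)
  have hrow : ∑ j, B k j = ∑ u ∈ G.neighborFinset k, (G.degree u : ℝ) := by
    rw [hB]
    calc ∑ j, (G.adjMatrix ℝ * G.adjMatrix ℝ) k j
        = ∑ j, ∑ u ∈ G.neighborFinset k, G.adjMatrix ℝ u j := by
          refine Finset.sum_congr rfl fun j _ => ?_
          rw [SimpleGraph.adjMatrix_mul_apply]
      _ = ∑ u ∈ G.neighborFinset k, ∑ j, G.adjMatrix ℝ u j := Finset.sum_comm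
      _ = ∑ u ∈ G.neighborFinset k, (G.degree u : ℝ) :=
          Finset.sum_congr rfl fun u _ => row_sum_deg G u
  have hbound : ∑ u ∈ G.neighborFinset k, (G.degree u : ℝ)
      ≤ (∑ v, (G.degree v : ℝ)) - ((n:ℝ) - 1) := by
    have hsub : G.neighborFinset k ⊆ Finset.univ := Finset.subset_univ _
    have hsplit := Finset.sum_sdiff (f := fun v => (G.degree v : ℝ)) hsub
    have hkmem : k ∈ Finset.univ \ G.neighborFinset k := by
      rw [Finset.mem_sdiff]
      exact ⟨Finset.mem_univ k, SimpleGraph.notMem_neighborFinset_self G k⟩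
    have hcard : ((Finset.univ \ G.neighborFinset k).erase k).card
        = n - G.degree k - 1 := by
      rw [Finset.card_erase_of_mem hkmem, Finset.card_sdiff_of_subset hsub]
      simp [SimpleGraph.card_neighborFinset_eq_degree]
    have hdegk : G.degree k + 1 ≤ n := by
      have := G.degree_lt_card_verts k
      simpa [Fintype.card_fin] using this
    have hrest : (n : ℝ) - (G.degree k : ℝ) - 1
        ≤ ∑ u ∈ (Finset.univ \ G.neighborFinset k).erase k, (G.degree u : ℝ) := by
      have h01 : ∀ u ∈ (Finset.univ \ G.neighborFinset k).erase k, (1:ℝ) ≤ (G.degree u : ℝ) :=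
        fun u _ => by exact_mod_cast hdeg u
      have := Finset.card_nsmul_le_sum _ _ _ h01
      rw [hcard] at this
      have hc : ((n - G.degree k - 1 : ℕ) : ℝ) = (n:ℝ) - (G.degree k : ℝ) - 1 := by
        have h2 : G.degree k + 1 ≤ n := hdegk
        push_cast [Nat.sub_sub, Nat.cast_sub h2]
        ring
      rw [nsmul_eq_mul, mul_one] at this
      linarith [hc ▸ this]
    have hout : ((n:ℝ) - 1) ≤ ∑ u ∈ Finset.univ \ G.neighborFinset k, (G.degree u : ℝ) := by
      rw [← Finset.add_sum_erase _ _ hkmem]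
      have hd0 : (0:ℝ) ≤ (G.degree k : ℝ) := Nat.cast_nonneg _
      linarith
    linarith
  linarith [hrow ▸ h1]

private lemma degree_pos_of_connected (hG : G.Connected) (hn : 2 ≤ n) (v : Fin n) :
    1 ≤ G.degree v := by
  obtain ⟨w, hw⟩ := Fintype.exists_ne_of_one_lt_card (by simp [Fintype.card_fin]; omega) v
  obtain ⟨p⟩ := hG.preconnected v w
  cases p with
  | nil => exact absurd rfl hw.symm
  | cons h q =>
    have : 0 < G.degree v := by
      rw [SimpleGraph.degree_pos_iff_exists_adj]
      exact ⟨_, h⟩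
    omega

private lemma card_verts_le_edges (hG : G.Connected) (hn : 2 ≤ n) :
    n ≤ G.edgeFinset.card + 1 := by
  classical
  set v0 : Fin n := ⟨0, by omega⟩ with hv0
  have H : ∀ w : Fin n, ∃ u, w ≠ v0 → G.Adj w u ∧ G.dist u v0 < G.dist w v0 := by
    intro w
    by_cases hw : w = v0
    · exact ⟨w, fun h => absurd hw h⟩
    · obtain ⟨p, hp⟩ := hG.exists_walk_length_eq_dist w v0
      cases p with
      | nil => exact absurd rfl hw
      | @cons _ x _ h q =>
        refine ⟨x, fun _ => ⟨h, ?_⟩⟩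
        have h1 : G.dist x v0 ≤ q.length := SimpleGraph.dist_le q
        have h2 : G.dist w v0 = q.length + 1 := by
          rw [← hp]; simp [SimpleGraph.Walk.length_cons]
        omega
  choose f hf using H
  have hinj : Set.InjOn (fun w => s(w, f w)) ↑(Finset.univ.erase v0) := by
    intro w1 hw1 w2 hw2 heq
    simp only [Finset.coe_erase, Set.mem_diff, Finset.coe_univ, Set.mem_univ,
      Set.mem_singleton_iff, true_and] at hw1 hw2
    simp only [Sym2.eq_iff] at heq
    rcases heq with ⟨h1, h2⟩ | ⟨h1, h2⟩
    · exact h1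
    · exfalso
      have d1 := (hf w1 hw1).2
      have d2 := (hf w2 hw2).2
      rw [h2] at d1
      rw [← h1] at d2
      omega
  have hmaps : ∀ w ∈ Finset.univ.erase v0, s(w, f w) ∈ G.edgeFinset := by
    intro w hw
    rw [SimpleGraph.mem_edgeFinset, SimpleGraph.mem_edgeSet]
    exact (hf w (Finset.ne_of_mem_erase hw)).1
  have := Finset.card_le_card_of_injOn _ hmaps hinj
  rw [Finset.card_erase_of_mem (Finset.mem_univ v0), Finset.card_univ, Fintype.card_fin] at this
  omega

end PEnergyAux

/-- For a connected graph `G` on `n ≥ 2` vertices and `0 < p < 2`, the `p`-energy of `G`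
is at least `2(n-1)^(p/2) = E_p(Sₙ)`. -/
theorem pEnergy_ge_star {n : ℕ} (hn : 2 ≤ n) (G : SimpleGraph (Fin n)) [DecidableRel G.Adj]
    (hG : G.Connected) (p : ℝ) (hp0 : 0 < p) (hp2 : p < 2) :
    2 * ((n : ℝ) - 1) ^ (p / 2) ≤ pEnergy G p := by
  classical
  set lam := adjEigenvalues G with hlam
  set S := ∑ v, (G.degree v : ℝ) with hSdef
  set t : ℝ := (n : ℝ) - 1 with htdef
  have hn' : (2:ℝ) ≤ (n:ℝ) := by exact_mod_cast hn
  have ht1 : (1:ℝ) ≤ t := by rw [htdef]; linarith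
  have ht0 : (0:ℝ) < t := by linarith
  have hdeg : ∀ v : Fin n, 1 ≤ G.degree v := degree_pos_of_connected G hG hn
  have hsum : ∑ i, lam i ^ 2 = S := sum_sq_eigen G
  have hH : ∀ i, lam i ^ 2 ≤ S - t := fun i => eig_sq_le G hdeg i
  have hS2t : 2 * t ≤ S := by
    have h1 : n ≤ G.edgeFinset.card + 1 := card_verts_le_edges G hG hn
    have h2 : ∑ v, G.degree v = 2 * G.edgeFinset.card := G.sum_degrees_eq_twice_card_edges
    have h3 : (n : ℝ) ≤ (G.edgeFinset.card : ℝ) + 1 := by exact_mod_cast h1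
    have h4 : S = 2 * (G.edgeFinset.card : ℝ) := by
      rw [hSdef]
      exact_mod_cast congrArg (fun m : ℕ => (m : ℝ)) h2
    rw [htdef]; linarith
  obtain ⟨i0, -, hmax⟩ := Finset.exists_max_image (Finset.univ : Finset (Fin n))
    (fun i => |lam i|) ⟨⟨0, by omega⟩, Finset.mem_univ _⟩
  set R := |lam i0| with hRdef
  have hmax' : ∀ i, |lam i| ≤ R := fun i => hmax i (Finset.mem_univ i)
  have hR0 : 0 < R := by
    by_contra h
    push_neg at h
    have hz : ∀ i, lam i = 0 := fun i => abs_nonpos_iff.mp ((hmax' i).trans h)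
    have hS0 : S = 0 := by
      rw [← hsum]
      exact Finset.sum_eq_zero fun i _ => by rw [hz i]; ring
    linarith
  set c : ℝ := t ^ ((1:ℝ)/2) with hc
  have hc0 : 0 < c := Real.rpow_pos_of_pos ht0 _
  have hcp : c ^ p = t ^ (p/2) := by
    rw [hc, ← Real.rpow_mul ht0.le]
    congr 1
    ring
  have hEnergy : pEnergy G p = ∑ i, |lam i| ^ p := rfl
  rcases le_or_gt R c with hcase | hcase
  · -- Case 1 : small spectral radius
    have hpt : ∀ i, lam i ^ 2 * R ^ (p - 2) ≤ |lam i| ^ p := by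
      intro i
      by_cases hz : lam i = 0
      · simp [hz, Real.zero_rpow hp0.ne']
      · have habs : 0 < |lam i| := abs_pos.mpr hz
        have e1 : |lam i| ^ p = lam i ^ 2 * |lam i| ^ (p - 2) := by
          have e0 : |lam i| ^ p = |lam i| ^ ((2:ℝ) + (p - 2)) := by norm_num
          rw [e0, Real.rpow_add habs]
          congr 1
          rw [show ((2:ℝ)) = ((2:ℕ):ℝ) by norm_num, Real.rpow_natCast, sq_abs]
        rw [e1]
        have h2 : R ^ (p-2) ≤ |lam i| ^ (p-2) :=
          Real.rpow_le_rpow_of_nonpos habs (hmax' i) (by linarith)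
        have h3 : (0:ℝ) ≤ lam i ^ 2 := sq_nonneg _
        exact mul_le_mul_of_nonneg_left h2 h3
    have hsum2 : ∑ i, lam i ^ 2 * R ^ (p-2) ≤ pEnergy G p := by
      rw [hEnergy]
      exact Finset.sum_le_sum fun i _ => hpt i
    have hfac : ∑ i, lam i ^ 2 * R ^ (p-2) = S * R ^ (p-2) := by
      rw [← Finset.sum_mul, hsum]
    have hcR : c ^ (p-2) ≤ R ^ (p-2) :=
      Real.rpow_le_rpow_of_nonpos hR0 hcase (by linarith)
    have hct : t * c ^ (p - 2) = t ^ (p/2) := by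
      rw [hc, ← Real.rpow_mul ht0.le]
      nth_rewrite 1 [show t = t ^ (1:ℝ) from (Real.rpow_one t).symm]
      rw [← Real.rpow_add ht0]
      congr 1
      ring
    have hcpos : (0:ℝ) < c ^ (p-2) := Real.rpow_pos_of_pos hc0 _
    have hRpos : (0:ℝ) < R ^ (p-2) := Real.rpow_pos_of_pos hR0 _
    calc 2 * t ^ (p/2) = (2 * t) * c ^ (p-2) := by rw [mul_assoc, hct]
      _ ≤ S * c ^ (p-2) := mul_le_mul_of_nonneg_right hS2t hcpos.le
      _ ≤ S * R ^ (p-2) := mul_le_mul_of_nonneg_left hcR (by linarith)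
      _ = ∑ i, lam i ^ 2 * R ^ (p-2) := hfac.symm
      _ ≤ pEnergy G p := hsum2
  · -- Case 2 : large spectral radius
    have hsplit : pEnergy G p
        = |lam i0| ^ p + ∑ i ∈ Finset.univ.erase i0, |lam i| ^ p := by
      rw [hEnergy, ← Finset.add_sum_erase Finset.univ (fun i => |lam i| ^ p) (Finset.mem_univ i0)]
    have h1 : t ^ (p/2) ≤ |lam i0| ^ p := by
      rw [← hcp]
      exact Real.rpow_le_rpow hc0.le hcase.le hp0.le
    have habs_eq : ∀ i : Fin n, |lam i| ^ p = (lam i ^ 2) ^ (p/2) := by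
      intro i
      rw [← sq_abs, ← Real.rpow_natCast |lam i| 2, ← Real.rpow_mul (abs_nonneg _)]
      congr 1
      push_cast
      ring
    have h2 : (∑ i ∈ Finset.univ.erase i0, lam i ^ 2) ^ (p/2)
        ≤ ∑ i ∈ Finset.univ.erase i0, |lam i| ^ p := by
      have := sum_rpow_le_aux (Finset.univ.erase i0) (fun i => lam i ^ 2)
        (fun i _ => sq_nonneg _) (q := p/2) (by linarith) (by linarith)
      calc (∑ i ∈ Finset.univ.erase i0, lam i ^ 2) ^ (p/2)
          ≤ ∑ i ∈ Finset.univ.erase i0, (lam i ^ 2) ^ (p/2) := this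
        _ = ∑ i ∈ Finset.univ.erase i0, |lam i| ^ p :=
            Finset.sum_congr rfl fun i _ => (habs_eq i).symm
    have h3 : t ≤ ∑ i ∈ Finset.univ.erase i0, lam i ^ 2 := by
      have he := Finset.add_sum_erase Finset.univ (fun i => lam i ^ 2) (Finset.mem_univ i0)
      have hHi := hH i0
      have : lam i0 ^ 2 + ∑ i ∈ Finset.univ.erase i0, lam i ^ 2 = S := by
        rw [he]; exact hsum
      linarith
    have h4 : t ^ (p/2) ≤ (∑ i ∈ Finset.univ.erase i0, lam i ^ 2) ^ (p/2) :=
      Real.rpow_le_rpow ht0.le h3 (by linarith)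
    have h5 : t ^ (p/2) ≤ ∑ i ∈ Finset.univ.erase i0, |lam i| ^ p := le_trans h4 h2
    rw [hsplit]
    linarith
end

section
/- Let G be a connected simple graph on n ≥ 2 vertices and let 0 < p < 2 be a real number. Then E_p(G) = 2(n−1)^{p/2} (that is, E_p(G) = E_p(S_n)) if and only if G is isomorphic to the star graph S_n. -/
open Finset MeasureTheory

section AUXALL
namespace PEnergyAux
open Matrix SimpleGraph


section PEA1
variable {n : ℕ}

lemma conj_mul' {V : Matrix (Fin n) (Fin n) ℝ} (hV : star V * V = 1) (f g : Fin n → ℝ) :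
    (V * diagonal f * star V) * (V * diagonal g * star V)
      = V * diagonal (fun i => f i * g i) * star V := by
  have h : diagonal f * (star V * V) * diagonal g = diagonal fun i => f i * g i := by
    rw [hV, mul_one, diagonal_mul_diagonal]
  calc (V * diagonal f * star V) * (V * diagonal g * star V)
      = V * (diagonal f * (star V * V) * diagonal g) * star V := by
        simp only [Matrix.mul_assoc]
    _ = V * diagonal (fun i => f i * g i) * star V := by rw [h]

lemma trace_conj {V : Matrix (Fin n) (Fin n) ℝ} (hV : star V * V = 1) (f : Fin n → ℝ) :
    (V * diagonal f * star V).trace = ∑ i, f i := by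
  rw [Matrix.trace_mul_cycle, hV, Matrix.one_mul, Matrix.trace_diagonal]

lemma conj_inj {V : Matrix (Fin n) (Fin n) ℝ} (hV : star V * V = 1)
    {X Y : Matrix (Fin n) (Fin n) ℝ}
    (h : V * X * star V = V * Y * star V) : X = Y := by
  have h2 := congrArg (fun M => star V * M * V) h
  simp only [Matrix.mul_assoc] at h2
  rw [hV] at h2
  simpa [← Matrix.mul_assoc, hV] using h2

section herm
variable {A : Matrix (Fin n) (Fin n) ℝ} (hA : A.IsHermitian)

lemma conj_eq :
    A = (hA.eigenvectorUnitary : Matrix (Fin n) (Fin n) ℝ) * diagonal hA.eigenvalues *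
      star (hA.eigenvectorUnitary : Matrix (Fin n) (Fin n) ℝ) := by
  simpa [RCLike.ofReal_real_eq_id, Function.comp] using hA.spectral_theorem

lemma herm_star_mul_self :
    star (hA.eigenvectorUnitary : Matrix (Fin n) (Fin n) ℝ) *
      (hA.eigenvectorUnitary : Matrix (Fin n) (Fin n) ℝ) = 1 :=
  mem_unitaryGroup_iff'.mp (hA.eigenvectorUnitary).2

lemma sq_conj :
    A * A = (hA.eigenvectorUnitary : Matrix (Fin n) (Fin n) ℝ) *
      diagonal (fun i => hA.eigenvalues i * hA.eigenvalues i) *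
      star (hA.eigenvectorUnitary : Matrix (Fin n) (Fin n) ℝ) := by
  conv_lhs => rw [conj_eq hA]
  rw [conj_mul' (herm_star_mul_self hA)]

lemma trace_sq_eq : (A * A).trace = ∑ i, hA.eigenvalues i * hA.eigenvalues i := by
  rw [sq_conj hA, trace_conj (herm_star_mul_self hA)]

lemma cube_conj :
    A * A * A = (hA.eigenvectorUnitary : Matrix (Fin n) (Fin n) ℝ) *
      diagonal (fun i => hA.eigenvalues i * hA.eigenvalues i * hA.eigenvalues i) *
      star (hA.eigenvectorUnitary : Matrix (Fin n) (Fin n) ℝ) := by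
  calc A * A * A
      = (((hA.eigenvectorUnitary : Matrix (Fin n) (Fin n) ℝ) *
          diagonal (fun i => hA.eigenvalues i * hA.eigenvalues i) *
          star (hA.eigenvectorUnitary : Matrix (Fin n) (Fin n) ℝ))) *
        ((hA.eigenvectorUnitary : Matrix (Fin n) (Fin n) ℝ) * diagonal hA.eigenvalues *
          star (hA.eigenvectorUnitary : Matrix (Fin n) (Fin n) ℝ)) := by
        rw [← sq_conj hA, ← conj_eq hA]
    _ = _ := by rw [conj_mul' (herm_star_mul_self hA)]

lemma cube_eq_smul_iff (c : ℝ) :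
    A * A * A = c • A ↔
      ∀ i, hA.eigenvalues i * hA.eigenvalues i * hA.eigenvalues i = c * hA.eigenvalues i := by
  have hsmul : c • A = (hA.eigenvectorUnitary : Matrix (Fin n) (Fin n) ℝ) *
      diagonal (fun i => c * hA.eigenvalues i) *
      star (hA.eigenvectorUnitary : Matrix (Fin n) (Fin n) ℝ) := by
    have hd : (diagonal fun i => c * hA.eigenvalues i) = c • diagonal hA.eigenvalues := by
      ext i j
      by_cases h : i = j <;> simp [h, diagonal_apply_ne, Matrix.smul_apply]
    conv_lhs => rw [conj_eq hA]
    rw [hd]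
    simp [Matrix.mul_smul, Matrix.smul_mul]
  constructor
  · intro h
    rw [cube_conj hA, hsmul] at h
    have := conj_inj (herm_star_mul_self hA) h
    intro i
    have := congrFun (congrFun this i) i
    simpa [diagonal_apply_eq] using this
  · intro h
    rw [cube_conj hA, hsmul]
    congr 1
    congr 1
    exact congrArg diagonal (funext h)
end herm
end PEA1

section PEA2
variable {ι : Type*}

lemma rpow_help {y : ℝ} (hy : 0 < y) (p : ℝ) : y ^ 2 * y ^ (p - 2) = y ^ p := by
  rw [← Real.rpow_natCast y 2, ← Real.rpow_add hy]
  norm_num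

lemma pointwise_rpow {p M x : ℝ} (hp0 : 0 < p) (hp2 : p < 2) (hM : 0 < M) (hx : |x| ≤ M) :
    x ^ 2 * M ^ (p - 2) ≤ |x| ^ p := by
  rcases eq_or_ne x 0 with rfl | hx0
  · simp [Real.zero_rpow hp0.ne']
  · have habs : 0 < |x| := abs_pos.mpr hx0
    have h1 : M ^ (p - 2) ≤ |x| ^ (p - 2) :=
      Real.rpow_le_rpow_of_nonpos habs hx (by linarith)
    calc x ^ 2 * M ^ (p - 2) ≤ x ^ 2 * |x| ^ (p - 2) := by
          exact mul_le_mul_of_nonneg_left h1 (sq_nonneg x)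
      _ = |x| ^ 2 * |x| ^ (p - 2) := by rw [sq_abs]
      _ = |x| ^ p := rpow_help habs p

lemma pointwise_rpow_strict {p M x : ℝ} (hp0 : 0 < p) (hp2 : p < 2) (hM : 0 < M)
    (hx : |x| < M) (hx0 : x ≠ 0) :
    x ^ 2 * M ^ (p - 2) < |x| ^ p := by
  have habs : 0 < |x| := abs_pos.mpr hx0
  have h1 : M ^ (p - 2) < |x| ^ (p - 2) :=
    Real.rpow_lt_rpow_of_neg habs hx (by linarith)
  calc x ^ 2 * M ^ (p - 2) < x ^ 2 * |x| ^ (p - 2) := by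
        exact mul_lt_mul_of_pos_left h1 (by positivity)
    _ = |x| ^ 2 * |x| ^ (p - 2) := by rw [sq_abs]
    _ = |x| ^ p := rpow_help habs p

lemma sum_rpow_key {s : Finset ι} (x : ι → ℝ) {p : ℝ} (hp0 : 0 < p) (hp2 : p < 2)
    (hT : 0 < ∑ i ∈ s, (x i) ^ 2) :
    (∑ i ∈ s, (x i) ^ 2) ^ (p / 2) ≤ ∑ i ∈ s, |x i| ^ p ∧
    (∑ i ∈ s, |x i| ^ p = (∑ i ∈ s, (x i) ^ 2) ^ (p / 2) →
      ∀ i ∈ s, x i = 0 ∨ (x i) ^ 2 = ∑ j ∈ s, (x j) ^ 2) := by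
  set T := ∑ i ∈ s, (x i) ^ 2 with hTdef
  have hs : s.Nonempty := by
    rcases s.eq_empty_or_nonempty with rfl | h
    · simp [hTdef] at hT
    · exact h
  obtain ⟨i₀, hi₀s, hi₀⟩ := s.exists_max_image (fun i => |x i|) hs
  set M := |x i₀| with hMdef
  have hM : 0 < M := by
    by_contra h
    push_neg at h
    have : ∀ i ∈ s, (x i) ^ 2 = 0 := by
      intro i hi
      have := (hi₀ i hi).trans h
      have : x i = 0 := abs_eq_zero.mp ((abs_nonneg _).antisymm' this)
      simp [this]
    rw [hTdef] at hT
    rw [Finset.sum_eq_zero this] at hT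
    exact lt_irrefl 0 hT
  have hM2T : M ^ 2 ≤ T := by
    have : M ^ 2 = (x i₀) ^ 2 := by rw [hMdef, sq_abs]
    rw [this, hTdef]
    exact Finset.single_le_sum (fun i _ => sq_nonneg (x i)) hi₀s
  have hpt : ∀ i ∈ s, (x i) ^ 2 * M ^ (p - 2) ≤ |x i| ^ p :=
    fun i hi => pointwise_rpow hp0 hp2 hM (hi₀ i hi)
  have hsum1 : T * M ^ (p - 2) ≤ ∑ i ∈ s, |x i| ^ p := by
    rw [hTdef, Finset.sum_mul]
    exact Finset.sum_le_sum hpt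
  have hMexp : M ^ (p - 2) = (M ^ 2) ^ ((p - 2) / 2) := by
    rw [← Real.rpow_natCast M 2, ← Real.rpow_mul hM.le]
    norm_num
    ring_nf
  have hsum2 : T ^ ((p - 2) / 2) ≤ M ^ (p - 2) := by
    rw [hMexp]
    exact Real.rpow_le_rpow_of_nonpos (by positivity) hM2T (by linarith)
  have hTsplit : T ^ (p / 2) = T * T ^ ((p - 2) / 2) := by
    nth_rewrite 2 [← Real.rpow_one T]
    rw [← Real.rpow_add hT]
    ring_nf
  have hmain : T ^ (p / 2) ≤ ∑ i ∈ s, |x i| ^ p := by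
    calc T ^ (p / 2) = T * T ^ ((p - 2) / 2) := hTsplit
      _ ≤ T * M ^ (p - 2) := mul_le_mul_of_nonneg_left hsum2 hT.le
      _ ≤ _ := hsum1
  refine ⟨hmain, fun heq => ?_⟩
  -- equality case
  have hTM : T * M ^ (p - 2) = T ^ (p / 2) := le_antisymm (heq ▸ hsum1) (by
    rw [hTsplit]; exact mul_le_mul_of_nonneg_left hsum2 hT.le)
  have hMT : M ^ 2 = T := by
    by_contra hne
    have hlt : M ^ 2 < T := lt_of_le_of_ne hM2T hne
    have : T ^ ((p - 2) / 2) < M ^ (p - 2) := by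
      rw [hMexp]
      exact Real.rpow_lt_rpow_of_neg (by positivity) hlt (by linarith)
    have : T * T ^ ((p - 2) / 2) < T * M ^ (p - 2) := mul_lt_mul_of_pos_left this hT
    rw [← hTsplit, hTM] at this
    exact lt_irrefl _ this
  have hptEq : ∀ i ∈ s, |x i| ^ p = (x i) ^ 2 * M ^ (p - 2) := by
    have h2 : ∑ i ∈ s, |x i| ^ p = ∑ i ∈ s, (x i) ^ 2 * M ^ (p - 2) := by
      rw [← Finset.sum_mul, ← hTdef, hTM, heq]
    intro i hi
    by_contra hne
    have hlt : (x i) ^ 2 * M ^ (p - 2) < |x i| ^ p := lt_of_le_of_ne (hpt i hi) (Ne.symm hne)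
    have : ∑ i ∈ s, (x i) ^ 2 * M ^ (p - 2) < ∑ i ∈ s, |x i| ^ p :=
      Finset.sum_lt_sum hpt ⟨i, hi, hlt⟩
    rw [h2] at this
    exact lt_irrefl _ this
  intro i hi
  rcases eq_or_ne (x i) 0 with h0 | h0
  · exact Or.inl h0
  · right
    have habs : |x i| = M := by
      by_contra hne
      have hlt : |x i| < M := lt_of_le_of_ne (hi₀ i hi) hne
      have := pointwise_rpow_strict hp0 hp2 hM hlt h0
      rw [← hptEq i hi] at this
      exact lt_irrefl _ this
    rw [← hTdef] at *
    rw [← hMT, ← habs, sq_abs]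

lemma c_mul_rpow {c : ℝ} (hc : 0 < c) (q : ℝ) : c * c ^ (q - 1) = c ^ q := by
  nth_rewrite 1 [← Real.rpow_one c]
  rw [← Real.rpow_add hc]
  ring_nf

lemma sqrt_rpow_eq {c : ℝ} (hc : 0 ≤ c) (p : ℝ) : Real.sqrt c ^ p = c ^ (p / 2) := by
  rw [Real.sqrt_eq_rpow, ← Real.rpow_mul hc]
  congr 1
  ring

lemma rpow_base_inj {a b p : ℝ} (ha : 0 ≤ a) (hb : 0 ≤ b) (hp : 0 < p) (h : a ^ p = b ^ p) :
    a = b := by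
  rcases lt_trichotomy a b with hab | hab | hab
  · exact absurd h (ne_of_lt (Real.rpow_lt_rpow ha hab hp))
  · exact hab
  · exact absurd h.symm (ne_of_lt (Real.rpow_lt_rpow hb hab hp))

lemma energy_of_quad {ι : Type*} [Fintype ι] (μ : ι → ℝ) {c p : ℝ} (hc : 0 < c) (hp0 : 0 < p)
    (hsq : ∀ i, μ i ^ 2 = 0 ∨ μ i ^ 2 = c) (hsum : ∑ i, μ i ^ 2 = 2 * c) :
    ∑ i, |μ i| ^ p = 2 * c ^ (p / 2) := by
  have hpt : ∀ i, |μ i| ^ p = μ i ^ 2 * c ^ (p / 2 - 1) := by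
    intro i
    rcases hsq i with h | h
    · have : μ i = 0 := by
        have := sq_eq_zero_iff.mp h
        exact this
      rw [this]
      simp [Real.zero_rpow hp0.ne']
    · have habs : |μ i| = Real.sqrt c := by
        rw [← Real.sqrt_sq_eq_abs, h]
      rw [habs, sqrt_rpow_eq hc.le, h, c_mul_rpow hc]
  rw [Finset.sum_congr rfl fun i _ => hpt i, ← Finset.sum_mul, hsum, mul_assoc,
    c_mul_rpow hc]
end PEA2

section PEA3
variable {n : ℕ} (G : SimpleGraph (Fin n)) [DecidableRel G.Adj]

lemma exists_adj_of_conn (hG : G.Connected) (hn : 2 ≤ n) (v : Fin n) :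
    ∃ w, G.Adj v w := by
  have : 1 < Fintype.card (Fin n) := by simpa using (show 1 < n by omega)
  obtain ⟨w, hw⟩ := Fintype.exists_ne_of_one_lt_card this v
  obtain ⟨p⟩ := hG.preconnected v w
  cases p with
  | nil => exact absurd rfl (Ne.symm hw)
  | cons h q => exact ⟨_, h⟩

lemma degree_pos_of_conn (hG : G.Connected) (hn : 2 ≤ n) (v : Fin n) :
    0 < G.degree v := by
  obtain ⟨w, hw⟩ := exists_adj_of_conn G hG hn v
  exact G.degree_pos_iff_exists_adj v |>.mpr ⟨w, hw⟩

lemma card_edge_ge_of_conn (hG : G.Connected) (hn : 2 ≤ n) :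
    n - 1 ≤ #G.edgeFinset := by
  set r : Fin n := ⟨0, by omega⟩ with hrdef
  have hstep : ∀ v : Fin n, v ≠ r → ∃ w, G.Adj v w ∧ G.dist r w < G.dist r v := by
    intro v hv
    have hd : 0 < G.dist r v := hG.pos_dist_of_ne (Ne.symm hv)
    obtain ⟨p, hp⟩ := hG.exists_walk_length_eq_dist r v
    cases hq : p.reverse with
    | nil =>
        exfalso
        have := congrArg SimpleGraph.Walk.length hq
        simp [SimpleGraph.Walk.length_reverse, hp] at this
        omega
    | cons h q =>
        rename_i x
        refine ⟨x, h, ?_⟩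
        have h1 : G.dist r x ≤ q.reverse.length := SimpleGraph.dist_le q.reverse
        have h2 : q.length + 1 = G.dist r v := by
          have := congrArg SimpleGraph.Walk.length hq
          simpa [SimpleGraph.Walk.length_reverse, hp] using this.symm
        rw [SimpleGraph.Walk.length_reverse] at h1
        omega
  classical
  choose f hf1 hf2 using hstep
  have hinj : Set.InjOn (fun v : Fin n => if h : v = r then s(r,r) else s(v, f v h))
      (univ.erase r) := by
    intro a ha b hb hab
    simp only [Finset.mem_coe, Finset.mem_erase] at ha hb
    dsimp only at hab
    rw [dif_neg ha.1, dif_neg hb.1] at hab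
    rw [Sym2.eq_iff] at hab
    rcases hab with ⟨h1, h2⟩ | ⟨h1, h2⟩
    · exact h1
    · exfalso
      have ha2 := hf2 a ha.1
      have hb2 := hf2 b hb.1
      rw [← h1] at hb2
      rw [h2] at ha2
      omega
  have hmaps : ∀ a ∈ (univ.erase r), (fun v : Fin n => if h : v = r then s(r,r) else s(v, f v h)) a ∈ G.edgeFinset := by
    intro a ha
    simp only [Finset.mem_erase] at ha
    dsimp only
    rw [dif_neg ha.1]
    rw [SimpleGraph.mem_edgeFinset, SimpleGraph.mem_edgeSet]
    exact hf1 a ha.1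
  have := Finset.card_le_card_of_injOn _ hmaps hinj
  simpa using this

lemma hong_deg_sum (hG : G.Connected) (hn : 2 ≤ n) (u : Fin n) :
    ∑ x ∈ G.neighborFinset u, G.degree x + (n - 1) ≤ ∑ x, G.degree x := by
  classical
  have hsub : G.neighborFinset u ⊆ univ := Finset.subset_univ _
  set t := (univ : Finset (Fin n)) \ G.neighborFinset u with ht
  have hsplit : ∑ x ∈ t, G.degree x + ∑ x ∈ G.neighborFinset u, G.degree x
      = ∑ x, G.degree x := Finset.sum_sdiff hsub
  have hut : u ∈ t := by
    rw [ht, Finset.mem_sdiff]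
    exact ⟨Finset.mem_univ u, fun h => G.irrefl (SimpleGraph.mem_neighborFinset G u u |>.mp h)⟩
  have hcardt : #t = n - G.degree u := by
    rw [ht, Finset.card_sdiff_of_subset hsub, Finset.card_univ, Fintype.card_fin]
    rfl
  have hdu : G.degree u < n := by
    simpa using G.degree_lt_card_verts u
  have h1 : ∀ x ∈ t.erase u, 1 ≤ G.degree x := fun x _ => degree_pos_of_conn G hG hn x
  have h2 : ∑ x ∈ t, G.degree x = G.degree u + ∑ x ∈ t.erase u, G.degree x :=
    (Finset.add_sum_erase t _ hut).symm
  have h3 : #(t.erase u) ≤ ∑ x ∈ t.erase u, G.degree x := by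
    calc #(t.erase u) = ∑ _x ∈ t.erase u, 1 := by simp
      _ ≤ _ := Finset.sum_le_sum h1
  have h4 : #(t.erase u) = n - G.degree u - 1 := by
    rw [Finset.card_erase_of_mem hut, hcardt]
  have hdp : 0 < G.degree u := degree_pos_of_conn G hG hn u
  have : n - 1 ≤ ∑ x ∈ t, G.degree x := by omega
  omega
end PEA3

section PEA4
variable {n : ℕ} (G : SimpleGraph (Fin n)) [DecidableRel G.Adj]

lemma row_sum_adj (x : Fin n) : ∑ w, G.adjMatrix ℝ x w = (G.degree x : ℝ) := by
  have h := SimpleGraph.adjMatrix_mulVec_const_apply (G := G) (α := ℝ) (a := 1) (v := x)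
  simpa [Matrix.mulVec, dotProduct] using h

lemma row_sum_adj_sq (u : Fin n) :
    ∑ w, (G.adjMatrix ℝ * G.adjMatrix ℝ) u w = ∑ x ∈ G.neighborFinset u, (G.degree x : ℝ) := by
  simp only [SimpleGraph.adjMatrix_mul_apply]
  rw [Finset.sum_comm]
  exact Finset.sum_congr rfl fun x _ => row_sum_adj G x

lemma adj_sq_nonneg (u w : Fin n) : 0 ≤ (G.adjMatrix ℝ * G.adjMatrix ℝ) u w := by
  rw [SimpleGraph.adjMatrix_mul_apply]
  apply Finset.sum_nonneg
  intro x _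
  simp only [SimpleGraph.adjMatrix_apply]
  split <;> norm_num

lemma eig_sq_le' (hA : (G.adjMatrix ℝ).IsHermitian) (i : Fin n) :
    ∃ u : Fin n, hA.eigenvalues i ^ 2 ≤ ∑ x ∈ G.neighborFinset u, (G.degree x : ℝ) := by
  classical
  set A := G.adjMatrix ℝ with hAdef
  set μ := hA.eigenvalues i with hμ
  set v := hA.eigenvectorBasis i with hv
  have hmv : A *ᵥ ⇑v = μ • ⇑v := hA.mulVec_eigenvectorBasis i
  have h2 : (A * A) *ᵥ ⇑v = (μ ^ 2) • ⇑v := by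
    rw [← Matrix.mulVec_mulVec, hmv, Matrix.mulVec_smul, hmv, smul_smul, sq]
  have hnorm : ‖v‖ = 1 := hA.eigenvectorBasis.orthonormal.1 i
  obtain ⟨u, _, hu⟩ := (univ : Finset (Fin n)).exists_max_image (fun w => |v w|)
    ⟨i, Finset.mem_univ i⟩
  have hup : 0 < |v u| := by
    rcases lt_or_ge 0 (|v u|) with h | h
    · exact h
    · exfalso
      have hz : ∀ w, v w = 0 := by
        intro w
        have := (hu w (Finset.mem_univ w)).trans h
        exact abs_eq_zero.mp ((abs_nonneg _).antisymm' this)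
      have : v = 0 := by
        ext w
        exact hz w
      rw [this] at hnorm
      simp at hnorm
  refine ⟨u, ?_⟩
  have keyEq : μ ^ 2 * v u = ∑ w, (A * A) u w * v w := by
    have := congrFun h2 u
    simpa [Matrix.mulVec, dotProduct] using this.symm
  have hchain : μ ^ 2 * |v u| ≤ (∑ w, (A * A) u w) * |v u| := by
    have h1 : |μ ^ 2 * v u| ≤ ∑ w, (A * A) u w * |v w| := by
      rw [keyEq]
      refine (Finset.abs_sum_le_sum_abs _ _).trans ?_
      apply Finset.sum_le_sum
      intro w _
      rw [abs_mul, abs_of_nonneg (adj_sq_nonneg G u w)]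
    have h2' : ∑ w, (A * A) u w * |v w| ≤ ∑ w, (A * A) u w * |v u| := by
      apply Finset.sum_le_sum
      intro w _
      exact mul_le_mul_of_nonneg_left (hu w (Finset.mem_univ w)) (adj_sq_nonneg G u w)
    calc μ ^ 2 * |v u| = |μ ^ 2 * v u| := by
          rw [abs_mul, abs_of_nonneg (sq_nonneg μ)]
      _ ≤ ∑ w, (A * A) u w * |v w| := h1
      _ ≤ ∑ w, (A * A) u w * |v u| := h2'
      _ = (∑ w, (A * A) u w) * |v u| := by rw [Finset.sum_mul]
  have := le_of_mul_le_mul_right hchain hup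
  rwa [row_sum_adj_sq G u] at this
end PEA4

section PEA5
variable {n : ℕ} (G : SimpleGraph (Fin n)) [DecidableRel G.Adj]

def IsStarCenter (c : Fin n) : Prop := ∀ x y, G.Adj x y ↔ (x = c ∨ y = c) ∧ x ≠ y

lemma adj_entry_nonneg (a b : Fin n) : 0 ≤ G.adjMatrix ℝ a b := by
  simp only [SimpleGraph.adjMatrix_apply]
  split <;> norm_num

lemma adj_entry_le_one (a b : Fin n) : G.adjMatrix ℝ a b ≤ 1 := by
  simp only [SimpleGraph.adjMatrix_apply]
  split <;> norm_num

lemma sq_entry_nonneg (a b : Fin n) : 0 ≤ (G.adjMatrix ℝ * G.adjMatrix ℝ) a b := by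
  rw [Matrix.mul_apply]
  exact Finset.sum_nonneg fun x _ => mul_nonneg (adj_entry_nonneg G a x) (adj_entry_nonneg G x b)

lemma sq_entry_ge {x y z : Fin n} (hxy : G.Adj x y) (hyz : G.Adj y z) :
    1 ≤ (G.adjMatrix ℝ * G.adjMatrix ℝ) x z := by
  rw [Matrix.mul_apply]
  have h : G.adjMatrix ℝ x y * G.adjMatrix ℝ y z = 1 := by
    simp [hxy, hyz]
  calc (1:ℝ) = G.adjMatrix ℝ x y * G.adjMatrix ℝ y z := h.symm
    _ ≤ ∑ w, G.adjMatrix ℝ x w * G.adjMatrix ℝ w z := by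
        exact Finset.single_le_sum
          (fun w _ => mul_nonneg (adj_entry_nonneg G x w) (adj_entry_nonneg G w z))
          (Finset.mem_univ y)

lemma cube_entry_ge {x y z w : Fin n} (hxy : G.Adj x y) (hyz : G.Adj y z) (hzw : G.Adj z w) :
    1 ≤ (G.adjMatrix ℝ * G.adjMatrix ℝ * G.adjMatrix ℝ) x w := by
  rw [Matrix.mul_apply]
  have h1 : 1 ≤ (G.adjMatrix ℝ * G.adjMatrix ℝ) x z := sq_entry_ge G hxy hyz
  have h2 : (1:ℝ) ≤ (G.adjMatrix ℝ * G.adjMatrix ℝ) x z * G.adjMatrix ℝ z w := by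
    have : G.adjMatrix ℝ z w = 1 := by simp [hzw]
    rw [this, mul_one]
    exact h1
  refine h2.trans ?_
  exact Finset.single_le_sum
    (fun b _ => mul_nonneg (sq_entry_nonneg G x b) (adj_entry_nonneg G b w))
    (Finset.mem_univ z)

lemma no_triangle {c : ℝ}
    (hA3 : G.adjMatrix ℝ * G.adjMatrix ℝ * G.adjMatrix ℝ = c • G.adjMatrix ℝ)
    {x y z : Fin n} (hxy : G.Adj x y) (hyz : G.Adj y z) (hxz : G.Adj x z) : False := by
  have h := cube_entry_ge G hxy hyz hxz.symm
  rw [hA3] at h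
  simp [Matrix.smul_apply, SimpleGraph.adjMatrix_apply] at h
  linarith

lemma adj_symm_entry (a b : Fin n) : G.adjMatrix ℝ a b = G.adjMatrix ℝ b a := by
  simp only [SimpleGraph.adjMatrix_apply]
  congr 1
  exact propext (SimpleGraph.adj_comm G a b)

lemma cube_apply (u v : Fin n) :
    (G.adjMatrix ℝ * G.adjMatrix ℝ * G.adjMatrix ℝ) u v
      = ∑ ab ∈ (univ ×ˢ univ : Finset (Fin n × Fin n)),
          G.adjMatrix ℝ u ab.1 * G.adjMatrix ℝ ab.1 ab.2 * G.adjMatrix ℝ ab.2 v := by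
  rw [Finset.sum_product]
  rw [Matrix.mul_apply]
  rw [Finset.sum_comm]
  refine Finset.sum_congr rfl fun a _ => ?_
  rw [Matrix.mul_apply, Finset.sum_mul]

lemma row_sum_adj' (x : Fin n) : ∑ w, G.adjMatrix ℝ x w = (G.degree x : ℝ) := by
  have h := SimpleGraph.adjMatrix_mulVec_const_apply (G := G) (α := ℝ) (a := 1) (v := x)
  simpa [Matrix.mulVec, dotProduct] using h

lemma nbr_mem_of_adj {a : Fin n} {u v : Fin n} (huv : G.Adj u v)
    (hA3 : G.adjMatrix ℝ * G.adjMatrix ℝ * G.adjMatrix ℝ = ((n:ℝ) - 1) • G.adjMatrix ℝ)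
    (hsum : ∑ x, G.degree x = 2 * (n - 1)) (hn : 2 ≤ n)
    (hb : ∃ b, G.Adj a b) : G.Adj u a ∨ G.Adj v a := by
  classical
  set A := G.adjMatrix ℝ with hAdef
  set s : Finset (Fin n × Fin n) := univ ×ˢ univ with hs
  set F : Fin n × Fin n → ℝ :=
    fun ab => A ab.1 ab.2 * (A u ab.1 * A ab.2 v + A u ab.2 * A ab.1 v) with hF
  have hpt : ∀ ab ∈ s, F ab ≤ A ab.1 ab.2 := by
    rintro ⟨a', b'⟩ -
    by_cases hadj : G.Adj a' b'
    · have h1 : A a' b' = 1 := by simp [hAdef, hadj]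
      rw [hF]
      simp only [h1, one_mul]
      -- each product is 0 or 1, and not both 1
      have t1 : A u a' * A b' v ≤ 1 :=
        mul_le_one₀ (adj_entry_le_one G u a') (adj_entry_nonneg G b' v) (adj_entry_le_one G b' v)
      have t2 : A u b' * A a' v ≤ 1 :=
        mul_le_one₀ (adj_entry_le_one G u b') (adj_entry_nonneg G a' v) (adj_entry_le_one G a' v)
      by_cases h2 : G.Adj u a' ∧ G.Adj u b'
      · exact (no_triangle G hA3 h2.1 hadj h2.2).elim
      · rcases not_and_or.mp h2 with h3 | h3
        · have : A u a' = 0 := by simp [hAdef, h3]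
          rw [this, zero_mul, zero_add]
          exact t2
        · have : A u b' = 0 := by simp [hAdef, h3]
          rw [this, zero_mul, add_zero]
          exact t1
    · have h1 : A a' b' = 0 := by simp [hAdef, hadj]
      rw [hF]
      simp [h1]
  have hsum_adj : ∑ ab ∈ s, A ab.1 ab.2 = 2 * ((n:ℝ) - 1) := by
    rw [hs, Finset.sum_product]
    have : ∀ a : Fin n, ∑ b, A a b = (G.degree a : ℝ) := row_sum_adj' G
    rw [Finset.sum_congr rfl fun a _ => this a]
    rw [← Nat.cast_sum]
    rw [hsum]
    push_cast [Nat.cast_sub (by omega : 1 ≤ n)]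
    ring
  have hcube_uv : (A * A * A) u v = (n:ℝ) - 1 := by
    rw [hA3]
    simp [hAdef, Matrix.smul_apply, huv]
  have hcube_vu : (A * A * A) v u = (n:ℝ) - 1 := by
    rw [hA3]
    simp [hAdef, Matrix.smul_apply, huv.symm]
  have hsum_F : ∑ ab ∈ s, F ab = 2 * ((n:ℝ) - 1) := by
    have e1 : ∑ ab ∈ s, A ab.1 ab.2 * (A u ab.1 * A ab.2 v) = (A * A * A) u v := by
      rw [cube_apply]
      exact Finset.sum_congr rfl fun ab _ => by ring
    have e2 : ∑ ab ∈ s, A ab.1 ab.2 * (A u ab.2 * A ab.1 v) = (A * A * A) v u := by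
      rw [cube_apply]
      refine Finset.sum_congr rfl fun ab _ => ?_
      rw [show adjMatrix ℝ G v ab.1 = A ab.1 v from adj_symm_entry G v ab.1,
        show adjMatrix ℝ G ab.2 u = A u ab.2 from adj_symm_entry G ab.2 u,
        show adjMatrix ℝ G ab.1 ab.2 = A ab.1 ab.2 from rfl]
      ring
    calc ∑ ab ∈ s, F ab
        = ∑ ab ∈ s, (A ab.1 ab.2 * (A u ab.1 * A ab.2 v)
            + A ab.1 ab.2 * (A u ab.2 * A ab.1 v)) := by
          refine Finset.sum_congr rfl fun ab _ => ?_
          rw [hF]; ring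
      _ = (A * A * A) u v + (A * A * A) v u := by rw [Finset.sum_add_distrib, e1, e2]
      _ = 2 * ((n:ℝ) - 1) := by rw [hcube_uv, hcube_vu]; ring
  have hptEq : ∀ ab ∈ s, F ab = A ab.1 ab.2 := by
    have := (Finset.sum_eq_sum_iff_of_le hpt).mp (by rw [hsum_F, hsum_adj])
    exact this
  obtain ⟨b, hab⟩ := hb
  have hmem : (a, b) ∈ s := by simp [hs]
  have h1 : A a b = 1 := by simp [hAdef, hab]
  have := hptEq (a, b) hmem
  rw [hF] at this
  simp only [h1, one_mul] at this
  -- A u a * A b v + A u b * A a v = 1, so A u a = 1 or A a v = 1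
  by_contra hcon
  push_neg at hcon
  have hua : A u a = 0 := by simp [hAdef, hcon.1]
  have hav : A a v = 0 := by
    have : ¬ G.Adj a v := fun h => hcon.2 h.symm
    simp [hAdef, this]
  rw [hua, hav] at this
  simp at this


lemma exists_adj_of_conn' (hG : G.Connected) (hn : 2 ≤ n) (v : Fin n) :
    ∃ w, G.Adj v w := by
  have h1 : 1 < Fintype.card (Fin n) := by simpa using (show 1 < n by omega)
  obtain ⟨w, hw⟩ := Fintype.exists_ne_of_one_lt_card h1 v
  obtain ⟨p⟩ := hG.preconnected v w
  cases p with
  | nil => exact absurd rfl (Ne.symm hw)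
  | cons h q => exact ⟨_, h⟩

lemma deg_add_of_adj {u v : Fin n} (huv : G.Adj u v) (hG : G.Connected) (hn : 2 ≤ n)
    (hA3 : G.adjMatrix ℝ * G.adjMatrix ℝ * G.adjMatrix ℝ = ((n:ℝ) - 1) • G.adjMatrix ℝ)
    (hsum : ∑ x, G.degree x = 2 * (n - 1)) :
    G.degree u + G.degree v = n := by
  classical
  have hall : (univ : Finset (Fin n)) ⊆ G.neighborFinset u ∪ G.neighborFinset v := by
    intro a _
    rcases nbr_mem_of_adj G huv hA3 hsum hn (exists_adj_of_conn' G hG hn a) with h | h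
    · exact Finset.mem_union_left _ (by rwa [SimpleGraph.mem_neighborFinset])
    · exact Finset.mem_union_right _ (by rwa [SimpleGraph.mem_neighborFinset])
  have hdisj : Disjoint (G.neighborFinset u) (G.neighborFinset v) := by
    rw [Finset.disjoint_left]
    intro a hu hv
    rw [SimpleGraph.mem_neighborFinset] at hu hv
    exact no_triangle G hA3 hu hv.symm huv
  have hcard : #(G.neighborFinset u ∪ G.neighborFinset v) = n := by
    have h1 := Finset.card_le_card hall
    have h2 := Finset.card_le_card (Finset.subset_univ (G.neighborFinset u ∪ G.neighborFinset v))
    simp only [Finset.card_univ, Fintype.card_fin] at h1 h2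
    omega
  rw [Finset.card_union_of_disjoint hdisj] at hcard
  exact hcard

lemma exists_center (hG : G.Connected) (hn : 2 ≤ n)
    (hA3 : G.adjMatrix ℝ * G.adjMatrix ℝ * G.adjMatrix ℝ = ((n:ℝ) - 1) • G.adjMatrix ℝ)
    (hsum : ∑ x, G.degree x = 2 * (n - 1)) :
    ∃ c, IsStarCenter G c := by
  classical
  obtain ⟨u₀, -, hmax⟩ := (univ : Finset (Fin n)).exists_max_image (fun x => G.degree x)
    ⟨⟨0, by omega⟩, Finset.mem_univ _⟩
  set Δ := G.degree u₀ with hΔ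
  have hΔ1 : 1 ≤ Δ := by
    obtain ⟨w, hw⟩ := exists_adj_of_conn' G hG hn u₀
    have : 0 < G.degree u₀ := (G.degree_pos_iff_exists_adj u₀).mpr ⟨w, hw⟩
    omega
  have hΔn : Δ < n := by simpa using G.degree_lt_card_verts u₀
  have hnbrdeg : ∀ v ∈ G.neighborFinset u₀, G.degree v = n - Δ := by
    intro v hv
    rw [SimpleGraph.mem_neighborFinset] at hv
    have := deg_add_of_adj G hv hG hn hA3 hsum
    omega
  -- sum lower bound
  have hsplit : ∑ x ∈ G.neighborFinset u₀, G.degree x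
      + ∑ x ∈ univ \ G.neighborFinset u₀, G.degree x = ∑ x, G.degree x := by
    rw [add_comm]
    exact Finset.sum_sdiff (Finset.subset_univ _)
  have hs1 : ∑ x ∈ G.neighborFinset u₀, G.degree x = Δ * (n - Δ) := by
    rw [Finset.sum_congr rfl hnbrdeg, Finset.sum_const, smul_eq_mul]
    rfl
  have hu₀mem : u₀ ∈ univ \ G.neighborFinset u₀ := by
    rw [Finset.mem_sdiff]
    exact ⟨Finset.mem_univ _, fun h => G.irrefl ((SimpleGraph.mem_neighborFinset G u₀ u₀).mp h)⟩
  have hs2 : Δ + (n - Δ - 1) ≤ ∑ x ∈ univ \ G.neighborFinset u₀, G.degree x := by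
    rw [← Finset.add_sum_erase _ _ hu₀mem]
    have hle : #((univ \ G.neighborFinset u₀).erase u₀)
        ≤ ∑ x ∈ (univ \ G.neighborFinset u₀).erase u₀, G.degree x := by
      rw [Finset.card_eq_sum_ones]
      refine Finset.sum_le_sum fun x _ => ?_
      obtain ⟨w, hw⟩ := exists_adj_of_conn' G hG hn x
      have : 0 < G.degree x := (G.degree_pos_iff_exists_adj x).mpr ⟨w, hw⟩
      omega
    have hcard : #((univ \ G.neighborFinset u₀).erase u₀) = n - Δ - 1 := by
      rw [Finset.card_erase_of_mem hu₀mem, Finset.card_sdiff_of_subset (Finset.subset_univ _)]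
      simp only [Finset.card_univ, Fintype.card_fin]
      rfl
    omega
  have hkey : Δ * (n - Δ) + (n - 1) ≤ 2 * (n - 1) := by omega
  -- conclude Δ = n - 1
  have hΔeq : Δ = n - 1 := by
    rcases eq_or_lt_of_le hΔ1 with h1 | h1
    · -- Δ = 1 : all degrees are 1
      have hall1 : ∀ x : Fin n, G.degree x = 1 := by
        intro x
        have h2 := hmax x (Finset.mem_univ x)
        obtain ⟨w, hw⟩ := exists_adj_of_conn' G hG hn x
        have : 0 < G.degree x := (G.degree_pos_iff_exists_adj x).mpr ⟨w, hw⟩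
        omega
      have : ∑ x, G.degree x = n := by
        rw [Finset.sum_congr rfl fun x _ => hall1 x]
        simp
      omega
    · -- Δ ≥ 2
      have h2 : 2 ≤ Δ := h1
      set k := n - Δ with hkdef
      have hk : Δ + k = n := by omega
      by_cases hk2 : 2 ≤ k
      · exfalso
        have hprod : Δ + k ≤ Δ * k := Nat.add_le_mul h2 hk2
        set t := n - 1 with htdef
        have ht : t + 1 = n := by omega
        have h3 : Δ * k ≤ t := by linarith [hkey]
        linarith
      · omega
  rw [hΔeq] at hmax hΔ
  -- u₀ is adjacent to everything else
  have hadjall : ∀ v, v ≠ u₀ → G.Adj u₀ v := by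
    have hsub : G.neighborFinset u₀ ⊆ univ.erase u₀ := by
      intro x hx
      rw [SimpleGraph.mem_neighborFinset] at hx
      exact Finset.mem_erase.mpr ⟨hx.ne', Finset.mem_univ _⟩
    have hcard2 : #(univ.erase u₀) = n - 1 := by
      rw [Finset.card_erase_of_mem (Finset.mem_univ _)]
      simp
    have heq : G.neighborFinset u₀ = univ.erase u₀ :=
      Finset.eq_of_subset_of_card_le hsub
        (by rw [hcard2, SimpleGraph.card_neighborFinset_eq_degree, ← hΔ])
    intro v hv
    have : v ∈ G.neighborFinset u₀ := heq ▸ Finset.mem_erase.mpr ⟨hv, Finset.mem_univ _⟩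
    exact (SimpleGraph.mem_neighborFinset G u₀ v).mp this
  refine ⟨u₀, fun x y => ⟨fun hxy => ⟨?_, hxy.ne⟩, fun ⟨h1, h2⟩ => ?_⟩⟩
  · by_contra hcon
    push_neg at hcon
    exact no_triangle G hA3 (hadjall x hcon.1) hxy (hadjall y hcon.2)
  · rcases h1 with rfl | rfl
    · exact hadjall y (Ne.symm h2)
    · exact (hadjall x h2).symm

section starfacts
variable {c : Fin n}

lemma star_nbhd_center (h : IsStarCenter G c) : G.neighborFinset c = univ.erase c := by
  ext v
  rw [SimpleGraph.mem_neighborFinset, Finset.mem_erase, h c v]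
  constructor
  · rintro ⟨-, h2⟩
    exact ⟨Ne.symm h2, Finset.mem_univ _⟩
  · rintro ⟨h1, -⟩
    exact ⟨Or.inl rfl, Ne.symm h1⟩

lemma star_nbhd_leaf (h : IsStarCenter G c) {v : Fin n} (hv : v ≠ c) :
    G.neighborFinset v = {c} := by
  ext w
  rw [SimpleGraph.mem_neighborFinset, Finset.mem_singleton, h v w]
  constructor
  · rintro ⟨h1 | h1, h2⟩
    · exact absurd h1 hv
    · exact h1
  · rintro rfl
    exact ⟨Or.inr rfl, hv⟩

lemma star_deg_center (h : IsStarCenter G c) : G.degree c = n - 1 := by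
  rw [← SimpleGraph.card_neighborFinset_eq_degree, star_nbhd_center G h,
    Finset.card_erase_of_mem (Finset.mem_univ _)]
  simp

lemma star_deg_leaf (h : IsStarCenter G c) {v : Fin n} (hv : v ≠ c) : G.degree v = 1 := by
  rw [← SimpleGraph.card_neighborFinset_eq_degree, star_nbhd_leaf G h hv]
  simp

lemma star_deg_sum (h : IsStarCenter G c) (hn : 2 ≤ n) :
    ∑ x, G.degree x = 2 * (n - 1) := by
  classical
  rw [← Finset.add_sum_erase _ _ (Finset.mem_univ c), star_deg_center G h]
  have : ∀ x ∈ univ.erase c, G.degree x = 1 := by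
    intro x hx
    exact star_deg_leaf G h (Finset.mem_erase.mp hx).1
  rw [Finset.sum_congr rfl this, Finset.sum_const, smul_eq_mul,
    Finset.card_erase_of_mem (Finset.mem_univ _)]
  simp only [Finset.card_univ, Fintype.card_fin, mul_one]
  omega

lemma star_cube (h : IsStarCenter G c) (hn : 2 ≤ n) :
    G.adjMatrix ℝ * G.adjMatrix ℝ * G.adjMatrix ℝ = ((n:ℝ) - 1) • G.adjMatrix ℝ := by
  classical
  have hassoc : G.adjMatrix ℝ * G.adjMatrix ℝ * G.adjMatrix ℝ
      = G.adjMatrix ℝ * (G.adjMatrix ℝ * G.adjMatrix ℝ) := by rw [Matrix.mul_assoc]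
  ext a b
  rw [hassoc, SimpleGraph.adjMatrix_mul_apply]
  simp only [SimpleGraph.adjMatrix_mul_apply]
  rw [Matrix.smul_apply]
  by_cases ha : a = c
  · subst ha
    rw [star_nbhd_center G h]
    have hx : ∀ x ∈ univ.erase a, ∑ y ∈ G.neighborFinset x, G.adjMatrix ℝ y b
        = G.adjMatrix ℝ a b := by
      intro x hx
      rw [star_nbhd_leaf G h (Finset.mem_erase.mp hx).1, Finset.sum_singleton]
    rw [Finset.sum_congr rfl hx, Finset.sum_const, Finset.card_erase_of_mem (Finset.mem_univ _),
      nsmul_eq_mul]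
    simp only [Finset.card_univ, Fintype.card_fin]
    rw [Nat.cast_sub (by omega : 1 ≤ n)]
    norm_num
  · rw [star_nbhd_leaf G h ha, Finset.sum_singleton, star_nbhd_center G h]
    by_cases hb : b = c
    · subst hb
      have hy : ∀ y ∈ univ.erase b, G.adjMatrix ℝ y b = 1 := by
        intro y hy
        have : G.Adj y b := (h y b).mpr ⟨Or.inr rfl, (Finset.mem_erase.mp hy).1⟩
        simp [this]
      rw [Finset.sum_congr rfl hy, Finset.sum_const, Finset.card_erase_of_mem (Finset.mem_univ _),
        nsmul_eq_mul]
      have hab : G.Adj a b := (h a b).mpr ⟨Or.inr rfl, ha⟩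
      simp only [Finset.card_univ, Fintype.card_fin, SimpleGraph.adjMatrix_apply, hab, if_true]
      rw [Nat.cast_sub (by omega : 1 ≤ n)]
      norm_num
    · have hy : ∀ y ∈ univ.erase c, G.adjMatrix ℝ y b = 0 := by
        intro y hy
        have : ¬ G.Adj y b := by
          rw [h y b]
          rintro ⟨h1 | h1, -⟩
          · exact (Finset.mem_erase.mp hy).1 h1
          · exact hb h1
        simp [this]
      rw [Finset.sum_congr rfl hy, Finset.sum_const, smul_zero]
      have : ¬ G.Adj a b := by
        rw [h a b]
        rintro ⟨h1 | h1, -⟩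
        · exact ha h1
        · exact hb h1
      simp [this]
end starfacts
end PEA5

section PEA6
variable {n : ℕ} (G : SimpleGraph (Fin n)) [DecidableRel G.Adj]

lemma fin_val_zero_iff {m : ℕ} [NeZero m] (w : Fin m) : (w : ℕ) = 0 ↔ w = 0 := by
  rw [Fin.ext_iff, Fin.val_zero]

lemma iso_of_center (hn : 2 ≤ n) {c : Fin n} (h : IsStarCenter G c) :
    Nonempty (G ≃g _root_.starGraph n) := by
  haveI : NeZero n := ⟨by omega⟩
  refine ⟨⟨Equiv.swap c 0, ?_⟩⟩
  intro x y
  show ((((Equiv.swap c 0) x : Fin n) : ℕ) = 0 ∨ (((Equiv.swap c 0) y : Fin n) : ℕ) = 0)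
      ∧ (Equiv.swap c 0) x ≠ (Equiv.swap c 0) y ↔ G.Adj x y
  rw [h x y]
  have key : ∀ z : Fin n, (((Equiv.swap c 0) z : Fin n) : ℕ) = 0 ↔ z = c := by
    intro z
    rw [fin_val_zero_iff]
    rw [Equiv.swap_apply_eq_iff]
    simp
  rw [key, key]
  simp only [ne_eq, EmbeddingLike.apply_eq_iff_eq]

lemma center_of_iso (hn : 2 ≤ n) (f : G ≃g _root_.starGraph n) :
    ∃ c, IsStarCenter G c := by
  haveI : NeZero n := ⟨by omega⟩
  refine ⟨f.symm 0, fun x y => ?_⟩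
  have hmap := f.map_rel_iff (a := x) (b := y)
  rw [← hmap]
  show (((f x : Fin n) : ℕ) = 0 ∨ ((f y : Fin n) : ℕ) = 0) ∧ f x ≠ f y ↔ _
  have key : ∀ z : Fin n, ((f z : Fin n) : ℕ) = 0 ↔ z = f.symm 0 := by
    intro z
    rw [fin_val_zero_iff]
    constructor
    · intro hz
      rw [← hz]
      simp
    · intro hz
      rw [hz]
      simp
  rw [key, key]
  simp only [ne_eq, EmbeddingLike.apply_eq_iff_eq]
end PEA6

end PEnergyAux
end AUXALL

open PEnergyAux

/-- For a connected graph `G` on `n ≥ 2` vertices and `0 < p < 2`, the `p`-energy of `G`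
equals `2(n-1)^(p/2) = E_p(Sₙ)` if and only if `G` is isomorphic to the star `Sₙ`. -/
theorem pEnergy_eq_star_iff {n : ℕ} (hn : 2 ≤ n) (G : SimpleGraph (Fin n)) [DecidableRel G.Adj]
    (hG : G.Connected) (p : ℝ) (hp0 : 0 < p) (hp2 : p < 2) :
    pEnergy G p = 2 * ((n : ℝ) - 1) ^ (p / 2) ↔ Nonempty (G ≃g starGraph n) := by
  classical
  have hA : (G.adjMatrix ℝ).IsHermitian :=
    ((Matrix.conjTranspose_eq_transpose_of_trivial (G.adjMatrix ℝ)).trans G.isSymm_adjMatrix)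
  set μ : Fin n → ℝ := hA.eigenvalues with hμdef
  have hpE : pEnergy G p = ∑ i, |μ i| ^ p := rfl
  set c : ℝ := (n : ℝ) - 1 with hcdef
  have hn1R : (2:ℝ) ≤ (n:ℝ) := by exact_mod_cast hn
  have hc1 : 1 ≤ c := by rw [hcdef]; linarith
  have hc0 : 0 < c := by linarith
  have hcastc : ((n - 1 : ℕ) : ℝ) = c := by
    rw [hcdef, Nat.cast_sub (by omega : 1 ≤ n), Nat.cast_one]
  have htr2 : (G.adjMatrix ℝ * G.adjMatrix ℝ).trace = ((∑ x, G.degree x : ℕ) : ℝ) := by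
    rw [Matrix.trace, Nat.cast_sum]
    refine Finset.sum_congr rfl fun i _ => ?_
    rw [Matrix.diag_apply, SimpleGraph.adjMatrix_mul_self_apply_self]
  have hSsq : ∑ i, μ i ^ 2 = ((∑ x, G.degree x : ℕ) : ℝ) := by
    rw [← htr2, trace_sq_eq hA]
    exact Finset.sum_congr rfl fun i _ => pow_two (μ i)
  have hSge : 2 * c ≤ ∑ i, μ i ^ 2 := by
    rw [hSsq]
    have h1 := card_edge_ge_of_conn G hG hn
    have h2 := G.sum_degrees_eq_twice_card_edges
    have h3 : 2 * (n - 1) ≤ ∑ x, G.degree x := by omega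
    calc 2 * c = ((2 * (n-1) : ℕ) : ℝ) := by
          rw [Nat.cast_mul, hcastc]; norm_num
      _ ≤ _ := by exact_mod_cast h3
  have hHong : ∀ i, μ i ^ 2 + c ≤ ∑ j, μ j ^ 2 := by
    intro i
    obtain ⟨u, hu⟩ := eig_sq_le' G hA i
    have h2 := hong_deg_sum G hG hn u
    have h4 : ((∑ x ∈ G.neighborFinset u, G.degree x : ℕ) : ℝ) + c
        ≤ ((∑ x, G.degree x : ℕ) : ℝ) := by
      rw [← hcastc, ← Nat.cast_add]
      exact_mod_cast h2
    have hu' : μ i ^ 2 ≤ ((∑ x ∈ G.neighborFinset u, G.degree x : ℕ) : ℝ) := by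
      rw [Nat.cast_sum]; exact hu
    rw [hSsq]; linarith
  constructor
  · intro heq
    rw [hpE] at heq
    obtain ⟨i₀, -, hmax⟩ := (univ : Finset (Fin n)).exists_max_image (fun i => |μ i|)
      ⟨⟨0, by omega⟩, Finset.mem_univ _⟩
    have hmax' : ∀ i, |μ i| ≤ |μ i₀| := fun i => hmax i (Finset.mem_univ i)
    have hLpos : 0 < |μ i₀| := by
      by_contra hcon
      push_neg at hcon
      have hzero : ∑ i, μ i ^ 2 = 0 := Finset.sum_eq_zero fun i _ => by
        have h5 := (hmax' i).trans hcon
        have h0 : μ i = 0 := abs_eq_zero.mp ((abs_nonneg _).antisymm' h5)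
        simp [h0]
      linarith
    by_cases hcase : μ i₀ ^ 2 < c
    · exfalso
      have hlt : |μ i₀| < Real.sqrt c := by
        rw [← Real.sqrt_sq_eq_abs]
        exact Real.sqrt_lt_sqrt (sq_nonneg _) hcase
      have hstrict : Real.sqrt c ^ (p - 2) < |μ i₀| ^ (p - 2) :=
        Real.rpow_lt_rpow_of_neg hLpos hlt (by linarith)
      have hsum1 : (∑ i, μ i ^ 2) * |μ i₀| ^ (p - 2) ≤ ∑ i, |μ i| ^ p := by
        rw [Finset.sum_mul]
        exact Finset.sum_le_sum fun i _ => pointwise_rpow hp0 hp2 hLpos (hmax' i)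
      have hq : Real.sqrt c ^ (p - 2) = c ^ (p / 2 - 1) := by
        rw [sqrt_rpow_eq hc0.le (p-2)]
        congr 1
        ring
      have hlb : 2 * c * |μ i₀| ^ (p - 2) ≤ (∑ i, μ i ^ 2) * |μ i₀| ^ (p - 2) :=
        mul_le_mul_of_nonneg_right hSge (Real.rpow_nonneg (abs_nonneg _) _)
      have h5 : c ^ (p/2 - 1) < |μ i₀| ^ (p - 2) := by rw [← hq]; exact hstrict
      have h6 : 2 * c * c ^ (p/2 - 1) = 2 * c ^ (p/2) := by
        rw [mul_assoc, c_mul_rpow hc0]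
      have hgt : 2 * c ^ (p/2) < 2 * c * |μ i₀| ^ (p - 2) := by
        calc 2 * c ^ (p/2) = 2 * c * c ^ (p/2-1) := h6.symm
          _ < 2 * c * |μ i₀| ^ (p - 2) := mul_lt_mul_of_pos_left h5 (by linarith)
      have hfin : 2 * c ^ (p/2) < ∑ i, |μ i| ^ p :=
        lt_of_lt_of_le hgt (le_trans hlb hsum1)
      rw [heq] at hfin
      exact lt_irrefl _ hfin
    · push_neg at hcase
      have hTpos : 0 < ∑ i ∈ univ.erase i₀, μ i ^ 2 := by
        have hsplitS : μ i₀ ^ 2 + ∑ i ∈ univ.erase i₀, μ i ^ 2 = ∑ i, μ i ^ 2 :=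
          Finset.add_sum_erase univ (fun i => μ i ^ 2) (Finset.mem_univ i₀)
        have := hHong i₀
        linarith
      have hsplitS : μ i₀ ^ 2 + ∑ i ∈ univ.erase i₀, μ i ^ 2 = ∑ i, μ i ^ 2 :=
        Finset.add_sum_erase univ (fun i => μ i ^ 2) (Finset.mem_univ i₀)
      have hTc : c ≤ ∑ i ∈ univ.erase i₀, μ i ^ 2 := by
        have := hHong i₀
        linarith
      obtain ⟨hge, hext⟩ := sum_rpow_key (s := univ.erase i₀) μ hp0 hp2 hTpos
      have hEsplit : ∑ i, |μ i| ^ p = |μ i₀| ^ p + ∑ i ∈ univ.erase i₀, |μ i| ^ p :=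
        (Finset.add_sum_erase univ (fun i => |μ i| ^ p) (Finset.mem_univ i₀)).symm
      have hsc : √c ≤ |μ i₀| := by
        have h7 : Real.sqrt c ≤ Real.sqrt (μ i₀ ^ 2) := Real.sqrt_le_sqrt hcase
        rwa [Real.sqrt_sq_eq_abs] at h7
      have h1' : c ^ (p/2) ≤ |μ i₀| ^ p := by
        rw [← sqrt_rpow_eq hc0.le]
        exact Real.rpow_le_rpow (Real.sqrt_nonneg c) hsc hp0.le
      have h2' : c ^ (p/2) ≤ (∑ i ∈ univ.erase i₀, μ i ^ 2) ^ (p/2) :=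
        Real.rpow_le_rpow hc0.le hTc (by positivity)
      have e2 : ∑ i ∈ univ.erase i₀, |μ i| ^ p = (∑ i ∈ univ.erase i₀, μ i ^ 2) ^ (p/2) := by
        linarith
      have e1 : |μ i₀| ^ p = c ^ (p/2) := by linarith
      have e3 : (∑ i ∈ univ.erase i₀, μ i ^ 2) ^ (p/2) = c ^ (p/2) := by linarith
      have hμ0sq : μ i₀ ^ 2 = c := by
        have hb : |μ i₀| = Real.sqrt c :=
          rpow_base_inj (abs_nonneg (μ i₀)) (Real.sqrt_nonneg c) hp0
            (by rw [e1, sqrt_rpow_eq hc0.le])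
        rw [← sq_abs, hb, Real.sq_sqrt hc0.le]
      have hTeq : (∑ i ∈ univ.erase i₀, μ i ^ 2) = c :=
        rpow_base_inj (by positivity) hc0.le (by positivity : (0:ℝ) < p/2) e3
      have hall : ∀ i, μ i * μ i * μ i = c * μ i := by
        intro i
        have hsqc : μ i ^ 2 = 0 ∨ μ i ^ 2 = c := by
          rcases eq_or_ne i i₀ with rfl | hi
          · exact Or.inr hμ0sq
          · rcases hext e2 i (Finset.mem_erase.mpr ⟨hi, Finset.mem_univ _⟩) with h0 | h0
            · left; rw [h0]; ring
            · right; rw [h0, hTeq]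
        rcases hsqc with h0 | h0
        · have : μ i = 0 := sq_eq_zero_iff.mp h0
          rw [this]; ring
        · rw [pow_two] at h0
          rw [h0]
      have hA3 : G.adjMatrix ℝ * G.adjMatrix ℝ * G.adjMatrix ℝ = c • G.adjMatrix ℝ :=
        (cube_eq_smul_iff hA c).mpr hall
      have hdeg : ∑ x, G.degree x = 2 * (n - 1) := by
        have hr : ((∑ x, G.degree x : ℕ) : ℝ) = ((2 * (n-1) : ℕ) : ℝ) := by
          rw [← hSsq, ← hsplitS, hμ0sq, hTeq, Nat.cast_mul, hcastc]
          ring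
        exact_mod_cast hr
      obtain ⟨c₀, hc₀⟩ := exists_center G hG hn (by rw [← hcdef]; exact hA3) hdeg
      exact iso_of_center G hn hc₀
  · rintro ⟨f⟩
    obtain ⟨c₀, hc₀⟩ := center_of_iso G hn f
    have hA3 := star_cube G hc₀ hn
    have hcube := (cube_eq_smul_iff hA c).mp (by rw [hcdef]; exact hA3)
    have hall : ∀ i, μ i ^ 2 = 0 ∨ μ i ^ 2 = c := by
      intro i
      rcases eq_or_ne (μ i) 0 with h0 | h0
      · left; rw [h0]; ring
      · right
        have h8 := hcube i
        have h9 : μ i * μ i = c := mul_right_cancel₀ h0 h8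
        rw [pow_two]; exact h9
    have hds := star_deg_sum G hc₀ hn
    have hsum2 : ∑ i, μ i ^ 2 = 2 * c := by
      rw [hSsq, hds, Nat.cast_mul, hcastc]
      ring
    rw [hpE]
    exact energy_of_quad μ hc0 hp0 hall hsum2
end

section
/- Let p > 2 be a real number and let G be a connected simple graph with m edges and n vertices. Then E_p(G) ≤ 2m·(2m − n + 1)^{(p−2)/2}. -/
open Finset MeasureTheory

section Aux

open Matrix

lemma aux_sum_eig_sq {n : ℕ} (A : Matrix (Fin n) (Fin n) ℝ) (hA : A.IsHermitian) :
    ∑ i, hA.eigenvalues i ^ 2 = (A * A).trace := by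
  set U : Matrix (Fin n) (Fin n) ℝ :=
    (Matrix.IsHermitian.eigenvectorUnitary hA : Matrix (Fin n) (Fin n) ℝ)
  set D : Matrix (Fin n) (Fin n) ℝ := Matrix.diagonal (RCLike.ofReal ∘ hA.eigenvalues)
  have hUU' : star U * U = 1 :=
    (Matrix.mem_unitaryGroup_iff').mp (Matrix.IsHermitian.eigenvectorUnitary hA).2
  have hspec : A = U * D * star U := hA.spectral_theorem
  have h2 : A * A = U * (D * D) * star U := by
    rw [hspec]
    calc U * D * star U * (U * D * star U) = U * D * (star U * U) * (D * star U) := by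
          simp only [Matrix.mul_assoc]
    _ = U * (D * D) * star U := by rw [hUU']; simp only [Matrix.mul_one, Matrix.mul_assoc]
  rw [h2, Matrix.trace_mul_comm, ← Matrix.mul_assoc, hUU', Matrix.one_mul]
  simp [D, Matrix.diagonal_mul_diagonal, Matrix.trace_diagonal, pow_two]

lemma aux_degree_pos {n : ℕ} (G : SimpleGraph (Fin n)) [DecidableRel G.Adj] (hG : G.Connected)
    (u v : Fin n) (huv : u ≠ v) : 0 < G.degree u := by
  rw [G.degree_pos_iff_exists_adj u]
  obtain ⟨w⟩ := hG.preconnected u v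
  cases w with
  | nil => exact absurd rfl huv
  | cons h _ => exact ⟨_, h⟩

lemma aux_eig_sq_le {n m : ℕ} (G : SimpleGraph (Fin n)) [DecidableRel G.Adj]
    (hG : G.Connected) (hm : G.edgeFinset.card = m) (i : Fin n) :
    adjEigenvalues G i ^ 2 ≤ 2 * (m : ℝ) - n + 1 := by
  classical
  set A : Matrix (Fin n) (Fin n) ℝ := G.adjMatrix ℝ with hAdef
  set hA : A.IsHermitian :=
    ((Matrix.conjTranspose_eq_transpose_of_trivial (G.adjMatrix ℝ)).trans G.isSymm_adjMatrix)
  set lam : ℝ := adjEigenvalues G i with hlam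
  have hv : A *ᵥ ⇑(hA.eigenvectorBasis i) = lam • ⇑(hA.eigenvectorBasis i) :=
    hA.mulVec_eigenvectorBasis i
  have hvne : ⇑(hA.eigenvectorBasis i) ≠ (0 : Fin n → ℝ) := by
    have h0 : hA.eigenvectorBasis i ≠ 0 := hA.eigenvectorBasis.toBasis.ne_zero i
    intro h
    exact h0 (by ext j; exact congrFun h j)
  have heig : Module.End.HasEigenvalue (Matrix.toLin' (A * A)) (lam ^ 2) := by
    apply Module.End.hasEigenvalue_of_hasEigenvector
      (x := (⇑(hA.eigenvectorBasis i) : Fin n → ℝ))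
    refine ⟨Module.End.mem_eigenspace_iff.mpr ?_, hvne⟩
    rw [Matrix.toLin'_apply, ← Matrix.mulVec_mulVec, hv, Matrix.mulVec_smul, hv, smul_smul,
      ← pow_two]
  obtain ⟨k, hk⟩ := eigenvalue_mem_ball heig
  rw [Metric.mem_closedBall, Real.dist_eq] at hk
  have hnn : ∀ j, (0 : ℝ) ≤ (A * A) k j := by
    intro j
    rw [hAdef, SimpleGraph.adjMatrix_mul_apply]
    exact Finset.sum_nonneg fun u _ => by simp [SimpleGraph.adjMatrix_apply]; positivity
  have hrow : lam ^ 2 ≤ ∑ j, (A * A) k j := by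
    have h1 : lam ^ 2 - (A * A) k k ≤ ∑ j ∈ Finset.univ.erase k, ‖(A * A) k j‖ :=
      (abs_le.mp hk).2
    have h2 : ∑ j ∈ Finset.univ.erase k, ‖(A * A) k j‖
        = ∑ j ∈ Finset.univ.erase k, (A * A) k j := by
      refine Finset.sum_congr rfl fun j _ => ?_
      rw [Real.norm_eq_abs, abs_of_nonneg (hnn j)]
    have h3 : (A * A) k k + ∑ j ∈ Finset.univ.erase k, (A * A) k j = ∑ j, (A * A) k j :=
      Finset.add_sum_erase _ _ (Finset.mem_univ k)
    linarith [h1, h2 ▸ h1]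
  -- row sum equals sum of degrees of neighbors
  have hdegrow : ∀ u : Fin n, ∑ j, A u j = (G.degree u : ℝ) := by
    intro u
    simp [hAdef, SimpleGraph.adjMatrix_apply, SimpleGraph.degree,
      SimpleGraph.neighborFinset_eq_filter, Finset.sum_boole]
  have hrowsum : ∑ j, (A * A) k j = ∑ u ∈ G.neighborFinset k, (G.degree u : ℝ) := by
    have : ∀ j, (A * A) k j = ∑ u ∈ G.neighborFinset k, A u j := by
      intro j; rw [hAdef, SimpleGraph.adjMatrix_mul_apply]
    simp_rw [this]
    rw [Finset.sum_comm]
    exact Finset.sum_congr rfl fun u _ => hdegrow u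
  -- combinatorial bound
  have hn1 : 1 ≤ n := by
    have : Nonempty (Fin n) := hG.nonempty
    exact Fin.pos_iff_nonempty.mpr this
  -- combinatorial bound in ℕ
  have hnat : ∑ u ∈ G.neighborFinset k, G.degree u + (n - 1) ≤ 2 * m := by
    set N := G.neighborFinset k with hN
    set S := Finset.univ \ insert k N with hS
    have hkN : k ∉ N := by simp [hN]
    have hsplit : ∑ u ∈ S, G.degree u + ∑ u ∈ insert k N, G.degree u = ∑ u, G.degree u :=
      Finset.sum_sdiff (Finset.subset_univ _)
    have hins : ∑ u ∈ insert k N, G.degree u = G.degree k + ∑ u ∈ N, G.degree u :=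
      Finset.sum_insert hkN
    have hdk : N.card = G.degree k := rfl
    have hdklt : G.degree k < n := by
      simpa using G.degree_lt_card_verts k
    have hcardS : S.card = n - (G.degree k + 1) := by
      rw [hS, Finset.card_sdiff_of_subset (Finset.subset_univ _), Finset.card_insert_of_notMem hkN, hdk]
      simp [Nat.add_comm]
    have hSle : S.card ≤ ∑ u ∈ S, G.degree u := by
      calc S.card = ∑ _u ∈ S, 1 := by simp
      _ ≤ ∑ u ∈ S, G.degree u := by
        refine Finset.sum_le_sum fun u hu => ?_
        have huk : u ≠ k := by
          rw [hS, Finset.mem_sdiff] at hu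
          exact fun h => hu.2 (h ▸ Finset.mem_insert_self k N)
        exact aux_degree_pos G hG u k huk
    have htot : ∑ u, G.degree u = 2 * m := by
      rw [SimpleGraph.sum_degrees_eq_twice_card_edges, hm]
    omega
  -- transfer to ℝ
  have hreal : ∑ u ∈ G.neighborFinset k, (G.degree u : ℝ) ≤ 2 * (m : ℝ) - n + 1 := by
    have := hnat
    have hcast : ((∑ u ∈ G.neighborFinset k, G.degree u + (n - 1) : ℕ) : ℝ) ≤ ((2 * m : ℕ) : ℝ) :=
      Nat.cast_le.mpr this
    push_cast [Nat.cast_sub hn1] at hcast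
    linarith
  calc lam ^ 2 ≤ ∑ j, (A * A) k j := hrow
  _ = ∑ u ∈ G.neighborFinset k, (G.degree u : ℝ) := hrowsum
  _ ≤ 2 * (m : ℝ) - n + 1 := hreal

end Aux

/-- For `p > 2` and a connected graph with `m` edges and `n` vertices,
`E_p(G) ≤ 2m (2m - n + 1)^((p-2)/2)`. -/
theorem pEnergy_le_of_two_lt {n m : ℕ} (G : SimpleGraph (Fin n)) [DecidableRel G.Adj]
    (hG : G.Connected) (hm : G.edgeFinset.card = m) (p : ℝ) (hp : 2 < p) :
    pEnergy G p ≤ 2 * m * (2 * (m : ℝ) - n + 1) ^ ((p - 2) / 2) := by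
  classical
  have hA : (G.adjMatrix ℝ).IsHermitian :=
    ((Matrix.conjTranspose_eq_transpose_of_trivial (G.adjMatrix ℝ)).trans G.isSymm_adjMatrix)
  set C : ℝ := 2 * (m : ℝ) - n + 1 with hC
  have hne : Nonempty (Fin n) := hG.nonempty
  obtain ⟨i0⟩ := hne
  have hC0 : 0 ≤ C := le_trans (sq_nonneg (adjEigenvalues G i0)) (aux_eig_sq_le G hG hm i0)
  set K : ℝ := C ^ ((p - 2) / 2) with hK
  have hK0 : 0 ≤ K := Real.rpow_nonneg hC0 _
  have hsum : ∑ i, adjEigenvalues G i ^ 2 = 2 * (m : ℝ) := by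
    have h1 : ∑ i, adjEigenvalues G i ^ 2 = (G.adjMatrix ℝ * G.adjMatrix ℝ).trace :=
      aux_sum_eig_sq (G.adjMatrix ℝ) hA
    rw [h1, Matrix.trace]
    have h2 : ∀ i : Fin n, (G.adjMatrix ℝ * G.adjMatrix ℝ).diag i = (G.degree i : ℝ) :=
      fun i => G.adjMatrix_mul_self_apply_self i
    rw [Finset.sum_congr rfl fun i _ => h2 i]
    rw [← Nat.cast_sum]
    rw [SimpleGraph.sum_degrees_eq_twice_card_edges, hm]
    push_cast
    ring
  have hterm : ∀ i, |adjEigenvalues G i| ^ p ≤ adjEigenvalues G i ^ 2 * K := by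
    intro i
    set x : ℝ := adjEigenvalues G i with hx
    rcases eq_or_ne x 0 with h0 | h0
    · rw [h0, abs_zero, Real.zero_rpow (by linarith : p ≠ 0)]
      simp
    · have hxpos : 0 < |x| := abs_pos.mpr h0
      have e1 : |x| ^ p = |x| ^ (2 : ℝ) * |x| ^ (p - 2) := by
        rw [← Real.rpow_add hxpos]; ring_nf
      have e2 : |x| ^ (2 : ℝ) = x ^ 2 := by
        rw [show (2 : ℝ) = ((2 : ℕ) : ℝ) by norm_num, Real.rpow_natCast]
        exact sq_abs x
      have e3 : |x| ^ (p - 2) ≤ K := by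
        have hle : |x| ≤ Real.sqrt C := by
          rw [← Real.sqrt_sq_eq_abs]
          exact Real.sqrt_le_sqrt (aux_eig_sq_le G hG hm i)
        calc |x| ^ (p - 2) ≤ (Real.sqrt C) ^ (p - 2) :=
              Real.rpow_le_rpow (abs_nonneg x) hle (by linarith)
        _ = K := by
              rw [Real.sqrt_eq_rpow, ← Real.rpow_mul hC0, hK]
              congr 1
              ring
      calc |x| ^ p = x ^ 2 * |x| ^ (p - 2) := by rw [e1, e2]
      _ ≤ x ^ 2 * K := mul_le_mul_of_nonneg_left e3 (sq_nonneg x)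
  calc pEnergy G p = ∑ i, |adjEigenvalues G i| ^ p := rfl
  _ ≤ ∑ i, adjEigenvalues G i ^ 2 * K := Finset.sum_le_sum fun i _ => hterm i
  _ = (∑ i, adjEigenvalues G i ^ 2) * K := (Finset.sum_mul _ _ _).symm
  _ = 2 * (m : ℝ) * K := by rw [hsum]
end

section
/- Let p > 2 be a real number and let G be a connected simple graph with m edges and n ≥ 2 vertices. Then E_p(G) = 2m·(2m − n + 1)^{(p−2)/2} holds if and only if G is isomorphic to the star graph S_n. -/
open Finset MeasureTheory

namespace PES

set_option linter.unusedSectionVars false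

section Matrices
open Matrix
variable {n : ℕ} {A : Matrix (Fin n) (Fin n) ℝ}

lemma matrix_cube_of_eigen (hA : A.IsHermitian) (t : ℝ)
    (h : ∀ i, hA.eigenvalues i ^ 3 = t * hA.eigenvalues i) : A ^ 3 = t • A := by
  have hU : (star (hA.eigenvectorUnitary : Matrix (Fin n) (Fin n) ℝ)) *
      (hA.eigenvectorUnitary : Matrix (Fin n) (Fin n) ℝ) = 1 :=
    (Matrix.mem_unitaryGroup_iff').mp (hA.eigenvectorUnitary).2
  set U := (hA.eigenvectorUnitary : Matrix (Fin n) (Fin n) ℝ)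
  set D := Matrix.diagonal ((RCLike.ofReal : ℝ → ℝ) ∘ hA.eigenvalues) with hD
  have hsp : A = U * D * star U := hA.spectral_theorem
  have hD3 : D * D * D = t • D := by
    rw [hD]
    simp only [RCLike.ofReal_real_eq_id, Function.id_comp, diagonal_mul_diagonal]
    rw [← Matrix.diagonal_smul]
    refine congrArg Matrix.diagonal (funext fun i => ?_)
    simpa [pow_succ, pow_zero, mul_assoc] using h i
  calc A ^ 3 = (U * D * star U) * (U * D * star U) * (U * D * star U) := by
        rw [← hsp, pow_succ, pow_succ, pow_one]
    _ = U * (D * D * D) * star U := by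
        simp only [Matrix.mul_assoc]
        rw [show star U * (U * (D * (star U * (U * (D * star U))))) = D * (D * star U) by
          rw [← Matrix.mul_assoc (star U) U, hU]
          simp [Matrix.mul_assoc, ← Matrix.mul_assoc (star U) U, hU]]
    _ = t • A := by rw [hD3, hsp]; simp [Matrix.mul_smul, Matrix.smul_mul]

lemma trace_sq_eq (hA : A.IsHermitian) :
    Matrix.trace (A * A) = ∑ i, hA.eigenvalues i ^ 2 := by
  have hU : (star (hA.eigenvectorUnitary : Matrix (Fin n) (Fin n) ℝ)) *
      (hA.eigenvectorUnitary : Matrix (Fin n) (Fin n) ℝ) = 1 :=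
    (Matrix.mem_unitaryGroup_iff').mp (hA.eigenvectorUnitary).2
  set U := (hA.eigenvectorUnitary : Matrix (Fin n) (Fin n) ℝ)
  set D := Matrix.diagonal ((RCLike.ofReal : ℝ → ℝ) ∘ hA.eigenvalues) with hD
  have hsp : A = U * D * star U := hA.spectral_theorem
  have h2 : A * A = U * (D * D) * star U := by
    rw [hsp]
    simp only [Matrix.mul_assoc]
    rw [← Matrix.mul_assoc (star U) U, hU, Matrix.one_mul]
  rw [h2, Matrix.trace_mul_comm (U * (D * D)) (star U), ← Matrix.mul_assoc, hU, Matrix.one_mul]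
  rw [hD]
  simp only [RCLike.ofReal_real_eq_id, Function.id_comp, diagonal_mul_diagonal, trace_diagonal]
  exact Finset.sum_congr rfl fun i _ => (sq _).symm

lemma eig_sq_le_rowsum (hA : A.IsHermitian) (t : ℝ) (hrow : ∀ j, ∑ k, (A * A) j k ≤ t)
    (hpos : ∀ j k, 0 ≤ (A * A) j k) (i : Fin n) : hA.eigenvalues i ^ 2 ≤ t := by
  have hv := hA.mulVec_eigenvectorBasis i
  set v : Fin n → ℝ := ⇑(hA.eigenvectorBasis i) with hvdef
  have hv2 : (A * A) *ᵥ v = (hA.eigenvalues i ^ 2) • v := by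
    rw [← Matrix.mulVec_mulVec, hv, Matrix.mulVec_smul, hv, smul_smul, sq]
  have hvne : v ≠ 0 := by
    intro h0
    exact hA.eigenvectorBasis.orthonormal.ne_zero i (by ext k; exact congrFun h0 k)
  obtain ⟨j, -, hj⟩ := Finset.exists_max_image Finset.univ (fun k => |v k|) ⟨i, mem_univ i⟩
  have hj' : ∀ k, |v k| ≤ |v j| := fun k => hj k (mem_univ k)
  have hvj : 0 < |v j| := by
    rcases Function.ne_iff.mp hvne with ⟨k, hk⟩
    exact lt_of_lt_of_le (abs_pos.mpr hk) (hj' k)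
  have key : hA.eigenvalues i ^ 2 * |v j| ≤ t * |v j| := by
    have h1 : hA.eigenvalues i ^ 2 * |v j| = |((A * A) *ᵥ v) j| := by
      rw [hv2, Pi.smul_apply, smul_eq_mul, abs_mul,
        abs_of_nonneg (sq_nonneg (hA.eigenvalues i))]
    rw [h1]
    calc |((A * A) *ᵥ v) j| = |∑ k, (A * A) j k * v k| := by rw [Matrix.mulVec, dotProduct]
      _ ≤ ∑ k, |(A * A) j k * v k| := Finset.abs_sum_le_sum_abs _ _
      _ ≤ ∑ k, (A * A) j k * |v j| := by
          refine Finset.sum_le_sum fun k _ => ?_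
          rw [abs_mul, abs_of_nonneg (hpos j k)]
          exact mul_le_mul_of_nonneg_left (hj' k) (hpos j k)
      _ = (∑ k, (A * A) j k) * |v j| := by rw [Finset.sum_mul]
      _ ≤ t * |v j| := mul_le_mul_of_nonneg_right (hrow j) (abs_nonneg _)
  exact le_of_mul_le_mul_right key hvj

lemma eigen_cube_of_matrix (hA : A.IsHermitian) (t : ℝ) (h3 : A ^ 3 = t • A) (i : Fin n) :
    hA.eigenvalues i ^ 3 = t * hA.eigenvalues i := by
  have hv := hA.mulVec_eigenvectorBasis i
  set v : Fin n → ℝ := ⇑(hA.eigenvectorBasis i) with hvdef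
  have hv3 : (A ^ 3) *ᵥ v = (hA.eigenvalues i ^ 3) • v := by
    rw [pow_succ, pow_succ, pow_one, ← Matrix.mulVec_mulVec, ← Matrix.mulVec_mulVec, hv,
      Matrix.mulVec_smul, hv, Matrix.mulVec_smul, Matrix.mulVec_smul, hv, smul_smul, smul_smul]
    ring_nf
  have hvne : v ≠ 0 := by
    intro h0
    exact hA.eigenvectorBasis.orthonormal.ne_zero i (by ext k; exact congrFun h0 k)
  rcases Function.ne_iff.mp hvne with ⟨k, hk⟩
  have := congrFun (h3 ▸ hv3 : (t • A) *ᵥ v = _) k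
  rw [Matrix.smul_mulVec, hv] at this
  have h2 : t * (hA.eigenvalues i * v k) = hA.eigenvalues i ^ 3 * v k := by
    simpa [smul_smul] using this
  rw [← mul_assoc] at h2
  exact (mul_right_cancel₀ hk h2).symm

end Matrices

section Rpow

lemma abs_rpow_eq (l p : ℝ) : |l| ^ p = (l ^ 2) ^ (p / 2) := by
  rw [← sq_abs, ← Real.rpow_natCast |l| 2, ← Real.rpow_mul (abs_nonneg l)]
  rw [show (↑(2:ℕ) * (p / 2) : ℝ) = p by push_cast; ring]

lemma rpow_le_of_le {x t p : ℝ} (hx : 0 ≤ x) (hxt : x ≤ t) (hp : 2 < p) :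
    x ^ (p / 2) ≤ x * t ^ ((p - 2) / 2) := by
  rcases eq_or_lt_of_le hx with h0 | h0
  · rw [← h0, Real.zero_rpow (ne_of_gt (by linarith : (0:ℝ) < p / 2)), zero_mul]
  · have : x ^ (p / 2) = x * x ^ ((p - 2) / 2) := by
      rw [show p / 2 = 1 + (p - 2) / 2 by ring, Real.rpow_add h0, Real.rpow_one]
    rw [this]
    exact mul_le_mul_of_nonneg_left (Real.rpow_le_rpow hx hxt (by linarith)) hx

lemma rpow_eq_cases {x t p : ℝ} (hx : 0 ≤ x) (ht : 0 ≤ t) (hp : 2 < p)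
    (h : x ^ (p / 2) = x * t ^ ((p - 2) / 2)) : x = 0 ∨ x = t := by
  rcases eq_or_lt_of_le hx with h0 | h0
  · exact Or.inl h0.symm
  · right
    rw [show p / 2 = 1 + (p - 2) / 2 by ring, Real.rpow_add h0, Real.rpow_one] at h
    have h2 : x ^ ((p - 2) / 2) = t ^ ((p - 2) / 2) := mul_left_cancel₀ (ne_of_gt h0) h
    have c0 : ((p - 2) / 2) ≠ 0 := ne_of_gt (by linarith)
    have h3 := congrArg (fun y : ℝ => y ^ (((p - 2) / 2)⁻¹)) h2
    simp only [← Real.rpow_mul hx, ← Real.rpow_mul ht, mul_inv_cancel₀ c0, Real.rpow_one] at h3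
    exact h3

lemma rpow_eq_of_cases {x t p : ℝ} (ht : 0 < t) (hp : 2 < p) (h : x = 0 ∨ x = t) :
    x ^ (p / 2) = x * t ^ ((p - 2) / 2) := by
  rcases h with h | h
  · rw [h, Real.zero_rpow (ne_of_gt (by linarith : (0:ℝ) < p / 2)), zero_mul]
  · rw [h, show p / 2 = 1 + (p - 2) / 2 by ring, Real.rpow_add ht, Real.rpow_one]

end Rpow

section GraphBasics
open Matrix SimpleGraph
variable {n : ℕ} (G : SimpleGraph (Fin n)) [DecidableRel G.Adj]

lemma degree_one_le (hG : G.Connected) (hn : 2 ≤ n) (w : Fin n) : 1 ≤ G.degree w := by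
  rw [Nat.succ_le_iff, degree_pos_iff_exists_adj]
  have h1 : 1 < Fintype.card (Fin n) := by simp only [Fintype.card_fin]; omega
  obtain ⟨u, hu⟩ := Fintype.exists_ne_of_one_lt_card h1 w
  obtain ⟨p⟩ := hG.preconnected w u
  cases p with
  | nil => exact absurd rfl hu.symm
  | cons h _ => exact ⟨_, h⟩

lemma sq_entries_nonneg (j k : Fin n) : (0:ℝ) ≤ (G.adjMatrix ℝ * G.adjMatrix ℝ) j k := by
  rw [Matrix.mul_apply]
  exact Finset.sum_nonneg fun l _ => by
    by_cases h : G.Adj j l <;> by_cases h' : G.Adj l k <;> simp [h, h']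

lemma rowsum_sq_eq (j : Fin n) :
    ∑ k, (G.adjMatrix ℝ * G.adjMatrix ℝ) j k = ∑ l ∈ G.neighborFinset j, (G.degree l : ℝ) := by
  simp only [SimpleGraph.adjMatrix_mul_apply]
  rw [Finset.sum_comm]
  refine Finset.sum_congr rfl fun l _ => ?_
  simp only [SimpleGraph.adjMatrix_apply, Finset.sum_boole]
  congr 1
  rw [SimpleGraph.degree, SimpleGraph.neighborFinset_eq_filter]

lemma rowsum_deg_bound (hG : G.Connected) (hn : 2 ≤ n) (hdeg : ∀ w, 1 ≤ G.degree w) (j : Fin n) :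
    ∑ l ∈ G.neighborFinset j, G.degree l + (n - 1) ≤ 2 * G.edgeFinset.card := by
  have hsum := G.sum_degrees_eq_twice_card_edges
  have hsplit : ∑ l ∈ G.neighborFinset j, G.degree l
      + ∑ l ∈ (G.neighborFinset j)ᶜ, G.degree l = 2 * G.edgeFinset.card := by
    rw [← hsum, Finset.sum_add_sum_compl]
  have hj : j ∈ (G.neighborFinset j)ᶜ := by simp
  have hlow : (n - 1) ≤ ∑ l ∈ (G.neighborFinset j)ᶜ, G.degree l := by
    calc n - 1 = ((G.neighborFinset j)ᶜ).card - 1 + G.degree j := by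
          rw [Finset.card_compl, card_neighborFinset_eq_degree]
          simp only [Fintype.card_fin]
          have := G.degree_lt_card_verts j
          simp only [Fintype.card_fin] at this
          omega
      _ ≤ ∑ l ∈ ((G.neighborFinset j)ᶜ).erase j, G.degree l + G.degree j := by
          gcongr
          calc ((G.neighborFinset j)ᶜ).card - 1 = (((G.neighborFinset j)ᶜ).erase j).card := by
                rw [Finset.card_erase_of_mem hj]
            _ = ∑ l ∈ ((G.neighborFinset j)ᶜ).erase j, 1 := by simp
            _ ≤ _ := Finset.sum_le_sum fun l _ => hdeg l
      _ = ∑ l ∈ (G.neighborFinset j)ᶜ, G.degree l := Finset.sum_erase_add _ _ hj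
  omega

lemma trace_sq_graph :
    Matrix.trace (G.adjMatrix ℝ * G.adjMatrix ℝ) = 2 * (G.edgeFinset.card : ℝ) := by
  rw [Matrix.trace]
  have h : ∀ i, (G.adjMatrix ℝ * G.adjMatrix ℝ).diag i = (G.degree i : ℝ) := fun i =>
    G.adjMatrix_mul_self_apply_self i
  rw [Finset.sum_congr rfl fun i _ => h i, ← Nat.cast_sum, G.sum_degrees_eq_twice_card_edges]
  push_cast; ring

lemma card_le_two_m (hdeg : ∀ w, 1 ≤ G.degree w) : n ≤ 2 * G.edgeFinset.card := by
  calc n = ∑ _w : Fin n, 1 := by simp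
    _ ≤ ∑ w, G.degree w := Finset.sum_le_sum fun w _ => hdeg w
    _ = 2 * G.edgeFinset.card := G.sum_degrees_eq_twice_card_edges

lemma sum_ind_deg (u : Fin n) :
    ∑ x, (if G.Adj u x then (1:ℝ) else 0) = (G.degree u : ℝ) := by
  rw [Finset.sum_boole]
  congr 1
  rw [SimpleGraph.degree, SimpleGraph.neighborFinset_eq_filter]

lemma cube_apply (i j : Fin n) : (G.adjMatrix ℝ ^ 3) i j
    = ∑ x, ∑ y, (if G.Adj i x ∧ G.Adj x y ∧ G.Adj y j then (1:ℝ) else 0) := by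
  rw [pow_succ, pow_succ, pow_one, Matrix.mul_apply]
  have h : ∀ y, (G.adjMatrix ℝ * G.adjMatrix ℝ) i y * G.adjMatrix ℝ y j
      = ∑ x, G.adjMatrix ℝ i x * G.adjMatrix ℝ x y * G.adjMatrix ℝ y j := by
    intro y; rw [Matrix.mul_apply, Finset.sum_mul]
  rw [Finset.sum_congr rfl fun y _ => h y, Finset.sum_comm]
  refine Finset.sum_congr rfl fun x _ => Finset.sum_congr rfl fun y _ => ?_
  by_cases h1 : G.Adj i x <;> by_cases h2 : G.Adj x y <;> by_cases h3 : G.Adj y j <;>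
    simp [h1, h2, h3]

lemma walk3_le {i j x y : Fin n} (h1 : G.Adj i x) (h2 : G.Adj x y) (h3 : G.Adj y j) :
    (1:ℝ) ≤ (G.adjMatrix ℝ ^ 3) i j := by
  rw [cube_apply]
  have hinner : (1:ℝ) ≤ ∑ y', (if G.Adj i x ∧ G.Adj x y' ∧ G.Adj y' j then (1:ℝ) else 0) := by
    have := Finset.single_le_sum
      (f := fun y' => (if G.Adj i x ∧ G.Adj x y' ∧ G.Adj y' j then (1:ℝ) else 0))
      (fun y' _ => by positivity) (Finset.mem_univ y)
    simpa [h1, h2, h3] using this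
  calc (1:ℝ) ≤ _ := hinner
    _ ≤ _ := Finset.single_le_sum
      (f := fun x' => ∑ y', (if G.Adj i x' ∧ G.Adj x' y' ∧ G.Adj y' j then (1:ℝ) else 0))
      (fun x' _ => Finset.sum_nonneg fun y' _ => by positivity) (Finset.mem_univ x)

end GraphBasics
section CombAll
open SimpleGraph
section Comb
variable {n : ℕ} {G : SimpleGraph (Fin n)} [DecidableRel G.Adj] {u v : Fin n}

variable (hT : ∀ i x y : Fin n, G.Adj i x → G.Adj x y → G.Adj y i → False)
variable (hP : ∀ i j x y : Fin n, i ≠ j → ¬ G.Adj i j → G.Adj i x → G.Adj x y → G.Adj y j → False)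

include hP in
lemma C1 (huv : G.Adj u v) : ∀ x y : Fin n, G.Adj x y → G.Adj y u → (x = v ∨ G.Adj x v) := by
  intro x y hxy hyu
  by_contra hc
  push_neg at hc
  exact hP x v y u hc.1 hc.2 hxy hyu huv

include hP in
lemma C1' (huv : G.Adj u v) : ∀ x y : Fin n, G.Adj x y → G.Adj y v → (x = u ∨ G.Adj x u) := by
  intro x y hxy hyv
  by_contra hc
  push_neg at hc
  exact hP x u y v hc.1 hc.2 hxy hyv huv.symm

include hP in
lemma C2 (hG : G.Connected) (huv : G.Adj u v) :
    ∀ w : Fin n, G.Adj w u ∨ G.Adj w v ∨ w = u ∨ w = v := by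
  have key : ∀ {a b : Fin n}, G.Walk a b →
      (G.Adj b u ∨ G.Adj b v ∨ b = u ∨ b = v) →
      (G.Adj a u ∨ G.Adj a v ∨ a = u ∨ a = v) := by
    intro a b p
    induction p with
    | nil => exact id
    | @cons a x b hax q ih =>
      intro hb
      rcases ih hb with h | h | h | h
      · rcases C1 hP huv a x hax h with h' | h' <;> tauto
      · rcases C1' hP huv a x hax h with h' | h' <;> tauto
      · subst h; tauto
      · subst h; tauto
  intro w
  obtain ⟨p⟩ := hG.preconnected w u
  exact key p (by tauto)

include hT hP in
lemma C3 (huv : G.Adj u v) : ∀ x y : Fin n, G.Adj x v → G.Adj y u → G.Adj x y := by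
  intro x y hxv hyu
  have hxy : x ≠ y := by
    rintro rfl
    exact hT u v x huv hxv.symm hyu
  by_contra hc
  exact hP x y v u hxy hc hxv huv.symm hyu.symm

include hT hP in
lemma C5 (hG : G.Connected) (huv : G.Adj u v) :
    ∀ x : Fin n, G.Adj x v → G.neighborFinset x = G.neighborFinset u := by
  intro x hxv
  ext w
  simp only [mem_neighborFinset]
  constructor
  · intro hxw
    rcases C2 hP hG huv w with h | h | h | h
    · exact h.symm
    · exact absurd hxv.symm (fun hvx => hT x w v hxw h hvx)
    · subst h; exact absurd hxv.symm (fun hvx => hT x w v hxw huv hvx)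
    · subst h; exact huv
  · intro huw
    exact C3 hT hP huv x w hxv huw.symm

include hT hP in
lemma Cdisj (huv : G.Adj u v) : Disjoint (G.neighborFinset v) (G.neighborFinset u) := by
  rw [Finset.disjoint_left]
  intro w hwv hwu
  rw [mem_neighborFinset] at hwv hwu
  exact hT u v w huv hwv hwu.symm

include hT hP in
lemma Ccover (hG : G.Connected) (huv : G.Adj u v) :
    G.neighborFinset v ∪ G.neighborFinset u = Finset.univ := by
  ext w
  simp only [Finset.mem_union, mem_neighborFinset, Finset.mem_univ, iff_true]
  rcases C2 hP hG huv w with h | h | h | h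
  · right; exact h.symm
  · left; exact h.symm
  · subst h; left; exact huv.symm
  · subst h; right; exact huv

end Comb

section Comb2
variable {n : ℕ} {G : SimpleGraph (Fin n)} [DecidableRel G.Adj] {u v : Fin n}
variable (hT : ∀ i x y : Fin n, G.Adj i x → G.Adj x y → G.Adj y i → False)
variable (hP : ∀ i j x y : Fin n, i ≠ j → ¬ G.Adj i j → G.Adj i x → G.Adj x y → G.Adj y j → False)

include hT hP in
lemma Cchar (hG : G.Connected) (huv : G.Adj u v) (hone : G.degree v = 1) :
    ∀ w w', G.Adj w w' ↔ (w = u ∨ w' = u) ∧ w ≠ w' := by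
  have hNv : G.neighborFinset v = {u} := by
    obtain ⟨a, ha⟩ := Finset.card_eq_one.mp hone
    have : u ∈ G.neighborFinset v := by rw [mem_neighborFinset]; exact huv.symm
    rw [ha] at this ⊢
    rw [Finset.mem_singleton.mp this]
  have hcov := Ccover hT hP hG huv
  have key : ∀ w : Fin n, w ≠ u → G.Adj u w := by
    intro w hw
    have : w ∈ G.neighborFinset v ∪ G.neighborFinset u := by rw [hcov]; exact Finset.mem_univ w
    rcases Finset.mem_union.mp this with h | h
    · rw [hNv, Finset.mem_singleton] at h; exact absurd h hw
    · exact (mem_neighborFinset _ _ _).mp h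
  intro w w'
  constructor
  · intro hww
    refine ⟨?_, hww.ne⟩
    by_contra hc
    push_neg at hc
    exact hT u w w' (key w hc.1) hww (key w' hc.2).symm
  · rintro ⟨h | h, hne⟩
    · subst h; exact key w' hne.symm
    · subst h; exact (key w hne).symm

end Comb2

lemma mkIso {n : ℕ} (hn : 2 ≤ n) {G : SimpleGraph (Fin n)} [DecidableRel G.Adj] (c : Fin n)
    (hc : ∀ w w', G.Adj w w' ↔ (w = c ∨ w' = c) ∧ w ≠ w') :
    Nonempty (G ≃g _root_.starGraph n) := by
  have hz : (0 : ℕ) < n := by omega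
  set z : Fin n := ⟨0, hz⟩ with hzdef
  refine ⟨⟨Equiv.swap c z, ?_⟩⟩
  intro a b
  show (((Equiv.swap c z a : Fin n) : ℕ) = 0 ∨ ((Equiv.swap c z b : Fin n) : ℕ) = 0)
      ∧ Equiv.swap c z a ≠ Equiv.swap c z b ↔ G.Adj a b
  have hval : ∀ w : Fin n, ((Equiv.swap c z w : Fin n) : ℕ) = 0 ↔ w = c := by
    intro w
    rw [show ((Equiv.swap c z w : Fin n) : ℕ) = 0 ↔ Equiv.swap c z w = z from
      ⟨fun h => Fin.ext h, fun h => by rw [h]⟩]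
    rw [Equiv.apply_eq_iff_eq_symm_apply, Equiv.symm_swap, Equiv.swap_apply_right]
  rw [hval a, hval b, (Equiv.swap c z).injective.ne_iff, hc a b]


section Count2
open Matrix
variable {n : ℕ} {G : SimpleGraph (Fin n)} [DecidableRel G.Adj] {u v : Fin n}
variable (hT : ∀ i x y : Fin n, G.Adj i x → G.Adj x y → G.Adj y i → False)
variable (hP : ∀ i j x y : Fin n, i ≠ j → ¬ G.Adj i j → G.Adj i x → G.Adj x y → G.Adj y j → False)

include hT hP in
lemma cube_uv (hG : G.Connected) (huv : G.Adj u v) :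
    (G.adjMatrix ℝ ^ 3) u v = (G.degree u : ℝ) * (G.degree v : ℝ) := by
  rw [cube_apply]
  have key : ∀ x y : Fin n, (if G.Adj u x ∧ G.Adj x y ∧ G.Adj y v then (1:ℝ) else 0)
      = (if G.Adj u x then (1:ℝ) else 0) * (if G.Adj y v then (1:ℝ) else 0) := by
    intro x y
    by_cases h1 : G.Adj u x <;> by_cases h3 : G.Adj y v
    · have h2 : G.Adj x y := (C3 hT hP huv y x h3 h1.symm).symm
      simp [h1, h2, h3]
    all_goals simp [h1, h3]
  rw [Finset.sum_congr rfl fun x _ => Finset.sum_congr rfl fun y _ => key x y]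
  rw [← Finset.sum_mul_sum]
  rw [sum_ind_deg]
  congr 1
  calc ∑ j, (if G.Adj j v then (1:ℝ) else 0)
      = ∑ j, (if G.Adj v j then (1:ℝ) else 0) :=
        Finset.sum_congr rfl fun j _ => if_congr (G.adj_comm j v) rfl rfl
    _ = (G.degree v : ℝ) := sum_ind_deg G v

include hT hP in
lemma Cparts (hG : G.Connected) (huv : G.Adj u v) :
    n = G.degree v + G.degree u ∧
    2 * G.edgeFinset.card = 2 * (G.degree v * G.degree u) := by
  have hdisj := Cdisj hT hP huv
  have hcov := Ccover hT hP hG huv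
  constructor
  · have := Finset.card_union_of_disjoint hdisj
    rw [hcov] at this
    simp only [Finset.card_univ, Fintype.card_fin] at this
    rw [SimpleGraph.card_neighborFinset_eq_degree, SimpleGraph.card_neighborFinset_eq_degree] at this
    exact this
  · rw [← G.sum_degrees_eq_twice_card_edges, ← hcov, Finset.sum_union hdisj]
    have h1 : ∑ x ∈ G.neighborFinset v, G.degree x = G.degree v * G.degree u := by
      rw [Finset.sum_congr rfl (fun x hx => ?_), Finset.sum_const,
        SimpleGraph.card_neighborFinset_eq_degree, smul_eq_mul]
      exact congrArg Finset.card
        (C5 hT hP hG huv x ((SimpleGraph.mem_neighborFinset _ _ _).mp hx).symm)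
    have h2 : ∑ y ∈ G.neighborFinset u, G.degree y = G.degree u * G.degree v := by
      rw [Finset.sum_congr rfl (fun y hy => ?_), Finset.sum_const,
        SimpleGraph.card_neighborFinset_eq_degree, smul_eq_mul]
      exact congrArg Finset.card
        (C5 (fun i x y a b c => hT i x y a b c) hP hG huv.symm y
          ((SimpleGraph.mem_neighborFinset _ _ _).mp hy).symm)
    rw [h1, h2]
    ring
end Count2

section StarFacts
variable {n : ℕ} {G : SimpleGraph (Fin n)} [DecidableRel G.Adj] {c : Fin n}
variable (hc : ∀ w w', G.Adj w w' ↔ (w = c ∨ w' = c) ∧ w ≠ w')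

include hc in
lemma star_nbhd_center : G.neighborFinset c = Finset.univ.erase c := by
  ext x
  simp only [mem_neighborFinset, Finset.mem_erase, Finset.mem_univ, and_true]
  rw [hc]
  constructor
  · rintro ⟨-, hne⟩; exact fun h => hne (h ▸ rfl)
  · intro h; exact ⟨Or.inl rfl, fun hh => h (hh ▸ rfl)⟩

include hc in
lemma star_nbhd_leaf {w : Fin n} (hw : w ≠ c) : G.neighborFinset w = {c} := by
  ext x
  simp only [mem_neighborFinset, Finset.mem_singleton]
  rw [hc]
  constructor
  · rintro ⟨h | h, hne⟩
    · exact absurd h hw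
    · exact h
  · rintro rfl; exact ⟨Or.inr rfl, hw⟩

include hc in
lemma star_edge_count (hn : 2 ≤ n) : 2 * G.edgeFinset.card = 2 * (n - 1) := by
  rw [← G.sum_degrees_eq_twice_card_edges]
  rw [← Finset.add_sum_erase Finset.univ _ (Finset.mem_univ c)]
  have h1 : G.degree c = n - 1 := by
    rw [← card_neighborFinset_eq_degree, star_nbhd_center hc,
      Finset.card_erase_of_mem (Finset.mem_univ c), Finset.card_univ, Fintype.card_fin]
  have h2 : ∑ w ∈ Finset.univ.erase c, G.degree w = n - 1 := by
    rw [Finset.sum_congr rfl fun w hw => ?_]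
    · rw [Finset.sum_const, smul_eq_mul, mul_one,
        Finset.card_erase_of_mem (Finset.mem_univ c), Finset.card_univ, Fintype.card_fin]
    · show G.degree w = 1
      rw [← card_neighborFinset_eq_degree, star_nbhd_leaf hc (Finset.mem_erase.mp hw).1,
        Finset.card_singleton]
  rw [h1, h2]
  omega

include hc in
lemma star_cube (hn : 2 ≤ n) :
    G.adjMatrix ℝ ^ 3 = ((n:ℝ) - 1) • G.adjMatrix ℝ := by
  ext i j
  rw [cube_apply]
  have hcount : ∑ x, (if x ≠ c then (1:ℝ) else 0) = (n:ℝ) - 1 := by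
    rw [Finset.sum_boole]
    have : Finset.filter (fun x => x ≠ c) Finset.univ = Finset.univ.erase c := by
      ext x; simp [Finset.mem_erase, and_comm]
    rw [this, Finset.card_erase_of_mem (Finset.mem_univ c), Finset.card_univ, Fintype.card_fin]
    have : (1:ℕ) ≤ n := by omega
    push_cast [this]
    ring
  rcases eq_or_ne i c with hi | hi <;> rcases eq_or_ne j c with hj | hj
  · -- i = c, j = c
    simp only [hi, hj]
    have key : ∀ x y : Fin n, ¬ (G.Adj c x ∧ G.Adj x y ∧ G.Adj y c) := by
      rintro x y ⟨h1, h2, h3⟩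
      rw [hc] at h1 h2 h3
      have hx : x ≠ c := fun h => h1.2 (h ▸ rfl)
      have hy : y = c := h2.1.resolve_left hx
      exact h3.2 (hy ▸ rfl)
    simp only [Matrix.smul_apply, smul_eq_mul, SimpleGraph.adjMatrix_apply,
      if_neg (G.loopless.irrefl c), mul_zero]
    refine Finset.sum_eq_zero fun x _ => Finset.sum_eq_zero fun y _ => ?_
    rw [if_neg (key x y)]
  · -- i = c, j ≠ c
    simp only [hi]
    have key : ∀ x y : Fin n, (G.Adj c x ∧ G.Adj x y ∧ G.Adj y j) ↔ (x ≠ c ∧ y = c) := by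
      intro x y
      constructor
      · rintro ⟨h1, h2, h3⟩
        rw [hc] at h1 h2 h3
        have hx : x ≠ c := fun h => h1.2 (h ▸ rfl)
        have hy : y = c := h2.1.resolve_left hx
        exact ⟨hx, hy⟩
      · rintro ⟨hx, rfl⟩
        refine ⟨?_, ?_, ?_⟩ <;> rw [hc]
        · exact ⟨Or.inl rfl, fun h => hx (h ▸ rfl)⟩
        · exact ⟨Or.inr rfl, hx⟩
        · exact ⟨Or.inl rfl, fun h => hj (h ▸ rfl)⟩
    have hadj : G.Adj c j := (hc c j).mpr ⟨Or.inl rfl, fun h => hj (h ▸ rfl)⟩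
    calc (∑ x, ∑ y, if G.Adj c x ∧ G.Adj x y ∧ G.Adj y j then (1:ℝ) else 0)
        = ∑ x, (if x ≠ c then (1:ℝ) else 0) := by
          refine Finset.sum_congr rfl fun x _ => ?_
          rw [Finset.sum_congr rfl fun y _ => if_congr (key x y) rfl rfl]
          by_cases hx : x = c <;> simp [hx]
      _ = (n:ℝ) - 1 := hcount
      _ = (((n:ℝ) - 1) • G.adjMatrix ℝ) c j := by
          simp [hadj]
  · -- i ≠ c, j = c
    simp only [hj]
    have key : ∀ x y : Fin n, (G.Adj i x ∧ G.Adj x y ∧ G.Adj y c) ↔ (x = c ∧ y ≠ c) := by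
      intro x y
      constructor
      · rintro ⟨h1, h2, h3⟩
        rw [hc] at h1 h2 h3
        have hx : x = c := h1.1.resolve_left hi
        have hy : y ≠ c := fun h => h3.2 ((h.trans rfl) ▸ rfl)
        exact ⟨hx, hy⟩
      · rintro ⟨rfl, hy⟩
        refine ⟨?_, ?_, ?_⟩ <;> rw [hc]
        · exact ⟨Or.inr rfl, hi⟩
        · exact ⟨Or.inl rfl, fun h => hy (h ▸ rfl)⟩
        · exact ⟨Or.inr rfl, hy⟩
    have hadj : G.Adj i c := (hc i c).mpr ⟨Or.inr rfl, hi⟩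
    calc (∑ x, ∑ y, if G.Adj i x ∧ G.Adj x y ∧ G.Adj y c then (1:ℝ) else 0)
        = ∑ x, (if x = c then ((n:ℝ) - 1) else 0) := by
          refine Finset.sum_congr rfl fun x _ => ?_
          rw [Finset.sum_congr rfl fun y _ => if_congr (key x y) rfl rfl]
          by_cases hx : x = c
          · subst hx
            rw [if_pos rfl]
            calc (∑ y, if (x:Fin n) = x ∧ y ≠ x then (1:ℝ) else 0)
                = ∑ y, (if y ≠ x then (1:ℝ) else 0) :=
                  Finset.sum_congr rfl fun y _ => if_congr (by simp) rfl rfl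
              _ = (n:ℝ) - 1 := hcount
          · simp [hx]
      _ = (n:ℝ) - 1 := by rw [Finset.sum_ite_eq' Finset.univ c, if_pos (Finset.mem_univ c)]
      _ = (((n:ℝ) - 1) • G.adjMatrix ℝ) i c := by
          simp [hadj]
  · -- i ≠ c, j ≠ c
    have key : ∀ x y : Fin n, ¬ (G.Adj i x ∧ G.Adj x y ∧ G.Adj y j) := by
      rintro x y ⟨h1, h2, h3⟩
      rw [hc] at h1 h2 h3
      have hx : x = c := h1.1.resolve_left hi
      have hy : y ≠ c := fun h => h2.2 (hx.trans h.symm)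
      rcases h3.1 with h | h
      · exact hy h
      · exact hj h
    have hnadj : ¬ G.Adj i j := by
      rw [hc]; rintro ⟨h | h, -⟩
      · exact hi h
      · exact hj h
    simp only [Matrix.smul_apply, smul_eq_mul, SimpleGraph.adjMatrix_apply, if_neg hnadj, mul_zero]
    refine Finset.sum_eq_zero fun x _ => Finset.sum_eq_zero fun y _ => ?_
    rw [if_neg (key x y)]
end StarFacts

end CombAll
end PES

/-- For `p > 2` and a connected graph with `m` edges and `n ≥ 2` vertices, equality
`E_p(G) = 2m (2m - n + 1)^((p-2)/2)` holds iff `G` is isomorphic to the star `Sₙ`. -/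
theorem pEnergy_eq_bound_iff_star {n m : ℕ} (hn : 2 ≤ n) (G : SimpleGraph (Fin n))
    [DecidableRel G.Adj] (hG : G.Connected) (hm : G.edgeFinset.card = m) (p : ℝ) (hp : 2 < p) :
    pEnergy G p = 2 * m * (2 * (m : ℝ) - n + 1) ^ ((p - 2) / 2) ↔
      Nonempty (G ≃g starGraph n) := by
  classical
  have hA : (G.adjMatrix ℝ).IsHermitian :=
    (Matrix.conjTranspose_eq_transpose_of_trivial (G.adjMatrix ℝ)).trans G.isSymm_adjMatrix
  have hev : adjEigenvalues G = hA.eigenvalues := rfl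
  have hdeg : ∀ w, 1 ≤ G.degree w := PES.degree_one_le G hG hn
  have hn2m : n ≤ 2 * m := by rw [← hm]; exact PES.card_le_two_m G hdeg
  have hF1 : ∑ i, (adjEigenvalues G i) ^ 2 = 2 * (m : ℝ) := by
    rw [hev, ← PES.trace_sq_eq hA, PES.trace_sq_graph G, hm]
  set t : ℝ := 2 * (m : ℝ) - n + 1 with htdef
  have ht1 : (1:ℝ) ≤ t := by
    have h2m : (n:ℝ) ≤ 2 * m := by exact_mod_cast hn2m
    rw [htdef]; linarith
  have ht0 : (0:ℝ) < t := lt_of_lt_of_le one_pos ht1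
  have hEp : pEnergy G p = ∑ i, ((adjEigenvalues G i) ^ 2) ^ (p / 2) := by
    exact Finset.sum_congr rfl fun i _ => PES.abs_rpow_eq _ p
  have hRHS : (2 * (m:ℝ)) * t ^ ((p - 2) / 2)
      = ∑ i, (adjEigenvalues G i) ^ 2 * t ^ ((p - 2) / 2) := by
    rw [← Finset.sum_mul, hF1]
  constructor
  · intro h
    have hF2 : ∀ i, (adjEigenvalues G i) ^ 2 ≤ t := by
      intro i
      rw [hev]
      refine PES.eig_sq_le_rowsum hA t (fun j => ?_) (PES.sq_entries_nonneg G) i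
      rw [PES.rowsum_sq_eq G j]
      have hb := PES.rowsum_deg_bound G hG hn hdeg j
      rw [hm] at hb
      rw [htdef]
      have hb2 := (Nat.cast_le (α := ℝ)).mpr hb
      push_cast [Nat.cast_sub (by omega : 1 ≤ n)] at hb2
      linarith [hb2]
    have hle : ∀ i ∈ Finset.univ, ((adjEigenvalues G i) ^ 2) ^ (p / 2)
        ≤ (adjEigenvalues G i) ^ 2 * t ^ ((p - 2) / 2) :=
      fun i _ => PES.rpow_le_of_le (sq_nonneg _) (hF2 i) hp
    have hsum_eq : ∑ i, ((adjEigenvalues G i) ^ 2) ^ (p / 2)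
        = ∑ i, (adjEigenvalues G i) ^ 2 * t ^ ((p - 2) / 2) := by
      rw [← hEp, ← hRHS]
      calc pEnergy G p = 2 * (m:ℝ) * t ^ ((p - 2) / 2) := h
        _ = (2 * (m:ℝ)) * t ^ ((p - 2) / 2) := by ring
    have heach := (Finset.sum_eq_sum_iff_of_le hle).mp hsum_eq
    have hcube : ∀ i, hA.eigenvalues i ^ 3 = t * hA.eigenvalues i := by
      intro i
      have hi := PES.rpow_eq_cases (sq_nonneg (adjEigenvalues G i)) (le_of_lt ht0) hp
        (heach i (Finset.mem_univ i))
      rw [hev] at hi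
      rcases hi with h0 | hsq
      · have hz : hA.eigenvalues i = 0 := by
          exact pow_eq_zero_iff (two_ne_zero) |>.mp h0
        rw [hz]; ring
      · calc hA.eigenvalues i ^ 3 = hA.eigenvalues i ^ 2 * hA.eigenvalues i := by ring
          _ = t * hA.eigenvalues i := by rw [hsq]
    have hA3 : G.adjMatrix ℝ ^ 3 = t • G.adjMatrix ℝ := PES.matrix_cube_of_eigen hA t hcube
    have hAdiag : ∀ i j, ¬ G.Adj i j → (G.adjMatrix ℝ ^ 3) i j = 0 := by
      intro i j hij
      rw [hA3, Matrix.smul_apply, smul_eq_mul, SimpleGraph.adjMatrix_apply, if_neg hij, mul_zero]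
    have hT : ∀ i x y : Fin n, G.Adj i x → G.Adj x y → G.Adj y i → False := by
      intro i x y h1 h2 h3
      have hw := PES.walk3_le G h1 h2 h3
      rw [hAdiag i i (G.loopless.irrefl i)] at hw
      linarith
    have hP : ∀ i j x y : Fin n, i ≠ j → ¬ G.Adj i j → G.Adj i x → G.Adj x y → G.Adj y j
        → False := by
      intro i j x y _ hij h1 h2 h3
      have hw := PES.walk3_le G h1 h2 h3
      rw [hAdiag i j hij] at hw
      linarith
    obtain ⟨v, huv⟩ : ∃ v, G.Adj ⟨0, by omega⟩ v :=
      (SimpleGraph.degree_pos_iff_exists_adj _ _).mp (hdeg ⟨0, by omega⟩)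
    set u : Fin n := ⟨0, by omega⟩ with hudef
    have hc_uv := PES.cube_uv hT hP hG huv
    have htab : (G.degree u : ℝ) * (G.degree v : ℝ) = t := by
      have h1 : (G.adjMatrix ℝ ^ 3) u v = t * G.adjMatrix ℝ u v := by
        rw [hA3, Matrix.smul_apply, smul_eq_mul]
      rw [SimpleGraph.adjMatrix_apply, if_pos huv, mul_one] at h1
      rw [← hc_uv, h1]
    obtain ⟨hnab, hmab⟩ := PES.Cparts hT hP hG huv
    rw [hm] at hmab
    have hmab' : m = G.degree v * G.degree u := by omega
    have hzero : ((G.degree v : ℝ) - 1) * ((G.degree u : ℝ) - 1) = 0 := by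
      have hmr : (m:ℝ) = (G.degree v : ℝ) * (G.degree u : ℝ) := by exact_mod_cast hmab'
      have hnr : (n:ℝ) = (G.degree v : ℝ) + (G.degree u : ℝ) := by exact_mod_cast hnab
      have key : (G.degree u : ℝ) * (G.degree v : ℝ)
          = 2 * ((G.degree v : ℝ) * (G.degree u : ℝ))
            - ((G.degree v : ℝ) + (G.degree u : ℝ)) + 1 := by
        rw [htab, htdef, hmr, hnr]
      linear_combination (-1 : ℝ) * key
    rcases mul_eq_zero.mp hzero with h1 | h1
    · have hone : G.degree v = 1 := by
        have := sub_eq_zero.mp h1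
        exact_mod_cast this
      exact PES.mkIso hn u (PES.Cchar hT hP hG huv hone)
    · have hone : G.degree u = 1 := by
        have := sub_eq_zero.mp h1
        exact_mod_cast this
      exact PES.mkIso hn v (PES.Cchar hT hP hG huv.symm hone)
  · rintro ⟨e⟩
    have hz : (0:ℕ) < n := by omega
    set z : Fin n := ⟨0, hz⟩ with hzdef
    set f : Fin n ≃ Fin n := e.toEquiv with hfdef
    set c : Fin n := f.symm z with hcdef
    have hchar : ∀ w w', G.Adj w w' ↔ (w = c ∨ w' = c) ∧ w ≠ w' := by
      intro w w'
      rw [← SimpleGraph.Iso.map_adj_iff e]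
      have hstar : (starGraph n).Adj (e w) (e w') ↔
          ((((e w : Fin n) : ℕ) = 0 ∨ ((e w' : Fin n) : ℕ) = 0) ∧ (e w : Fin n) ≠ e w') :=
        Iff.rfl
      rw [hstar]
      have hval : ∀ w0 : Fin n, ((((e w0 : Fin n) : ℕ)) = 0) ↔ w0 = c := by
        intro w0
        have h1 : (((e w0 : Fin n) : ℕ) = 0) ↔ ((e w0 : Fin n) = z) := by
          simp [Fin.ext_iff, hzdef]
        rw [h1, show (e w0 : Fin n) = f w0 from rfl,
          Equiv.apply_eq_iff_eq_symm_apply, ← hcdef]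
      have hne : ((e w : Fin n) ≠ (e w' : Fin n)) ↔ w ≠ w' := by
        rw [show (e w : Fin n) = f w from rfl, show (e w' : Fin n) = f w' from rfl]
        exact f.injective.ne_iff
      rw [hval w, hval w', hne]
    have hm2 := PES.star_edge_count hchar hn
    rw [hm] at hm2
    have hmn : m = n - 1 := by omega
    have hA3 : G.adjMatrix ℝ ^ 3 = ((n:ℝ) - 1) • G.adjMatrix ℝ := PES.star_cube hchar hn
    have hs0 : (0:ℝ) < (n:ℝ) - 1 := by
      have h2 : (2:ℝ) ≤ n := by exact_mod_cast hn
      linarith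
    have hcases : ∀ i, (adjEigenvalues G i) ^ 2 = 0 ∨ (adjEigenvalues G i) ^ 2 = (n:ℝ) - 1 := by
      intro i
      have h3 := PES.eigen_cube_of_matrix hA ((n:ℝ) - 1) hA3 i
      rw [← hev] at h3
      have hfac : adjEigenvalues G i * ((adjEigenvalues G i) ^ 2 - ((n:ℝ) - 1)) = 0 := by
        ring_nf
        ring_nf at h3
        linarith [h3]
      rcases mul_eq_zero.mp hfac with h0 | h0
      · left; rw [h0]; ring
      · right; linarith [sub_eq_zero.mp h0]
    have hpe : pEnergy G p = 2 * (m:ℝ) * ((n:ℝ) - 1) ^ ((p - 2) / 2) := by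
      rw [hEp,
        Finset.sum_congr rfl fun i _ => PES.rpow_eq_of_cases hs0 hp (hcases i),
        ← Finset.sum_mul, hF1]
    rw [hpe, htdef]
    have hmr : (m:ℝ) = (n:ℝ) - 1 := by
      rw [hmn]
      push_cast [Nat.cast_sub (by omega : 1 ≤ n)]
      ring
    rw [hmr,
      show 2 * ((n:ℝ) - 1) - n + 1 = (n:ℝ) - 1 by ring]
end

section
/- Let G be a connected simple graph with m edges and n ≥ 2 vertices. Then E_4(G) ≤ 2m·(2m − n + 1), with equality if and only if G is isomorphic to the star graph S_n. -/
open Finset MeasureTheory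

set_option linter.unusedSectionVars false

section Spectral
open Matrix

lemma trace_pow_eq {n : ℕ} (A : Matrix (Fin n) (Fin n) ℝ) (hA : A.IsHermitian) (k : ℕ) :
    (A ^ k).trace = ∑ i, hA.eigenvalues i ^ k := by
  set U : Matrix (Fin n) (Fin n) ℝ := (hA.eigenvectorUnitary : Matrix (Fin n) (Fin n) ℝ) with hU
  have hUU : star U * U = 1 := Unitary.coe_star_mul_self hA.eigenvectorUnitary
  have hUU' : U * star U = 1 := Unitary.coe_mul_star_self hA.eigenvectorUnitary
  set D : Matrix (Fin n) (Fin n) ℝ := diagonal (RCLike.ofReal ∘ hA.eigenvalues) with hD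
  have hpow : A ^ k = U * D ^ k * star U := by
    induction k with
    | zero => simpa using hUU'.symm
    | succ k ih =>
      conv_lhs => rw [pow_succ, ih]
      conv_lhs => rw [show A = U * D * star U from hA.spectral_theorem]
      rw [pow_succ]
      calc U * D ^ k * star U * (U * D * star U)
          = U * D ^ k * (star U * U) * D * star U := by
            simp only [Matrix.mul_assoc]
        _ = U * (D ^ k * D) * star U := by rw [hUU]; simp only [Matrix.mul_one, Matrix.mul_assoc]
  rw [hpow, Matrix.trace_mul_cycle, hUU, Matrix.one_mul,
    Matrix.diagonal_pow, Matrix.trace_diagonal]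
  simp

lemma sq_apply {n : ℕ} (G : SimpleGraph (Fin n)) [DecidableRel G.Adj] (u v : Fin n) :
    (G.adjMatrix ℝ * G.adjMatrix ℝ) u v
      = ((G.neighborFinset u ∩ G.neighborFinset v).card : ℝ) := by
  rw [SimpleGraph.adjMatrix_mul_apply]
  have : ∀ w : Fin n, G.adjMatrix ℝ w v = if w ∈ G.neighborFinset v then (1:ℝ) else 0 := by
    intro w
    simp [SimpleGraph.adjMatrix_apply, SimpleGraph.mem_neighborFinset, SimpleGraph.adj_comm]
  simp only [this, Finset.sum_ite_mem, Finset.sum_const, nsmul_eq_mul, mul_one]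

lemma energy_four_eq {n : ℕ} (G : SimpleGraph (Fin n)) [DecidableRel G.Adj] :
    (∑ i, adjEigenvalues G i ^ 4)
      = ((∑ u, ∑ v, ((G.neighborFinset u ∩ G.neighborFinset v).card)^2 : ℕ) : ℝ) := by
  have hH : (G.adjMatrix ℝ).IsHermitian :=
    ((Matrix.conjTranspose_eq_transpose_of_trivial (G.adjMatrix ℝ)).trans G.isSymm_adjMatrix)
  have h1 : (∑ i, adjEigenvalues G i ^ 4) = ((G.adjMatrix ℝ) ^ 4).trace :=
    (trace_pow_eq (G.adjMatrix ℝ) hH 4).symm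
  rw [h1]
  have h2 : (G.adjMatrix ℝ) ^ 4 = (G.adjMatrix ℝ * G.adjMatrix ℝ) * (G.adjMatrix ℝ * G.adjMatrix ℝ) := by
    rw [show (4:ℕ) = 2*2 from rfl, pow_mul, pow_two, pow_two]
  rw [h2, Matrix.trace]
  push_cast
  refine Finset.sum_congr rfl (fun u _ => ?_)
  rw [Matrix.diag_apply, Matrix.mul_apply]
  refine Finset.sum_congr rfl (fun v _ => ?_)
  rw [sq_apply, sq_apply, Finset.inter_comm (G.neighborFinset v), sq]

end Spectral

section Graph
open Finset

section Aux
variable {V : Type*} [Fintype V] [DecidableEq V] {G : SimpleGraph V} [DecidableRel G.Adj]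

/-- confinement: if `N w = {x}` and `N x = {w}` then any vertex with a walk to `w` is `w` or `x`. -/
lemma walk_confine {w x : V} (hw : G.neighborFinset w = {x}) (hx : G.neighborFinset x = {w}) :
    ∀ v (_ : G.Walk v w), v = w ∨ v = x := by
  intro v p
  induction p with
  | nil => exact Or.inl rfl
  | @cons a b _ h p ih =>
    rcases ih hw hx with rfl | rfl
    · right
      have : a ∈ G.neighborFinset b := by rw [SimpleGraph.mem_neighborFinset]; exact h.symm
      rw [hw] at this; exact Finset.mem_singleton.mp this
    · left
      have : a ∈ G.neighborFinset b := by rw [SimpleGraph.mem_neighborFinset]; exact h.symm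
      rw [hx] at this; exact Finset.mem_singleton.mp this

lemma degree_pos_of_connected_s5 (hG : G.Connected) [Nontrivial V] (v : V) : 0 < G.degree v := by
  obtain ⟨w, hw⟩ := exists_ne v
  obtain ⟨p⟩ := hG.preconnected v w
  rw [G.degree_pos_iff_exists_adj]
  cases p with
  | nil => exact absurd rfl hw
  | cons h p => exact ⟨_, h⟩

end Aux

section StarLike
variable {n : ℕ} (G : SimpleGraph (Fin n)) [DecidableRel G.Adj]

def StarLike (c0 : Fin n) : Prop :=
  G.neighborFinset c0 = Finset.univ.erase c0 ∧ ∀ v, v ≠ c0 → G.neighborFinset v = {c0}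

variable {G}

lemma iso_of_starLike (hn : 2 ≤ n) {c0 : Fin n} (h : StarLike G c0) :
    Nonempty (G ≃g starGraph n) := by
  obtain ⟨hN0, hN1⟩ := h
  set z : Fin n := ⟨0, by omega⟩ with hz
  have hzval : ∀ a : Fin n, ((a : ℕ) = 0) ↔ a = z := by
    intro a; rw [Fin.ext_iff]
  have hswap : ∀ u : Fin n, Equiv.swap c0 z u = z ↔ u = c0 := by
    intro u
    have h1 : Equiv.swap c0 z c0 = z := Equiv.swap_apply_left c0 z
    exact ⟨fun h => (Equiv.swap c0 z).injective (h.trans h1.symm), fun h => h ▸ h1⟩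
  have hadj : ∀ u v, G.Adj u v ↔ (u = c0 ∨ v = c0) ∧ u ≠ v := by
    intro u v
    constructor
    · intro h
      refine ⟨?_, h.ne⟩
      by_contra hc
      push_neg at hc
      have : v ∈ G.neighborFinset u := (SimpleGraph.mem_neighborFinset _ _ _).mpr h
      rw [hN1 u hc.1] at this
      exact hc.2 (Finset.mem_singleton.mp this)
    · rintro ⟨hc, hne⟩
      rcases hc with rfl | rfl
      · have : v ∈ G.neighborFinset u := by
          rw [hN0]; exact Finset.mem_erase.mpr ⟨fun hv => hne hv.symm, Finset.mem_univ _⟩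
        exact (SimpleGraph.mem_neighborFinset _ _ _).mp this
      · have : u ∈ G.neighborFinset v := by
          rw [hN0]; exact Finset.mem_erase.mpr ⟨hne, Finset.mem_univ _⟩
        exact ((SimpleGraph.mem_neighborFinset _ _ _).mp this).symm
  refine ⟨⟨Equiv.swap c0 z, ?_⟩⟩
  intro u v
  show ((((Equiv.swap c0 z) u : ℕ) = 0 ∨ ((Equiv.swap c0 z) v : ℕ) = 0)
      ∧ (Equiv.swap c0 z) u ≠ (Equiv.swap c0 z) v) ↔ G.Adj u v
  rw [hzval, hzval, hswap, hswap, hadj u v]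
  simp [ne_eq, (Equiv.swap c0 z).injective.eq_iff]

lemma starLike_of_iso (hn : 2 ≤ n) (f : G ≃g starGraph n) : ∃ c0, StarLike G c0 := by
  set z : Fin n := ⟨0, by omega⟩ with hz
  have hzval : ∀ a : Fin n, ((a : ℕ) = 0) ↔ a = z := fun a => by rw [Fin.ext_iff]
  set c0 := f.symm z with hc0
  have hfz : f c0 = z := f.apply_symm_apply z
  have hadj : ∀ u v, G.Adj u v ↔ (f u = z ∨ f v = z) ∧ u ≠ v := by
    intro u v
    rw [← f.map_rel_iff]
    show ((((f u : Fin n) : ℕ) = 0 ∨ ((f v : Fin n) : ℕ) = 0) ∧ (f u) ≠ (f v)) ↔ _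
    rw [hzval, hzval]
    simp [ne_eq, f.toEquiv.injective.eq_iff]
  have hfzz : ∀ u, f u = z ↔ u = c0 := by
    intro u
    constructor
    · intro h; rw [hc0, ← h]; exact (f.toEquiv.symm_apply_apply u).symm
    · rintro rfl; exact hfz
  refine ⟨c0, ?_, ?_⟩
  · ext w
    rw [SimpleGraph.mem_neighborFinset, hadj, Finset.mem_erase]
    simp only [hfzz, Finset.mem_univ, and_true]
    aesop
  · intro v hv
    ext w
    rw [SimpleGraph.mem_neighborFinset, hadj, Finset.mem_singleton]
    simp only [hfzz]
    constructor
    · rintro ⟨h1 | h1, h2⟩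
      · exact absurd h1 hv
      · exact h1
    · rintro rfl
      exact ⟨Or.inr rfl, fun h => hv h⟩  -- may fail; aesop fallback

end StarLike

section Combo
variable {n m : ℕ} (G : SimpleGraph (Fin n)) [DecidableRel G.Adj]

theorem combo (hn : 2 ≤ n) (hG : G.Connected) (hm : G.edgeFinset.card = m) :
    n ≤ 2*m+1 ∧
    (∑ u, ∑ v, ((G.neighborFinset u ∩ G.neighborFinset v).card)^2) ≤ 2*m*(2*m+1-n) ∧
    ((∑ u, ∑ v, ((G.neighborFinset u ∩ G.neighborFinset v).card)^2) = 2*m*(2*m+1-n) ↔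
      ∃ c0, StarLike G c0) := by
  haveI : Nontrivial (Fin n) :=
    ⟨⟨⟨0, by omega⟩, ⟨1, by omega⟩, by simp [Fin.ext_iff]⟩⟩
  have hd : ∀ v, 0 < G.degree v := fun v => degree_pos_of_connected_s5 hG v
  have hdsum : ∑ v, G.degree v = 2*m := by
    rw [SimpleGraph.sum_degrees_eq_twice_card_edges, hm]
  have hcle : ∀ u v : Fin n,
      (G.neighborFinset u ∩ G.neighborFinset v).card ≤ G.degree u := fun u v =>
    (Finset.card_le_card Finset.inter_subset_left).trans
      (le_of_eq (SimpleGraph.card_neighborFinset_eq_degree G u))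
  have hcsum : ∀ u : Fin n, ∑ v, (G.neighborFinset u ∩ G.neighborFinset v).card
      = ∑ w ∈ G.neighborFinset u, G.degree w := by
    intro u
    have h1 : ∀ v : Fin n, (G.neighborFinset u ∩ G.neighborFinset v).card
        = ∑ w ∈ G.neighborFinset u, if w ∈ G.neighborFinset v then 1 else 0 := by
      intro v
      rw [← Finset.filter_mem_eq_inter, Finset.card_filter]
    simp only [h1]
    rw [Finset.sum_comm]
    refine Finset.sum_congr rfl (fun w hw => ?_)
    have h2 : ∀ v : Fin n, (w ∈ G.neighborFinset v) ↔ (v ∈ G.neighborFinset w) := by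
      intro v; simp [SimpleGraph.mem_neighborFinset, SimpleGraph.adj_comm]
    simp only [h2]
    rw [← Finset.card_filter, Finset.filter_mem_eq_inter, Finset.univ_inter]
    rfl
  -- partition facts
  have hpart : ∀ u : Fin n,
      ((∑ w ∈ G.neighborFinset u, G.degree w) + n ≤ 2*m+1) ∧
      ((∑ w ∈ G.neighborFinset u, G.degree w) + n = 2*m+1 →
        ∀ w, w ≠ u → ¬ G.Adj u w → G.degree w = 1) := by
    intro u
    have hAu : u ∉ G.neighborFinset u := SimpleGraph.notMem_neighborFinset_self G u
    have e1 : (∑ w ∈ Finset.univ \ insert u (G.neighborFinset u), G.degree w)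
        + (G.degree u + ∑ w ∈ G.neighborFinset u, G.degree w) = 2*m := by
      have h0 : G.degree u + ∑ w ∈ G.neighborFinset u, G.degree w
          = ∑ w ∈ insert u (G.neighborFinset u), G.degree w :=
        (Finset.sum_insert (f := fun w => G.degree w) hAu).symm
      rw [h0, Finset.sum_sdiff (Finset.subset_univ _), hdsum]
    have e2 : (Finset.univ \ insert u (G.neighborFinset u)).card + (G.degree u + 1) = n := by
      have h4 := Finset.card_sdiff_add_card_eq_card
        (Finset.subset_univ (insert u (G.neighborFinset u)))
      rw [Finset.card_univ, Fintype.card_fin, Finset.card_insert_of_notMem hAu] at h4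
      have h5 : (G.neighborFinset u).card = G.degree u :=
        SimpleGraph.card_neighborFinset_eq_degree G u
      omega
    have e3 : (Finset.univ \ insert u (G.neighborFinset u)).card
        ≤ ∑ w ∈ Finset.univ \ insert u (G.neighborFinset u), G.degree w := by
      rw [Finset.card_eq_sum_ones]
      exact Finset.sum_le_sum (fun w _ => hd w)
    constructor
    · omega
    · intro heq w hwu hwadj
      have hsum : ∑ w ∈ Finset.univ \ insert u (G.neighborFinset u), (1:ℕ)
          = ∑ w ∈ Finset.univ \ insert u (G.neighborFinset u), G.degree w := by
        rw [← Finset.card_eq_sum_ones]; omega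
      have hall := (Finset.sum_eq_sum_iff_of_le (fun w _ => hd w)).mp hsum
      have hwR : w ∈ Finset.univ \ insert u (G.neighborFinset u) := by
        rw [Finset.mem_sdiff, Finset.mem_insert]
        refine ⟨Finset.mem_univ _, ?_⟩
        push_neg
        exact ⟨hwu, fun hmem => hwadj ((SimpleGraph.mem_neighborFinset _ _ _).mp hmem)⟩
      exact (hall w hwR).symm
  -- quadratic per-u facts
  have hq : ∀ u : Fin n,
      ((∑ v, ((G.neighborFinset u ∩ G.neighborFinset v).card)^2)
        ≤ G.degree u * ∑ w ∈ G.neighborFinset u, G.degree w) ∧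
      ((∑ v, ((G.neighborFinset u ∩ G.neighborFinset v).card)^2)
          = G.degree u * (∑ w ∈ G.neighborFinset u, G.degree w) →
        ∀ v, (G.neighborFinset u ∩ G.neighborFinset v).card = 0 ∨
          (G.neighborFinset u ∩ G.neighborFinset v).card = G.degree u) := by
    intro u
    have hpt : ∀ v : Fin n, ((G.neighborFinset u ∩ G.neighborFinset v).card)^2
        ≤ G.degree u * (G.neighborFinset u ∩ G.neighborFinset v).card := by
      intro v
      rw [sq]
      exact Nat.mul_le_mul_right _ (hcle u v)
    have hsumr : ∑ v, G.degree u * (G.neighborFinset u ∩ G.neighborFinset v).card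
        = G.degree u * ∑ w ∈ G.neighborFinset u, G.degree w := by
      rw [← Finset.mul_sum, hcsum]
    constructor
    · calc ∑ v, ((G.neighborFinset u ∩ G.neighborFinset v).card)^2
          ≤ ∑ v, G.degree u * (G.neighborFinset u ∩ G.neighborFinset v).card :=
            Finset.sum_le_sum (fun v _ => hpt v)
        _ = _ := hsumr
    · intro heq v
      have h6 : ∑ v, ((G.neighborFinset u ∩ G.neighborFinset v).card)^2
          = ∑ v, G.degree u * (G.neighborFinset u ∩ G.neighborFinset v).card := by
        rw [hsumr]; exact heq
      have hall := (Finset.sum_eq_sum_iff_of_le (fun v _ => hpt v)).mp h6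
      have hv := hall v (Finset.mem_univ v)
      rcases Nat.eq_zero_or_pos ((G.neighborFinset u ∩ G.neighborFinset v).card) with h0 | hpos
      · exact Or.inl h0
      · right
        rw [sq] at hv
        exact Nat.eq_of_mul_eq_mul_right hpos hv
  have hglob : ∀ u : Fin n, (∑ v, ((G.neighborFinset u ∩ G.neighborFinset v).card)^2)
      + G.degree u * n ≤ G.degree u * (2*m+1) := by
    intro u
    have h1 := (hq u).1
    have h2 : G.degree u * ((∑ w ∈ G.neighborFinset u, G.degree w) + n)
        ≤ G.degree u * (2*m+1) := Nat.mul_le_mul_left _ (hpart u).1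
    rw [Nat.mul_add] at h2
    omega
  have hsum1 : ∑ u, ((∑ v, ((G.neighborFinset u ∩ G.neighborFinset v).card)^2)
      + G.degree u * n)
      = (∑ u, ∑ v, ((G.neighborFinset u ∩ G.neighborFinset v).card)^2) + 2*m*n := by
    rw [Finset.sum_add_distrib, ← Finset.sum_mul, hdsum]
  have hsum2 : ∑ u : Fin n, G.degree u * (2*m+1) = 2*m*(2*m+1) := by
    rw [← Finset.sum_mul, hdsum]
  have hTle : (∑ u, ∑ v, ((G.neighborFinset u ∩ G.neighborFinset v).card)^2)
      + 2*m*n ≤ 2*m*(2*m+1) := by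
    rw [← hsum1, ← hsum2]
    exact Finset.sum_le_sum (fun u _ => hglob u)
  have hn2m : n ≤ 2*m+1 := by
    have := (hpart ⟨0, by omega⟩).1
    omega
  have hkey : 2*m*(2*m+1-n) + 2*m*n = 2*m*(2*m+1) := by
    rw [← Nat.mul_add, Nat.sub_add_cancel hn2m]
  refine ⟨hn2m, by omega, ?_, ?_⟩
  · -- equality → StarLike
    intro heq
    have heq' : (∑ u, ∑ v, ((G.neighborFinset u ∩ G.neighborFinset v).card)^2)
        + 2*m*n = 2*m*(2*m+1) := by omega
    have hpw : ∀ u : Fin n, (∑ v, ((G.neighborFinset u ∩ G.neighborFinset v).card)^2)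
        + G.degree u * n = G.degree u * (2*m+1) := by
      have h7 := (Finset.sum_eq_sum_iff_of_le
        (fun u (_ : u ∈ Finset.univ) => hglob u)).mp (by rw [hsum1, hsum2]; exact heq')
      exact fun u => h7 u (Finset.mem_univ u)
    have hSeq : ∀ u : Fin n,
        ((∑ v, ((G.neighborFinset u ∩ G.neighborFinset v).card)^2)
          = G.degree u * ∑ w ∈ G.neighborFinset u, G.degree w) ∧
        (∑ w ∈ G.neighborFinset u, G.degree w) + n = 2*m+1 := by
      intro u
      have h1 := (hq u).1
      have h2 : G.degree u * ((∑ w ∈ G.neighborFinset u, G.degree w) + n)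
          ≤ G.degree u * (2*m+1) := Nat.mul_le_mul_left _ (hpart u).1
      have h3 := hpw u
      rw [Nat.mul_add] at h2
      constructor
      · omega
      · have h4 : G.degree u * ((∑ w ∈ G.neighborFinset u, G.degree w) + n)
            = G.degree u * (2*m+1) := by rw [Nat.mul_add]; omega
        exact Nat.eq_of_mul_eq_mul_left (hd u) h4
    have C1 : ∀ u w, w ≠ u → ¬ G.Adj u w → G.degree w = 1 := by
      intro u w hwu hadj
      exact (hpart u).2 (hSeq u).2 w hwu hadj
    have C2 : ∀ u v : Fin n, (G.neighborFinset u ∩ G.neighborFinset v).card = 0 ∨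
        (G.neighborFinset u ∩ G.neighborFinset v).card = G.degree u :=
      fun u v => (hq u).2 (hSeq u).1 v
    -- find universal vertex
    have huniv : ∃ c0 : Fin n, ∀ v, v ≠ c0 → G.Adj c0 v := by
      by_contra hcon
      push_neg at hcon
      obtain ⟨u, _, hmax⟩ := Finset.exists_max_image Finset.univ (fun v => G.degree v)
        ⟨⟨0, by omega⟩, Finset.mem_univ _⟩
      obtain ⟨w, hwne, hwnadj⟩ := hcon u
      rcases Nat.lt_or_ge (G.degree u) 2 with hdu | hdu
      · -- max degree 1
        have hdu1 : G.degree u = 1 := by have := hd u; omega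
        obtain ⟨x, hNx⟩ := Finset.card_eq_one.mp
          ((SimpleGraph.card_neighborFinset_eq_degree G u).trans hdu1)
        have hxadj : G.Adj u x :=
          (SimpleGraph.mem_neighborFinset _ _ _).mp (hNx ▸ Finset.mem_singleton_self x)
        have hdx1 : G.degree x = 1 :=
          le_antisymm (hdu1 ▸ hmax x (Finset.mem_univ x)) (hd x)
        obtain ⟨y, hNy⟩ := Finset.card_eq_one.mp
          ((SimpleGraph.card_neighborFinset_eq_degree G x).trans hdx1)
        have hyu : y = u := by
          have h8 : u ∈ G.neighborFinset x := (SimpleGraph.mem_neighborFinset _ _ _).mpr hxadj.symm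
          rw [hNy] at h8
          exact (Finset.mem_singleton.mp h8).symm
        rw [hyu] at hNy
        have hwx : w ≠ x := by
          rintro rfl
          exact hwnadj hxadj
        obtain ⟨p⟩ := hG.preconnected w u
        rcases walk_confine hNx hNy w p with h | h
        · exact hwne h
        · exact hwx h
      · -- degree u ≥ 2
        have hdw1 : G.degree w = 1 := C1 u w hwne hwnadj
        obtain ⟨x, hNw⟩ := Finset.card_eq_one.mp
          ((SimpleGraph.card_neighborFinset_eq_degree G w).trans hdw1)
        have hxw : G.Adj w x :=
          (SimpleGraph.mem_neighborFinset _ _ _).mp (hNw ▸ Finset.mem_singleton_self x)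
        have hxu : x ≠ u := by
          rintro rfl
          exact hwnadj hxw.symm
        by_cases hux : G.Adj u x
        · have hcm : (G.neighborFinset u ∩ G.neighborFinset w).card = 1 := by
            have hx : x ∈ G.neighborFinset u := (SimpleGraph.mem_neighborFinset _ _ _).mpr hux
            rw [hNw, Finset.inter_singleton_of_mem hx, Finset.card_singleton]
          rcases C2 u w with h | h <;> omega
        · have hdx1 : G.degree x = 1 := C1 u x hxu hux
          obtain ⟨y, hNx⟩ := Finset.card_eq_one.mp
            ((SimpleGraph.card_neighborFinset_eq_degree G x).trans hdx1)
          have hyw : y = w := by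
            have h9 : w ∈ G.neighborFinset x :=
              (SimpleGraph.mem_neighborFinset _ _ _).mpr hxw.symm
            rw [hNx] at h9
            exact (Finset.mem_singleton.mp h9).symm
          rw [hyw] at hNx
          obtain ⟨p⟩ := hG.preconnected u w
          rcases walk_confine hNw hNx u p with h | h
          · exact hwne h.symm
          · exact hxu h.symm
    obtain ⟨c0, hc0⟩ := huniv
    have hN0 : G.neighborFinset c0 = Finset.univ.erase c0 := by
      ext v
      rw [SimpleGraph.mem_neighborFinset, Finset.mem_erase]
      constructor
      · intro h
        exact ⟨h.ne', Finset.mem_univ _⟩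
      · intro h
        exact hc0 v h.1
    have hdeg1 : ∀ v, v ≠ c0 → G.degree v = 1 := by
      intro v hv
      have hc0v : c0 ∈ G.neighborFinset v :=
        (SimpleGraph.mem_neighborFinset _ _ _).mpr (hc0 v hv).symm
      have hcv : (G.neighborFinset v ∩ G.neighborFinset c0).card = G.degree v - 1 := by
        rw [hN0]
        have h10 : G.neighborFinset v ∩ Finset.univ.erase c0
            = (G.neighborFinset v).erase c0 := by
          ext w
          simp only [Finset.mem_inter, Finset.mem_erase, Finset.mem_univ, and_true]
          tauto
        rw [h10, Finset.card_erase_of_mem hc0v, SimpleGraph.card_neighborFinset_eq_degree]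
      have := hd v
      rcases C2 v c0 with h | h <;> omega
    refine ⟨c0, hN0, ?_⟩
    intro v hv
    obtain ⟨y, hNy⟩ := Finset.card_eq_one.mp
      ((SimpleGraph.card_neighborFinset_eq_degree G v).trans (hdeg1 v hv))
    have hc0v : c0 ∈ G.neighborFinset v :=
      (SimpleGraph.mem_neighborFinset _ _ _).mpr (hc0 v hv).symm
    rw [hNy] at hc0v ⊢
    rw [Finset.mem_singleton.mp hc0v]
  · -- StarLike → equality
    rintro ⟨c0, hN0, hN1⟩
    have hcard_erase : (Finset.univ.erase c0).card = n - 1 := by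
      rw [Finset.card_erase_of_mem (Finset.mem_univ c0), Finset.card_univ, Fintype.card_fin]
    have hd0 : G.degree c0 = n - 1 := by
      rw [← SimpleGraph.card_neighborFinset_eq_degree, hN0, hcard_erase]
    have hdv : ∀ v, v ≠ c0 → G.degree v = 1 := by
      intro v hv
      rw [← SimpleGraph.card_neighborFinset_eq_degree, hN1 v hv, Finset.card_singleton]
    have hmn : m = n - 1 := by
      have h2m : G.degree c0 + ∑ v ∈ Finset.univ.erase c0, G.degree v = 2*m :=
        (Finset.add_sum_erase Finset.univ (fun v => G.degree v) (Finset.mem_univ c0)).trans hdsum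
      rw [Finset.sum_congr rfl (fun v hv => hdv v (Finset.mem_erase.mp hv).1)] at h2m
      rw [Finset.sum_const, hcard_erase, smul_eq_mul, mul_one, hd0] at h2m
      omega
    have hcc : (G.neighborFinset c0 ∩ G.neighborFinset c0).card = n - 1 := by
      rw [hN0, Finset.inter_self, hcard_erase]
    have hc0v : ∀ v, v ≠ c0 → (G.neighborFinset c0 ∩ G.neighborFinset v).card = 0 := by
      intro v hv
      rw [hN0, hN1 v hv, Finset.card_eq_zero]
      ext w
      simp only [Finset.mem_inter, Finset.mem_erase, Finset.mem_univ, and_true,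
        Finset.mem_singleton, Finset.notMem_empty, iff_false, not_and]
      rintro h rfl
      exact h rfl
    have hvc0 : ∀ v, v ≠ c0 → (G.neighborFinset v ∩ G.neighborFinset c0).card = 0 := by
      intro v hv
      rw [Finset.inter_comm]
      exact hc0v v hv
    have hvv : ∀ u v : Fin n, u ≠ c0 → v ≠ c0 →
        (G.neighborFinset u ∩ G.neighborFinset v).card = 1 := by
      intro u v hu hv
      rw [hN1 u hu, hN1 v hv, Finset.inter_self, Finset.card_singleton]
    have hrow0 : ∑ v, ((G.neighborFinset c0 ∩ G.neighborFinset v).card)^2 = (n-1)^2 := by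
      rw [← Finset.add_sum_erase _ _ (Finset.mem_univ c0), hcc]
      rw [Finset.sum_congr rfl (fun v hv => by
        rw [hc0v v (Finset.mem_erase.mp hv).1]), Finset.sum_const]
      simp
    have hrowu : ∀ u, u ≠ c0 →
        ∑ v, ((G.neighborFinset u ∩ G.neighborFinset v).card)^2 = n - 1 := by
      intro u hu
      rw [← Finset.add_sum_erase _ _ (Finset.mem_univ c0), hvc0 u hu]
      rw [Finset.sum_congr rfl (fun v hv => by
        rw [hvv u v hu (Finset.mem_erase.mp hv).1]), Finset.sum_const, hcard_erase]
      simp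
    have hTval : (∑ u, ∑ v, ((G.neighborFinset u ∩ G.neighborFinset v).card)^2)
        = (n-1)^2 + (n-1)*(n-1) := by
      rw [← Finset.add_sum_erase _ _ (Finset.mem_univ c0), hrow0]
      rw [Finset.sum_congr rfl (fun u hu => hrowu u (Finset.mem_erase.mp hu).1),
        Finset.sum_const, hcard_erase]
      simp [sq]
    subst hmn
    have h1 : 2*(n-1)+1-n = n-1 := by omega
    rw [hTval, h1, sq]
    ring
end Combo

end Graph

/-- For a connected graph with `m` edges and `n ≥ 2` vertices,
`E₄(G) ≤ 2m(2m - n + 1)`, with equality iff `G` is isomorphic to the star `Sₙ`. -/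
theorem fourEnergy_le {n m : ℕ} (hn : 2 ≤ n) (G : SimpleGraph (Fin n)) [DecidableRel G.Adj]
    (hG : G.Connected) (hm : G.edgeFinset.card = m) :
    (∑ i, adjEigenvalues G i ^ 4) ≤ 2 * m * (2 * (m : ℝ) - n + 1) ∧
      ((∑ i, adjEigenvalues G i ^ 4) = 2 * m * (2 * (m : ℝ) - n + 1) ↔
        Nonempty (G ≃g starGraph n)) := by
  obtain ⟨hn2m, hle, hiff⟩ := combo G hn hG hm
  have hE := energy_four_eq G
  have hcast : 2 * (m:ℝ) * (2 * (m:ℝ) - n + 1) = ((2*m*(2*m+1-n) : ℕ) : ℝ) := by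
    rw [Nat.cast_mul, Nat.cast_sub hn2m]
    push_cast
    ring
  constructor
  · rw [hE, hcast]
    exact_mod_cast hle
  · rw [hE, hcast, Nat.cast_inj, hiff]
    constructor
    · rintro ⟨c0, hsl⟩
      exact iso_of_starLike hn hsl
    · rintro ⟨f⟩
      exact starLike_of_iso hn f
end

section
/- Let G be a connected simple graph on n ≥ 2 vertices and let f(z) be the characteristic polynomial of its adjacency matrix, regarded as a complex polynomial. Then for every real x ≥ 0, |f(ix)| ≥ x^{n−2}·(x² + n − 1), where i = √−1. Equivalently, |f(ix)| ≥ |g(ix)| where g(z) = z^n − (n−1)z^{n−2} is the characteristic polynomial of the star S_n. -/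
open Finset MeasureTheory

section GKEAux

open Matrix Polynomial

variable {n : ℕ}

lemma gke_smul_one_add_diag (t : ℝ) (v : Fin n → ℝ) :
    t • (1 : Matrix (Fin n) (Fin n) ℝ) + diagonal v = diagonal (fun i => t + v i) := by
  ext i j
  by_cases h : i = j <;> simp [h, Matrix.one_apply, diagonal_apply]

lemma gke_conj_trace (U : Matrix (Fin n) (Fin n) ℝ) (h2 : star U * U = 1) (v : Fin n → ℝ) :
    trace (U * diagonal v * star U) = ∑ i, v i := by
  rw [trace_mul_comm, ← Matrix.mul_assoc, h2, Matrix.one_mul, trace_diagonal]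

lemma gke_conj_det (U : Matrix (Fin n) (Fin n) ℝ) (h2 : star U * U = 1) (v : Fin n → ℝ)
    (t : ℝ) :
    det (t • (1 : Matrix (Fin n) (Fin n) ℝ) + U * diagonal v * star U) = ∏ i, (t + v i) := by
  have h1 : U * star U = 1 := mul_eq_one_comm.mp h2
  have hsmul : t • (1 : Matrix (Fin n) (Fin n) ℝ) + U * diagonal v * star U
      = U * (t • (1 : Matrix (Fin n) (Fin n) ℝ) + diagonal v) * star U := by
    rw [Matrix.mul_add, Matrix.add_mul, Matrix.mul_smul, Matrix.mul_one, Matrix.smul_mul, h1]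
  rw [hsmul, gke_smul_one_add_diag, det_mul, det_mul]
  have hdU : det (star U) * det U = 1 := by rw [← det_mul, h2, det_one]
  rw [det_diagonal]
  linear_combination (∏ i, (t + v i)) * hdU

lemma gke_conj_mul (U : Matrix (Fin n) (Fin n) ℝ) (h2 : star U * U = 1) (v w : Fin n → ℝ) :
    (U * diagonal v * star U) * (U * diagonal w * star U)
      = U * diagonal (fun i => v i * w i) * star U := by
  rw [← diagonal_mul_diagonal]
  simp only [Matrix.mul_assoc]
  rw [← Matrix.mul_assoc (star U) U, h2, Matrix.one_mul]

lemma gke_card_edges (G : SimpleGraph (Fin n)) [DecidableRel G.Adj]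
    (hn : 2 ≤ n) (hG : G.Connected) : n - 1 ≤ G.edgeFinset.card := by
  have hn0 : 0 < n := by omega
  set v0 : Fin n := ⟨0, hn0⟩
  have claim : ∀ u : Fin n, ∃ w : Fin n, u ≠ v0 →
      G.Adj u w ∧ G.dist w v0 < G.dist u v0 := by
    intro u
    by_cases h : u = v0
    · exact ⟨u, fun hu => absurd h hu⟩
    · obtain ⟨p, hp⟩ := (hG.preconnected u v0).exists_walk_length_eq_dist
      have hpos : 0 < G.dist u v0 := (hG.preconnected u v0).pos_dist_of_ne h
      cases p with
      | nil => rw [← hp] at hpos; simp at hpos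
      | cons ha q =>
        rename_i b
        refine ⟨b, fun _ => ⟨ha, ?_⟩⟩
        have := SimpleGraph.dist_le q
        simp only [SimpleGraph.Walk.length_cons] at hp
        omega
  choose w hw using claim
  have hinj : Set.InjOn (fun u => s(u, w u)) (univ.erase v0 : Finset (Fin n)) := by
    intro u1 h1 u2 h2 heq
    simp only [Finset.coe_erase, Set.mem_diff, Set.mem_singleton_iff] at h1 h2
    have h1' : u1 ≠ v0 := h1.2
    have h2' : u2 ≠ v0 := h2.2
    rw [Sym2.eq_iff] at heq
    rcases heq with ⟨rfl, _⟩ | ⟨e1, e2⟩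
    · rfl
    · exfalso
      have a := (hw u1 h1').2
      have b := (hw u2 h2').2
      rw [e2] at a
      rw [← e1] at b
      omega
  have hmap : ∀ u ∈ (univ.erase v0 : Finset (Fin n)), s(u, w u) ∈ G.edgeFinset := by
    intro u hu
    rw [SimpleGraph.mem_edgeFinset]
    exact (hw u (Finset.ne_of_mem_erase hu)).1
  have := Finset.card_le_card_of_injOn _ hmap hinj
  simpa using this

lemma gke_trace_bounds (hn : 2 ≤ n) (G : SimpleGraph (Fin n)) [DecidableRel G.Adj]
    (hG : G.Connected) :
    2*((n:ℝ)-1) ≤ Matrix.trace (G.adjMatrix ℝ * G.adjMatrix ℝ) ∧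
    Matrix.trace ((G.adjMatrix ℝ * G.adjMatrix ℝ) * (G.adjMatrix ℝ * G.adjMatrix ℝ)) ≤
      Matrix.trace (G.adjMatrix ℝ * G.adjMatrix ℝ) *
        (Matrix.trace (G.adjMatrix ℝ * G.adjMatrix ℝ) - ((n:ℝ)-1)) := by
  set A := G.adjMatrix ℝ with hAdef
  set r : Fin n → ℝ := fun u => ∑ w, A u w with hrdef
  set T : ℝ := ∑ u, r u with hTdef
  have hA01 : ∀ u v, A u v = 0 ∨ A u v = 1 := by
    intro u v
    by_cases h : G.Adj u v <;> simp [hAdef, SimpleGraph.adjMatrix_apply, h]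
  have hA0 : ∀ u v, 0 ≤ A u v := by
    intro u v; rcases hA01 u v with h | h <;> simp [h]
  have hA1 : ∀ u v, A u v ≤ 1 := by
    intro u v; rcases hA01 u v with h | h <;> simp [h]
  have hsymm : ∀ u v, A u v = A v u := by
    intro u v
    simp [hAdef, SimpleGraph.adjMatrix_apply, SimpleGraph.adj_comm]
  have hdiag : ∀ u, A u u = 0 := by
    intro u; simp [hAdef, SimpleGraph.adjMatrix_apply]
  have hr0 : ∀ u, 0 ≤ r u := fun u => Finset.sum_nonneg fun w _ => hA0 u w
  have hr1 : ∀ u, 1 ≤ r u := by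
    intro u
    have : Nontrivial (Fin n) := Fin.nontrivial_iff_two_le.mpr hn
    obtain ⟨v, hv⟩ := exists_ne u
    obtain ⟨p⟩ := hG.preconnected u v
    have hne : ∃ w, G.Adj u w := by
      cases p with
      | nil => exact absurd rfl hv
      | cons ha q => exact ⟨_, ha⟩
    obtain ⟨v', hv'⟩ := hne
    have h1 : A u v' = 1 := by simp [hAdef, hv']
    calc (1:ℝ) = A u v' := h1.symm
    _ ≤ r u := Finset.single_le_sum (fun w _ => hA0 u w) (Finset.mem_univ v')
  have hr_erase : ∀ u, r u = ∑ w ∈ univ.erase u, A u w := by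
    intro u
    rw [hrdef]
    exact (Finset.sum_erase _ (hdiag u)).symm
  set B := A * A with hBdef
  have hBapp : ∀ u v, B u v = ∑ w, A u w * A w v := fun u v => Matrix.mul_apply
  have hBdiag : ∀ u, B u u = r u := by
    intro u
    rw [hBapp]
    apply Finset.sum_congr rfl
    intro w _
    rcases hA01 u w with h | h
    · rw [h, zero_mul]
    · rw [h, ← hsymm u w, h, one_mul]
  have hTrB : Matrix.trace B = T := by
    rw [Matrix.trace]
    exact Finset.sum_congr rfl fun u _ => hBdiag u
  have hB0 : ∀ u v, 0 ≤ B u v := by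
    intro u v; rw [hBapp]
    exact Finset.sum_nonneg fun w _ => mul_nonneg (hA0 u w) (hA0 w v)
  have hBle : ∀ u v, B u v ≤ r u := by
    intro u v; rw [hBapp, hrdef]
    refine Finset.sum_le_sum fun w _ => ?_
    calc A u w * A w v ≤ A u w * 1 := mul_le_mul_of_nonneg_left (hA1 w v) (hA0 u w)
    _ = A u w := mul_one _
  have hBsymm : ∀ u v, B u v = B v u := by
    intro u v
    rw [hBapp, hBapp]
    refine Finset.sum_congr rfl fun w _ => ?_
    rw [hsymm u w, hsymm w v]
    ring
  have hrow : ∀ u, ∑ v, B u v = ∑ w, A u w * r w := by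
    intro u
    simp only [hBapp]
    rw [Finset.sum_comm]
    exact Finset.sum_congr rfl fun w _ => by rw [← Finset.mul_sum]
  have hkey : ∀ u, ∑ w, A u w * r w ≤ T - ((n:ℝ)-1) := by
    intro u
    have hnn : ∀ w, (0:ℝ) ≤ 1 - A u w := fun w => by linarith [hA1 u w]
    have split : (n:ℝ) - 1 ≤ ∑ w, (1 - A u w) * r w := by
      rw [← Finset.add_sum_erase _ _ (mem_univ u), hdiag u]
      have h1 : ∑ w ∈ univ.erase u, (1 - A u w) * 1 ≤ ∑ w ∈ univ.erase u, (1 - A u w) * r w :=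
        Finset.sum_le_sum fun w _ => mul_le_mul_of_nonneg_left (hr1 w) (hnn w)
      have h2 : ∑ w ∈ univ.erase u, (1 - A u w) * 1 = ((n:ℝ) - 1) - r u := by
        simp only [mul_one, Finset.sum_sub_distrib, Finset.sum_const, nsmul_eq_mul]
        rw [← hr_erase u, Finset.card_erase_of_mem (mem_univ u), card_univ, Fintype.card_fin]
        have : (1:ℕ) ≤ n := by omega
        push_cast [this]
        ring
      have h3 : (1 - (0:ℝ)) * r u = r u := by ring
      rw [h3]
      linarith
    have hsum : ∑ w, A u w * r w + ∑ w, (1 - A u w) * r w = T := by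
      rw [← Finset.sum_add_distrib, hTdef]
      exact Finset.sum_congr rfl fun w _ => by ring
    linarith
  constructor
  · have hdeg : T = ((∑ u, G.degree u : ℕ) : ℝ) := by
      rw [hTdef]
      push_cast
      refine Finset.sum_congr rfl fun u _ => ?_
      rw [← hBdiag u, hBdef, hAdef]
      exact G.adjMatrix_mul_self_apply_self u
    rw [hTrB, hdeg, SimpleGraph.sum_degrees_eq_twice_card_edges]
    have hcard := gke_card_edges G hn hG
    have h1 : (1:ℕ) ≤ n := by omega
    push_cast
    have : ((n:ℝ) - 1) ≤ (G.edgeFinset.card : ℝ) := by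
      calc (n:ℝ) - 1 = ((n - 1 : ℕ) : ℝ) := by push_cast [h1]; ring
      _ ≤ _ := by exact_mod_cast hcard
    linarith
  · rw [hTrB]
    have htr4 : Matrix.trace (B*B) = ∑ u, ∑ v, B u v * B v u := by
      rw [Matrix.trace]
      exact Finset.sum_congr rfl fun u _ => Matrix.mul_apply
    rw [htr4]
    calc ∑ u, ∑ v, B u v * B v u ≤ ∑ u, r u * (T - ((n:ℝ)-1)) := by
          refine Finset.sum_le_sum fun u _ => ?_
          calc ∑ v, B u v * B v u ≤ ∑ v, B u v * r u := by
                refine Finset.sum_le_sum fun v _ => ?_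
                rw [← hBsymm u v]
                exact mul_le_mul_of_nonneg_left (hBle u v) (hB0 u v)
          _ = (∑ v, B u v) * r u := by rw [← Finset.sum_mul]
          _ = r u * ∑ v, B u v := mul_comm _ _
          _ = r u * (∑ w, A u w * r w) := by rw [hrow u]
          _ ≤ r u * (T - ((n:ℝ)-1)) := mul_le_mul_of_nonneg_left (hkey u) (hr0 u)
    _ = T * (T - ((n:ℝ)-1)) := by rw [← Finset.sum_mul]

lemma gke_prod_lower (μ : Fin n → ℝ) (hμ : ∀ i, 0 ≤ μ i) (x : ℝ) (hx : 0 ≤ x)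
    (s : Finset (Fin n)) :
    0 ≤ ((∑ i ∈ s, μ i)^2 - ∑ i ∈ s, (μ i)^2)/2 ∧
    x^(2*s.card) * (x^4 + x^2 * (∑ i ∈ s, μ i) + ((∑ i ∈ s, μ i)^2 - ∑ i ∈ s, (μ i)^2)/2)
      ≤ x^4 * ∏ i ∈ s, (x^2 + μ i) := by
  induction s using Finset.induction_on with
  | empty => norm_num
  | insert a s ha ih =>
    obtain ⟨hF0, hle⟩ := ih
    set E := ∑ i ∈ s, μ i with hE
    set Q := ∑ i ∈ s, (μ i)^2 with hQ
    have hE0 : 0 ≤ E := Finset.sum_nonneg fun i _ => hμ i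
    have hx2 : (0:ℝ) ≤ x^2 := sq_nonneg x
    have hxc : (0:ℝ) ≤ x^(2*s.card) := by positivity
    rw [Finset.sum_insert ha, Finset.sum_insert ha, Finset.prod_insert ha,
      Finset.card_insert_of_notMem ha]
    constructor
    · have : ((μ a + E)^2 - ((μ a)^2 + Q))/2 = (E^2 - Q)/2 + μ a * E := by ring
      rw [this]
      have := mul_nonneg (hμ a) hE0
      linarith
    · have hnew : ((μ a + E)^2 - ((μ a)^2 + Q))/2 = (E^2 - Q)/2 + μ a * E := by ring
      rw [hnew]
      have g1 : x^(2*s.card) * (x^4 + x^2*E) ≤ x^4 * ∏ i ∈ s, (x^2 + μ i) := by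
        nlinarith [mul_nonneg hxc hF0]
      have e1 : x^(2*(s.card+1)) * (x^4 + x^2*(μ a + E) + ((E^2-Q)/2 + μ a * E))
          = x^2 * (x^(2*s.card) * (x^4 + x^2*E + (E^2-Q)/2))
            + μ a * (x^(2*s.card) * (x^4 + x^2*E)) := by ring
      rw [e1]
      have t1 : x^2 * (x^(2*s.card) * (x^4 + x^2*E + (E^2-Q)/2))
          ≤ x^2 * (x^4 * ∏ i ∈ s, (x^2 + μ i)) := mul_le_mul_of_nonneg_left hle hx2
      have t2 : μ a * (x^(2*s.card) * (x^4 + x^2*E)) ≤ μ a * (x^4 * ∏ i ∈ s, (x^2 + μ i)) :=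
        mul_le_mul_of_nonneg_left g1 (hμ a)
      have e2 : x^2 * (x^4 * ∏ i ∈ s, (x^2 + μ i)) + μ a * (x^4 * ∏ i ∈ s, (x^2 + μ i))
          = x^4 * ((x^2 + μ a) * ∏ i ∈ s, (x^2 + μ i)) := by ring
      linarith

lemma gke_eval_charpoly (M : Matrix (Fin n) (Fin n) ℂ) (z : ℂ) :
    M.charpoly.eval z = (z • (1 : Matrix (Fin n) (Fin n) ℂ) - M).det := by
  unfold Matrix.charpoly
  rw [← Polynomial.coe_evalRingHom, RingHom.map_det]
  congr 1
  ext i j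
  by_cases h : i = j <;>
    simp [charmatrix_apply, diagonal_apply, h, Matrix.one_apply, Matrix.smul_apply]

lemma gke_normSq (G : SimpleGraph (Fin n)) [DecidableRel G.Adj] (x : ℝ) :
    ((G.adjMatrix ℂ).charpoly.eval (Complex.I * x)) *
      (starRingEnd ℂ) ((G.adjMatrix ℂ).charpoly.eval (Complex.I * x))
    = Complex.ofRealHom (((x^2 : ℝ) • (1 : Matrix (Fin n) (Fin n) ℝ)
        + G.adjMatrix ℝ * G.adjMatrix ℝ).det) := by
  set z : ℂ := Complex.I * x with hz
  set M := G.adjMatrix ℂ with hM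
  rw [gke_eval_charpoly]
  have hconj : (starRingEnd ℂ) ((z • (1 : Matrix (Fin n) (Fin n) ℂ) - M).det)
      = ((-z) • (1 : Matrix (Fin n) (Fin n) ℂ) - M).det := by
    rw [RingHom.map_det]
    congr 1
    ext i j
    have hzc : (starRingEnd ℂ) z = -z := by
      simp [hz, mul_comm]
    by_cases h : i = j <;> by_cases hadj : G.Adj i j <;>
      simp [Matrix.sub_apply, Matrix.smul_apply, Matrix.one_apply, h, hadj, hzc,
        RingHom.mapMatrix_apply, Matrix.map_apply, hM]
  rw [hconj, ← Matrix.det_mul]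
  have hmul : (z • (1 : Matrix (Fin n) (Fin n) ℂ) - M) *
      ((-z) • (1 : Matrix (Fin n) (Fin n) ℂ) - M)
      = ((x:ℂ)^2) • (1 : Matrix (Fin n) (Fin n) ℂ) + M * M := by
    rw [Matrix.sub_mul, Matrix.mul_sub, Matrix.mul_sub, smul_mul_assoc, smul_mul_assoc]
    simp only [Matrix.one_mul, Matrix.mul_one, Matrix.mul_smul, smul_smul]
    match_scalars
    all_goals try ring
    all_goals (rw [hz, mul_pow, Complex.I_sq]; ring)
  rw [hmul]
  rw [RingHom.map_det]
  congr 1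
  ext i j
  by_cases h : i = j <;> by_cases hadj : G.Adj i j <;>
    simp [Matrix.add_apply, Matrix.smul_apply, Matrix.one_apply, h, hadj,
      RingHom.mapMatrix_apply, Matrix.map_apply, Matrix.mul_apply, hM,
      SimpleGraph.adjMatrix_apply, apply_ite]

end GKEAux

/-- For a connected graph `G` on `n ≥ 2` vertices with characteristic polynomial `f`,
`|f(ix)| ≥ x^(n-2) (x² + n - 1)` for all real `x ≥ 0`. -/
theorem abs_charpoly_eval_I_ge {n : ℕ} (hn : 2 ≤ n) (G : SimpleGraph (Fin n))
    [DecidableRel G.Adj] (hG : G.Connected) (x : ℝ) (hx : 0 ≤ x) :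
    x ^ (n - 2) * (x ^ 2 + (n : ℝ) - 1) ≤
      ‖(G.adjMatrix ℂ).charpoly.eval (Complex.I * x)‖ := by
  classical
  open Matrix in
  set A := G.adjMatrix ℝ with hAdef
  have hA : A.IsHermitian :=
    (Matrix.conjTranspose_eq_transpose_of_trivial A).trans G.isSymm_adjMatrix
  set μ : Fin n → ℝ := fun i => hA.eigenvalues i ^ 2 with hmu
  have hμ0 : ∀ i, 0 ≤ μ i := fun i => sq_nonneg _
  set U := (hA.eigenvectorUnitary : Matrix (Fin n) (Fin n) ℝ) with hU
  have h2 : star U * U = 1 := Matrix.mem_unitaryGroup_iff'.mp hA.eigenvectorUnitary.2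
  have hrep : A * A = U * Matrix.diagonal μ * star U := by
    have hD : A = U * Matrix.diagonal (RCLike.ofReal ∘ hA.eigenvalues) * star U :=
      hA.spectral_theorem
    have hco : (RCLike.ofReal ∘ hA.eigenvalues : Fin n → ℝ) = hA.eigenvalues := by
      ext i; simp [RCLike.ofReal_real_eq_id]
    rw [hco] at hD
    conv_lhs => rw [hD]
    have hdd : Matrix.diagonal μ =
        Matrix.diagonal hA.eigenvalues * Matrix.diagonal hA.eigenvalues := by
      rw [Matrix.diagonal_mul_diagonal]
      exact congrArg _ (funext fun i => sq (hA.eigenvalues i))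
    rw [hdd]
    simp only [Matrix.mul_assoc]
    rw [← Matrix.mul_assoc (star U) U, h2, Matrix.one_mul]
  have hdet : Matrix.det ((x^2 : ℝ) • (1 : Matrix (Fin n) (Fin n) ℝ) + A * A)
      = ∏ i, (x^2 + μ i) := by
    rw [hrep]; exact gke_conj_det U h2 μ (x^2)
  have htr2 : Matrix.trace (A * A) = ∑ i, μ i := by
    rw [hrep]; exact gke_conj_trace U h2 μ
  have htr4 : Matrix.trace ((A * A) * (A * A)) = ∑ i, μ i * μ i := by
    rw [hrep, gke_conj_mul U h2, gke_conj_trace U h2]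
  obtain ⟨hT, hQ⟩ := gke_trace_bounds hn G hG
  rw [htr2] at hT
  rw [htr2, htr4] at hQ
  have hQ' : ∑ i, μ i * μ i = ∑ i, (μ i)^2 := by
    exact Finset.sum_congr rfl fun i _ => (sq (μ i)).symm
  rw [hQ'] at hQ
  have hc1 : (1:ℝ) ≤ (n:ℝ) - 1 := by
    have : (2:ℝ) ≤ (n:ℝ) := by exact_mod_cast hn
    linarith
  have hF : ((n:ℝ)-1)^2 ≤ ((∑ i, μ i)^2 - ∑ i, (μ i)^2)/2 := by nlinarith
  -- the squared target is bounded by the product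
  have key : (x ^ (n - 2) * (x ^ 2 + (n : ℝ) - 1))^2 ≤ ∏ i, (x^2 + μ i) := by
    rcases eq_or_lt_of_le hx with hx0 | hxpos
    · -- x = 0
      rcases eq_or_lt_of_le hn with hn2 | hn3
      · -- n = 2
        subst hn2
        rw [← hx0]
        rw [Fin.prod_univ_two]
        have hF2 := hF
        rw [Fin.sum_univ_two, Fin.sum_univ_two] at hF2
        norm_num at hF2 ⊢
        nlinarith [hμ0 0, hμ0 1]
      · -- n ≥ 3
        rw [← hx0]
        have hz : (0:ℝ) ^ (n-2) = 0 := zero_pow (by omega)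
        rw [hz, zero_mul]
        have : (0:ℝ)^2 = 0 := by norm_num
        rw [this]
        exact Finset.prod_nonneg fun i _ => by nlinarith [hμ0 i, sq_nonneg x]
    · -- x > 0
      obtain ⟨_, hprod⟩ := gke_prod_lower μ hμ0 x hx Finset.univ
      rw [Finset.card_univ, Fintype.card_fin] at hprod
      have hpoly : (x^2 + ((n:ℝ)-1))^2
          ≤ x^4 + x^2*(∑ i, μ i) + ((∑ i, μ i)^2 - ∑ i, (μ i)^2)/2 := by
        nlinarith [sq_nonneg x]
      have hxn : (0:ℝ) ≤ x^(2*n) := by positivity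
      have step1 : x^(2*n) * (x^2 + ((n:ℝ)-1))^2 ≤ x^4 * ∏ i, (x^2 + μ i) := by
        calc x^(2*n) * (x^2 + ((n:ℝ)-1))^2
            ≤ x^(2*n) * (x^4 + x^2*(∑ i, μ i) + ((∑ i, μ i)^2 - ∑ i, (μ i)^2)/2) :=
              mul_le_mul_of_nonneg_left hpoly hxn
        _ ≤ x^4 * ∏ i, (x^2 + μ i) := hprod
      have e3 : x^4 * (x ^ (n - 2) * (x ^ 2 + (n : ℝ) - 1))^2
          = x^(2*n) * (x^2 + ((n:ℝ)-1))^2 := by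
        rw [mul_pow, ← pow_mul, show 2*n = 4 + (n-2)*2 by omega, pow_add]
        ring
      have hx4 : (0:ℝ) < x^4 := by positivity
      have := e3 ▸ step1
      exact le_of_mul_le_mul_left (by linarith) hx4
  -- relate the product to the absolute value
  have hns := gke_normSq G x
  have habs2 : Complex.normSq ((G.adjMatrix ℂ).charpoly.eval (Complex.I * x))
      = ∏ i, (x^2 + μ i) := by
    rw [Complex.mul_conj] at hns
    simp only [Complex.ofRealHom_eq_coe] at hns
    have : Complex.normSq ((G.adjMatrix ℂ).charpoly.eval (Complex.I * x))
        = Matrix.det ((x^2 : ℝ) • (1 : Matrix (Fin n) (Fin n) ℝ) + A * A) := by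
      exact_mod_cast hns
    rw [this, hdet]
  have ht0 : 0 ≤ x ^ (n - 2) * (x ^ 2 + (n : ℝ) - 1) := by
    apply mul_nonneg (pow_nonneg hx _)
    nlinarith [sq_nonneg x]
  have habs0 : 0 ≤ ‖(G.adjMatrix ℂ).charpoly.eval (Complex.I * x)‖ :=
    norm_nonneg _
  have hfin : (x ^ (n - 2) * (x ^ 2 + (n : ℝ) - 1))^2
      ≤ (‖(G.adjMatrix ℂ).charpoly.eval (Complex.I * x)‖)^2 := by
    rw [Complex.sq_norm, habs2]
    exact key
  calc x ^ (n - 2) * (x ^ 2 + (n : ℝ) - 1)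
      = Real.sqrt ((x ^ (n - 2) * (x ^ 2 + (n : ℝ) - 1))^2) := (Real.sqrt_sq ht0).symm
  _ ≤ Real.sqrt ((‖(G.adjMatrix ℂ).charpoly.eval (Complex.I * x)‖)^2) :=
      Real.sqrt_le_sqrt hfin
  _ = ‖(G.adjMatrix ℂ).charpoly.eval (Complex.I * x)‖ := Real.sqrt_sq habs0
end

section
/- Let G be a connected simple graph with m edges and n vertices, and let λ_1, …, λ_n be the eigenvalues of its adjacency matrix. Then ∑_{1 ≤ i < j ≤ n} λ_i²·λ_j² ≥ m(n−1), and consequently ∑_{1 ≤ i < j ≤ n} λ_i²·λ_j² ≥ (n−1)². -/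
open Finset MeasureTheory

section AuxLemmas

open SimpleGraph in
lemma two_mul_sum_Ioi_aux {N : ℕ} (f : Fin N → ℝ) :
    2 * ∑ i, ∑ j ∈ Finset.Ioi i, f i * f j = (∑ i, f i) ^ 2 - ∑ i, f i ^ 2 := by
  have h := Finset.sum_sum_Ioi_add_eq_sum_sum_off_diag (fun i j => f i * f j)
  have hl : ∑ i, ∑ j ∈ Finset.Ioi i, (f j * f i + f i * f j)
      = 2 * ∑ i, ∑ j ∈ Finset.Ioi i, f i * f j := by
    rw [Finset.mul_sum]
    refine Finset.sum_congr rfl fun i _ => ?_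
    rw [Finset.mul_sum]
    exact Finset.sum_congr rfl fun j _ => by ring
  rw [hl] at h
  rw [h]
  have hr : ∀ (inst : DecidableEq (Fin N)) (i : Fin N), ∑ j ∈ ({i}ᶜ : Finset (Fin N)), f j * f i
      = (∑ j, f j) * f i - f i ^ 2 := by
    intro inst i
    have h2 : ∑ j ∈ ({i}ᶜ : Finset (Fin N)), f j = (∑ j, f j) - f i := by
      have h3 := Finset.sum_add_sum_compl ({i} : Finset (Fin N)) f
      simp only [Finset.sum_singleton] at h3
      linarith
    rw [← Finset.sum_mul, h2]
    ring
  rw [Finset.sum_congr rfl fun i (_ : i ∈ Finset.univ) => hr _ i,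
    Finset.sum_sub_distrib, ← Finset.mul_sum]
  ring

lemma sum_eig_sq_aux {n : ℕ} (G : SimpleGraph (Fin n)) [DecidableRel G.Adj] :
    ∑ i, adjEigenvalues G i ^ 2 = 2 * (G.edgeFinset.card : ℝ) := by
  classical
  set A := G.adjMatrix ℝ with hAdef
  have hA : A.IsHermitian :=
    (Matrix.conjTranspose_eq_transpose_of_trivial (G.adjMatrix ℝ)).trans G.isSymm_adjMatrix
  have heig : adjEigenvalues G = hA.eigenvalues := rfl
  set U := (hA.eigenvectorUnitary : Matrix (Fin n) (Fin n) ℝ) with hUdef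
  set D := (Matrix.diagonal (RCLike.ofReal ∘ hA.eigenvalues) : Matrix (Fin n) (Fin n) ℝ) with hDdef
  have hU : star U * U = 1 := by
    have h := hA.eigenvectorUnitary.2
    rw [Matrix.mem_unitaryGroup_iff'] at h
    exact h
  have h2 : A * A = U * (D * (D * star U)) := by
    conv_lhs => rw [hA.spectral_theorem, Unitary.conjStarAlgAut_apply]
    rw [show U * D * star U * (U * D * star U) = U * (D * ((star U * U) * (D * star U))) from by
      simp only [Matrix.mul_assoc], hU, Matrix.one_mul]
  have h3 : (A * A).trace = ∑ i, hA.eigenvalues i ^ 2 := by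
    rw [h2, Matrix.trace_mul_comm,
      show D * (D * star U) * U = D * (D * (star U * U)) from by simp only [Matrix.mul_assoc],
      hU, Matrix.mul_one, hDdef, Matrix.diagonal_mul_diagonal, Matrix.trace_diagonal]
    simp [RCLike.ofReal_real_eq_id, sq]
  have h4 : (A * A).trace = 2 * (G.edgeFinset.card : ℝ) := by
    rw [Matrix.trace]
    have hd : ∀ v, (A * A).diag v = (G.degree v : ℝ) := fun v =>
      G.adjMatrix_mul_self_apply_self v
    rw [Finset.sum_congr rfl fun v _ => hd v]
    rw [← Nat.cast_sum, SimpleGraph.sum_degrees_eq_twice_card_edges]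
    push_cast
    ring
  rw [heig, ← h3, h4]

open SimpleGraph in
lemma card_edge_ge_aux {n : ℕ} (G : SimpleGraph (Fin n)) [DecidableRel G.Adj]
    (hG : G.Connected) : n - 1 ≤ G.edgeFinset.card := by
  classical
  have hne : Nonempty (Fin n) := hG.nonempty
  obtain ⟨r⟩ := hne
  have H : ∀ w : Fin n, w ≠ r → ∃ u, G.Adj w u ∧ G.dist u r + 1 = G.dist w r := by
    intro w hw
    obtain ⟨p, hp⟩ := (hG.preconnected w r).exists_walk_length_eq_dist
    have hd : 0 < G.dist w r := hG.pos_dist_of_ne hw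
    have hnil : ¬ p.Nil := by
      rw [SimpleGraph.Walk.nil_iff_length_eq]
      omega
    refine ⟨p.snd, p.adj_snd hnil, ?_⟩
    have h1 : G.dist p.snd r ≤ p.tail.length := SimpleGraph.dist_le p.tail
    have h1' : p.tail.length + 1 = p.length := SimpleGraph.Walk.length_tail_add_one hnil
    obtain ⟨q, hq⟩ := ((p.tail).reachable).exists_walk_length_eq_dist
    have h2 : G.dist w r ≤ q.length + 1 := by
      have := SimpleGraph.dist_le (SimpleGraph.Walk.cons (p.adj_snd hnil) q)
      simpa using this
    omega
  choose f hf1 hf2 using H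
  have hinj : Set.InjOn (fun w => if h : w = r then s(r, r) else s(w, f w h))
      (({r}ᶜ : Finset (Fin n)) : Set (Fin n)) := by
    intro a ha b hb hab
    simp only [Finset.coe_compl, Finset.coe_singleton, Set.mem_compl_iff,
      Set.mem_singleton_iff] at ha hb
    dsimp only at hab
    rw [dif_neg ha, dif_neg hb] at hab
    rcases Sym2.eq_iff.mp hab with ⟨h1, h2⟩ | ⟨h1, h2⟩
    · exact h1
    · have d1 := hf2 a ha
      have d2 := hf2 b hb
      rw [h2] at d1
      rw [← h1] at d2
      omega
  have hmap : ∀ w ∈ ({r}ᶜ : Finset (Fin n)),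
      (if h : w = r then s(r, r) else s(w, f w h)) ∈ G.edgeFinset := by
    intro w hw
    simp only [Finset.mem_compl, Finset.mem_singleton] at hw
    rw [dif_neg hw]
    rw [SimpleGraph.mem_edgeFinset]
    exact (hf1 w hw)
  have hle := Finset.card_le_card_of_injOn _ hmap hinj
  have hcard : ({r}ᶜ : Finset (Fin n)).card = n - 1 := by
    rw [Finset.card_compl, Finset.card_singleton, Fintype.card_fin]
  omega

open SimpleGraph in
lemma rowsum_nat_aux {n : ℕ} (G : SimpleGraph (Fin n)) [DecidableRel G.Adj]
    (hG : G.Connected) (hn : 1 < n) (v : Fin n) :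
    (∑ w ∈ G.neighborFinset v, G.degree w) + (n - 1) ≤ 2 * G.edgeFinset.card := by
  classical
  have hdegpos : ∀ w : Fin n, 0 < G.degree w := by
    intro w
    rw [SimpleGraph.degree_pos_iff_exists_adj]
    have : Nontrivial (Fin n) := Fin.nontrivial_iff_two_le.mpr hn
    obtain ⟨u, hu⟩ := exists_ne w
    obtain ⟨p⟩ := hG.preconnected w u
    exact ⟨_, p.adj_snd (SimpleGraph.Walk.not_nil_of_ne (Ne.symm hu))⟩
  have hsplit : (∑ w ∈ G.neighborFinset v, G.degree w)
      + ∑ w ∈ (G.neighborFinset v)ᶜ, G.degree w = 2 * G.edgeFinset.card := by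
    rw [Finset.sum_add_sum_compl, SimpleGraph.sum_degrees_eq_twice_card_edges]
  have hv : v ∈ (G.neighborFinset v)ᶜ := by simp
  have h1 : ∑ w ∈ (G.neighborFinset v)ᶜ, G.degree w
      = G.degree v + ∑ w ∈ ((G.neighborFinset v)ᶜ).erase v, G.degree w :=
    (Finset.add_sum_erase _ _ hv).symm
  have h3 : (((G.neighborFinset v)ᶜ).erase v).card
      ≤ ∑ w ∈ ((G.neighborFinset v)ᶜ).erase v, G.degree w := by
    calc (((G.neighborFinset v)ᶜ).erase v).card
        = ∑ _w ∈ ((G.neighborFinset v)ᶜ).erase v, 1 := by simp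
      _ ≤ _ := Finset.sum_le_sum fun w _ => hdegpos w
  have hcard : ((G.neighborFinset v)ᶜ).card = n - G.degree v := by
    rw [Finset.card_compl, Fintype.card_fin, SimpleGraph.card_neighborFinset_eq_degree]
  have hce : (((G.neighborFinset v)ᶜ).erase v).card = ((G.neighborFinset v)ᶜ).card - 1 :=
    Finset.card_erase_of_mem hv
  have hlt : G.degree v < n := by
    have := G.degree_lt_card_verts v
    rwa [Fintype.card_fin] at this
  omega

open SimpleGraph in
lemma eig_sq_le_aux {n : ℕ} (G : SimpleGraph (Fin n)) [DecidableRel G.Adj]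
    (hG : G.Connected) (hn : 1 < n) (i : Fin n) :
    adjEigenvalues G i ^ 2 ≤ 2 * (G.edgeFinset.card : ℝ) - ((n : ℝ) - 1) := by
  classical
  set A := G.adjMatrix ℝ with hAdef
  have hA : A.IsHermitian :=
    (Matrix.conjTranspose_eq_transpose_of_trivial (G.adjMatrix ℝ)).trans G.isSymm_adjMatrix
  have heig : adjEigenvalues G = hA.eigenvalues := rfl
  have hnonneg : ∀ v u, 0 ≤ (A * A) v u := by
    intro v u
    rw [Matrix.mul_apply]
    refine Finset.sum_nonneg fun w _ => mul_nonneg ?_ ?_ <;>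
      · rw [hAdef, SimpleGraph.adjMatrix_apply]
        split <;> norm_num
  have hrowsum : ∀ v, ∑ u, (A * A) v u ≤ 2 * (G.edgeFinset.card : ℝ) - ((n : ℝ) - 1) := by
    intro v
    have he : ∑ u, (A * A) v u = ((∑ w ∈ G.neighborFinset v, G.degree w : ℕ) : ℝ) := by
      have hcol : ∀ u, (A * A) v u = ∑ w ∈ G.neighborFinset v, A w u := fun u =>
        G.adjMatrix_mul_apply (M := A) v u
      rw [Finset.sum_congr rfl fun u _ => hcol u, Finset.sum_comm]
      push_cast
      refine Finset.sum_congr rfl fun w _ => ?_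
      simp [hAdef, SimpleGraph.adjMatrix_apply, SimpleGraph.degree,
        SimpleGraph.neighborFinset_eq_filter, Finset.sum_boole]
    rw [he]
    have hr := rowsum_nat_aux G hG hn v
    have hr' : (∑ w ∈ G.neighborFinset v, G.degree w) + n ≤ 2 * G.edgeFinset.card + 1 := by
      omega
    have hc := (Nat.cast_le (α := ℝ)).mpr hr'
    push_cast at hc ⊢
    linarith
  set x : Fin n → ℝ := ⇑(hA.eigenvectorBasis i) with hxdef
  have hx : A.mulVec x = hA.eigenvalues i • x := hA.mulVec_eigenvectorBasis i
  have hxx : (A * A).mulVec x = (hA.eigenvalues i ^ 2) • x := by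
    rw [← Matrix.mulVec_mulVec, hx, Matrix.mulVec_smul, hx, smul_smul, sq]
  have hxne : x ≠ 0 := by
    intro h0
    have hb := hA.eigenvectorBasis.orthonormal.ne_zero i
    apply hb
    ext j
    exact congrFun h0 j
  have hne : Nonempty (Fin n) := ⟨⟨0, by omega⟩⟩
  obtain ⟨v, -, hv⟩ := Finset.exists_max_image Finset.univ (fun u => |x u|) Finset.univ_nonempty
  have hv0 : 0 < |x v| := by
    rcases (abs_nonneg (x v)).lt_or_eq with h | h
    · exact h
    · exfalso
      apply hxne
      funext u
      have hu := hv u (Finset.mem_univ u)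
      rw [← h] at hu
      exact abs_eq_zero.mp (le_antisymm hu (abs_nonneg _))
  have hev : ((A * A).mulVec x) v = hA.eigenvalues i ^ 2 * x v := by
    rw [hxx]; rfl
  have hchain : hA.eigenvalues i ^ 2 * |x v| ≤ (∑ u, (A * A) v u) * |x v| := by
    calc hA.eigenvalues i ^ 2 * |x v| = |hA.eigenvalues i ^ 2 * x v| := by
          rw [abs_mul, abs_of_nonneg (sq_nonneg (hA.eigenvalues i))]
      _ = |∑ u, (A * A) v u * x u| := by rw [← hev, Matrix.mulVec, dotProduct]
      _ ≤ ∑ u, |(A * A) v u * x u| := Finset.abs_sum_le_sum_abs _ _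
      _ = ∑ u, (A * A) v u * |x u| := by
          refine Finset.sum_congr rfl fun u _ => ?_
          rw [abs_mul, abs_of_nonneg (hnonneg v u)]
      _ ≤ ∑ u, (A * A) v u * |x v| := Finset.sum_le_sum fun u _ =>
          mul_le_mul_of_nonneg_left (hv u (Finset.mem_univ u)) (hnonneg v u)
      _ = (∑ u, (A * A) v u) * |x v| := by rw [Finset.sum_mul]
  have hfin := le_of_mul_le_mul_right hchain hv0
  rw [heig]
  exact hfin.trans (hrowsum v)

end AuxLemmas


/-- For a connected graph with `m` edges and `n` vertices,
`∑_{i<j} λᵢ² λⱼ² ≥ m(n-1)`, and consequently `∑_{i<j} λᵢ² λⱼ² ≥ (n-1)²`. -/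
theorem sum_pair_sq_ge {n m : ℕ} (G : SimpleGraph (Fin n)) [DecidableRel G.Adj]
    (hG : G.Connected) (hm : G.edgeFinset.card = m) :
    (m : ℝ) * ((n : ℝ) - 1) ≤
        ∑ i, ∑ j ∈ Finset.Ioi i, adjEigenvalues G i ^ 2 * adjEigenvalues G j ^ 2 ∧
      ((n : ℝ) - 1) ^ 2 ≤
        ∑ i, ∑ j ∈ Finset.Ioi i, adjEigenvalues G i ^ 2 * adjEigenvalues G j ^ 2 := by
  classical
  set a : Fin n → ℝ := fun i => adjEigenvalues G i ^ 2 with hadef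
  have ha : ∀ i, 0 ≤ a i := fun i => sq_nonneg _
  have hS : ∑ i, ∑ j ∈ Finset.Ioi i, adjEigenvalues G i ^ 2 * adjEigenvalues G j ^ 2
      = ∑ i, ∑ j ∈ Finset.Ioi i, a i * a j := rfl
  have hid := two_mul_sum_Ioi_aux a
  have hsum : ∑ i, a i = 2 * (m : ℝ) := by
    rw [hadef]
    rw [sum_eig_sq_aux G, hm]
  have hn1 : 1 ≤ n := Fin.pos_iff_nonempty.mpr hG.nonempty
  have hfirst : (m : ℝ) * ((n : ℝ) - 1)
      ≤ ∑ i, ∑ j ∈ Finset.Ioi i, adjEigenvalues G i ^ 2 * adjEigenvalues G j ^ 2 := by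
    rw [hS]
    by_cases hn : 1 < n
    · have hb : ∀ i, a i ≤ 2 * (m : ℝ) - ((n : ℝ) - 1) := by
        intro i
        have := eig_sq_le_aux G hG hn i
        rw [hm] at this
        exact this
      have h4 : ∑ i, a i ^ 2 ≤ (2 * (m : ℝ) - ((n : ℝ) - 1)) * (2 * (m : ℝ)) := by
        calc ∑ i, a i ^ 2 ≤ ∑ i, (2 * (m : ℝ) - ((n : ℝ) - 1)) * a i := by
              refine Finset.sum_le_sum fun i _ => ?_
              rw [sq]
              exact mul_le_mul_of_nonneg_right (hb i) (ha i)
          _ = (2 * (m : ℝ) - ((n : ℝ) - 1)) * ∑ i, a i := by rw [Finset.mul_sum]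
          _ = (2 * (m : ℝ) - ((n : ℝ) - 1)) * (2 * (m : ℝ)) := by rw [hsum]
      nlinarith [hid, hsum, h4]
    · have hn' : n = 1 := by omega
      have : ((n : ℝ) - 1) = 0 := by rw [hn']; norm_num
      rw [this, mul_zero]
      refine Finset.sum_nonneg fun i _ => Finset.sum_nonneg fun j _ => ?_
      exact mul_nonneg (ha i) (ha j)
  refine ⟨hfirst, ?_⟩
  have hnm : ((n : ℝ) - 1) ≤ (m : ℝ) := by
    have h := card_edge_ge_aux G hG
    rw [hm] at h
    have := (Nat.cast_le (α := ℝ)).mpr h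
    rw [Nat.cast_sub hn1] at this
    push_cast at this
    linarith
  have hnn : (0 : ℝ) ≤ (n : ℝ) - 1 := by
    have : (1 : ℝ) ≤ (n : ℝ) := by exact_mod_cast hn1
    linarith
  calc ((n : ℝ) - 1) ^ 2 = ((n : ℝ) - 1) * ((n : ℝ) - 1) := sq ((n:ℝ) - 1)
    _ ≤ (m : ℝ) * ((n : ℝ) - 1) := mul_le_mul_of_nonneg_right hnm hnn
    _ ≤ _ := hfirst
end
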